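/- arXiv:1912.01528 — 5 statements merged into one kernel-verified Lean document; each statement's English description precedes it below -/
import Mathlib

section
/- Let 0 < ζ ≤ 1 and μ > 1 be fixed. Then there exists a constant C₁ > 0 such that for every t > 0 one has ∫₀^t ⟨t−s⟩^{−ζ} ⟨s⟩^{−μ} ds < ∫₀^∞ ⟨t−s⟩^{−ζ} ⟨s⟩^{−μ} ds ≤ C₁ ⟨t⟩^{−ζ}. -/
open scoped BigOperators

noncomputable section

open MeasureTheory Set

namespace ConvAux

lemma one_le_br (x : ℝ) : 1 ≤ Real.sqrt (1 + x ^ 2) := by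
  have h : Real.sqrt 1 ≤ Real.sqrt (1 + x ^ 2) := Real.sqrt_le_sqrt (by nlinarith)
  simpa using h

lemma br_pos (x : ℝ) : 0 < Real.sqrt (1 + x ^ 2) := lt_of_lt_of_le one_pos (one_le_br x)

lemma le_br (x : ℝ) : x ≤ Real.sqrt (1 + x ^ 2) := by
  calc x ≤ |x| := le_abs_self x
    _ = Real.sqrt (x ^ 2) := (Real.sqrt_sq_eq_abs x).symm
    _ ≤ _ := Real.sqrt_le_sqrt (by nlinarith)

lemma rpow_neg_le {x y c : ℝ} (hx : 0 < x) (hxy : x ≤ y) (hc : 0 ≤ c) :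
    y ^ (-c) ≤ x ^ (-c) :=
  Real.rpow_le_rpow_of_nonpos hx hxy (neg_nonpos.2 hc)

lemma br_rpow_le_one {x c : ℝ} (hc : 0 ≤ c) : Real.sqrt (1 + x ^ 2) ^ (-c) ≤ 1 :=
  Real.rpow_le_one_of_one_le_of_nonpos (one_le_br x) (neg_nonpos.2 hc)

lemma br_rpow_pos (x c : ℝ) : 0 < Real.sqrt (1 + x ^ 2) ^ (-c) :=
  Real.rpow_pos_of_pos (br_pos x) _

lemma half_le_br {t x : ℝ} (ht : 0 ≤ t) (h : t / 2 ≤ x) :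
    Real.sqrt (1 + t ^ 2) / 2 ≤ Real.sqrt (1 + x ^ 2) := by
  have h0 : 0 ≤ x := le_trans (by linarith) h
  have hsq : Real.sqrt (1 + t ^ 2) ^ 2 = 1 + t ^ 2 := Real.sq_sqrt (by positivity)
  rw [Real.le_sqrt (by positivity) (by positivity)]
  have hx2 : (t / 2) ^ 2 ≤ x ^ 2 := by nlinarith
  nlinarith [hsq]

lemma half_rpow {A c : ℝ} (hA : 0 < A) : (A / 2) ^ (-c) = 2 ^ c * A ^ (-c) := by
  rw [Real.div_rpow hA.le (by norm_num : (0:ℝ) ≤ 2), div_eq_mul_inv,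
    ← Real.rpow_neg (by norm_num : (0:ℝ) ≤ 2), neg_neg, mul_comm]

lemma two_rpow_le {c : ℝ} (hc : c ≤ 1) : (2:ℝ) ^ c ≤ 2 := by
  calc (2:ℝ) ^ c ≤ (2:ℝ) ^ (1:ℝ) := Real.rpow_le_rpow_of_exponent_le one_le_two hc
    _ = 2 := Real.rpow_one 2

lemma cont_br_rpow (c : ℝ) : Continuous (fun s : ℝ => Real.sqrt (1 + s ^ 2) ^ (-c)) := by
  apply Continuous.rpow_const
  · exact (continuous_const.add (continuous_pow 2)).sqrt
  · intro x; exact Or.inl (ne_of_gt (br_pos x))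

lemma integrableOn_br {p : ℝ} (hp : 1 < p) :
    IntegrableOn (fun s : ℝ => Real.sqrt (1 + s ^ 2) ^ (-p)) (Ioi 0) := by
  have hcont := cont_br_rpow p
  have h1 : IntegrableOn (fun s : ℝ => Real.sqrt (1 + s ^ 2) ^ (-p)) (Ioc 0 1) :=
    (hcont.integrableOn_Icc (a := 0) (b := 1)).mono_set Ioc_subset_Icc_self
  have h2 : IntegrableOn (fun s : ℝ => Real.sqrt (1 + s ^ 2) ^ (-p)) (Ioi 1) := by
    have hi := integrableOn_Ioi_rpow_of_lt (show -p < -1 by linarith) (zero_lt_one (α := ℝ))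
    refine hi.mono' hcont.aestronglyMeasurable.restrict ?_
    filter_upwards [ae_restrict_mem measurableSet_Ioi] with s hs
    have hs0 : (0:ℝ) < s := lt_trans zero_lt_one hs
    rw [Real.norm_eq_abs, abs_of_pos (br_rpow_pos s p)]
    exact rpow_neg_le hs0 (le_br s) (by linarith)
  have hu : Ioi (0:ℝ) = Ioc 0 1 ∪ Ioi 1 := (Ioc_union_Ioi_eq_Ioi zero_le_one).symm
  rw [hu]
  exact h1.union h2

lemma intOn_sub_left {a t r : ℝ} (hr : -1 < r) :
    IntegrableOn (fun s : ℝ => (t - s) ^ r) (Ioo a t) := by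
  rcases le_or_gt t a with h | h
  · rw [Ioo_eq_empty (not_lt.mpr h)]; exact integrableOn_empty
  · have h0 : IntervalIntegrable (fun x : ℝ => x ^ r) volume 0 (t - a) :=
      intervalIntegral.intervalIntegrable_rpow' hr
    have h1 := (h0.comp_sub_left t).symm
    simp only [sub_zero, sub_sub_cancel] at h1
    rw [intervalIntegrable_iff_integrableOn_Ioc_of_le h.le] at h1
    exact h1.mono_set Ioo_subset_Ioc_self

lemma int_Ioo_sub_left {a t r : ℝ} (hr : -1 < r) (h : a ≤ t) :
    ∫ s in Ioo a t, (t - s) ^ r = (t - a) ^ (r + 1) / (r + 1) := by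
  rw [← integral_Ioc_eq_integral_Ioo, ← intervalIntegral.integral_of_le h,
    intervalIntegral.integral_comp_sub_left (fun x : ℝ => x ^ r) t, sub_self,
    integral_rpow (Or.inl hr), Real.zero_rpow (by linarith), sub_zero]

lemma intOn_sub_right {t b r : ℝ} (hr : -1 < r) :
    IntegrableOn (fun s : ℝ => (s - t) ^ r) (Ioo t b) := by
  rcases le_or_gt b t with h | h
  · rw [Ioo_eq_empty (not_lt.mpr h)]; exact integrableOn_empty
  · have h0 : IntervalIntegrable (fun x : ℝ => x ^ r) volume 0 (b - t) :=
      intervalIntegral.intervalIntegrable_rpow' hr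
    have h1 := h0.comp_sub_right t
    simp only [zero_add, sub_add_cancel] at h1
    rw [intervalIntegrable_iff_integrableOn_Ioc_of_le h.le] at h1
    exact h1.mono_set Ioo_subset_Ioc_self

lemma int_Ioo_sub_right {t b r : ℝ} (hr : -1 < r) (h : t ≤ b) :
    ∫ s in Ioo t b, (s - t) ^ r = (b - t) ^ (r + 1) / (r + 1) := by
  rw [← integral_Ioc_eq_integral_Ioo, ← intervalIntegral.integral_of_le h,
    intervalIntegral.integral_comp_sub_right (fun x : ℝ => x ^ r) t, sub_self,
    integral_rpow (Or.inl hr), Real.zero_rpow (by linarith), sub_zero]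

end ConvAux

open ConvAux

set_option maxHeartbeats 2000000 in
/-- Lemma `sti.int`: for `0 < ζ ≤ 1` and `μ > 1` there is `C₁ > 0` such that for all `t > 0`,
`∫₀^t ⟨t-s⟩^{-ζ} ⟨s⟩^{-μ} ds < ∫₀^∞ ⟨t-s⟩^{-ζ} ⟨s⟩^{-μ} ds ≤ C₁ ⟨t⟩^{-ζ}`,
where `⟨x⟩ = √(1+x²)`. -/
theorem convolution_decay_integral (ζ μ : ℝ) (hζ0 : 0 < ζ) (hζ1 : ζ ≤ 1) (hμ : 1 < μ) :
    ∃ C₁ : ℝ, 0 < C₁ ∧ ∀ t : ℝ, 0 < t →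
      (∫ s in Set.Ioo (0 : ℝ) t,
          Real.sqrt (1 + (t - s) ^ 2) ^ (-ζ) * Real.sqrt (1 + s ^ 2) ^ (-μ))
        < (∫ s in Set.Ioi (0 : ℝ),
          Real.sqrt (1 + (t - s) ^ 2) ^ (-ζ) * Real.sqrt (1 + s ^ 2) ^ (-μ)) ∧
      (∫ s in Set.Ioi (0 : ℝ),
          Real.sqrt (1 + (t - s) ^ 2) ^ (-ζ) * Real.sqrt (1 + s ^ 2) ^ (-μ))
        ≤ C₁ * Real.sqrt (1 + t ^ 2) ^ (-ζ) := by
  have hμ0 : (0:ℝ) < μ := lt_trans one_pos hμ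
  set ε : ℝ := min ζ (μ - 1) / 2 with hεdef
  have hε0 : 0 < ε := by
    have := lt_min hζ0 (show (0:ℝ) < μ - 1 by linarith)
    rw [hεdef]; linarith
  have hεζ : ε ≤ ζ / 2 := by
    have := min_le_left ζ (μ - 1); rw [hεdef]; linarith
  have hεμ : 1 + ε - μ ≤ 0 := by
    have := min_le_right ζ (μ - 1); rw [hεdef]; linarith
  have hζ'0 : 0 < ζ - ε := by linarith
  have hζ'1 : ζ - ε < 1 := by linarith
  have h1ζ' : 0 < 1 - (ζ - ε) := by linarith
  set M : ℝ := ∫ s in Ioi (0:ℝ), Real.sqrt (1 + s ^ 2) ^ (-μ) with hMdef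
  have hM0 : 0 ≤ M := setIntegral_nonneg measurableSet_Ioi fun s _ => (br_rpow_pos s μ).le
  have hdiv1 : 0 < (2 ^ μ + 1) / (1 - (ζ - ε)) := by positivity
  have hdiv2 : 0 < 4 / (ζ + μ - 1) := by
    apply div_pos (by norm_num); linarith
  refine ⟨3 * M + (2 ^ μ + 1) / (1 - (ζ - ε)) + 4 / (ζ + μ - 1) + 1, by linarith, ?_⟩
  intro t ht
  set f : ℝ → ℝ := fun s =>
    Real.sqrt (1 + (t - s) ^ 2) ^ (-ζ) * Real.sqrt (1 + s ^ 2) ^ (-μ) with hfdef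
  have hfc : Continuous f := by
    apply Continuous.mul
    · apply Continuous.rpow_const
      · exact (continuous_const.add (((continuous_const.sub continuous_id).pow 2))).sqrt
      · intro x; exact Or.inl (ne_of_gt (br_pos _))
    · exact cont_br_rpow μ
  have hf_pos : ∀ s : ℝ, 0 < f s := fun s =>
    mul_pos (br_rpow_pos _ _) (br_rpow_pos _ _)
  have hf_le : ∀ s : ℝ, f s ≤ Real.sqrt (1 + s ^ 2) ^ (-μ) := by
    intro s
    calc f s ≤ 1 * Real.sqrt (1 + s ^ 2) ^ (-μ) :=
          mul_le_mul_of_nonneg_right (br_rpow_le_one hζ0.le) (br_rpow_pos _ _).le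
      _ = _ := one_mul _
  have hf_int : IntegrableOn f (Ioi 0) := by
    refine (integrableOn_br hμ).mono' hfc.aestronglyMeasurable.restrict ?_
    filter_upwards with s
    rw [Real.norm_eq_abs, abs_of_pos (hf_pos s)]
    exact hf_le s
  constructor
  · -- strict inequality
    have hsplit : Ioo 0 t ∪ Ici t = Ioi 0 := Ioo_union_Ici_eq_Ioi ht
    have hd : Disjoint (Ioo 0 t) (Ici t) :=
      disjoint_left.mpr fun x hx hx' => absurd hx.2 (not_lt.mpr hx')
    have hint1 : IntegrableOn f (Ioo 0 t) :=
      hf_int.mono_set (by rw [← hsplit]; exact subset_union_left)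
    have hint2 : IntegrableOn f (Ici t) :=
      hf_int.mono_set (by rw [← hsplit]; exact subset_union_right)
    have heq : ∫ s in Ioi (0:ℝ), f s = (∫ s in Ioo 0 t, f s) + ∫ s in Ici t, f s := by
      rw [← hsplit, setIntegral_union hd measurableSet_Ici hint1 hint2]
    rw [heq]
    have hpos : 0 < ∫ s in Ici t, f s := by
      rw [setIntegral_pos_iff_support_of_nonneg_ae
        (Filter.Eventually.of_forall fun s => (hf_pos s).le) hint2]
      have hsup : Function.support f ∩ Ici t = Ici t :=
        inter_eq_self_of_subset_right fun x _ => ne_of_gt (hf_pos x)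
      rw [hsup, Real.volume_Ici]
      exact ENNReal.zero_lt_top
    linarith
  · -- the decay bound
    set A : ℝ := Real.sqrt (1 + t ^ 2) with hAdef
    have hA1 : 1 ≤ A := one_le_br t
    have hA0 : 0 < A := br_pos t
    have hAt : t ≤ A := le_br t
    have hAnegζ : 0 < A ^ (-ζ) := Real.rpow_pos_of_pos hA0 _
    rcases le_or_gt t 2 with h2 | h2
    · -- small t
      have hA3 : A ≤ 3 := by
        have h9 : (1:ℝ) + t ^ 2 ≤ 9 := by nlinarith
        calc A ≤ Real.sqrt 9 := Real.sqrt_le_sqrt h9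
          _ = 3 := by
            rw [show (9:ℝ) = 3 ^ 2 by norm_num, Real.sqrt_sq (by norm_num : (0:ℝ) ≤ 3)]
      have hb : (3:ℝ)⁻¹ ≤ A ^ (-ζ) := by
        rw [Real.rpow_neg hA0.le]
        have hAz : A ^ ζ ≤ 3 := by
          calc A ^ ζ ≤ A ^ (1:ℝ) := Real.rpow_le_rpow_of_exponent_le hA1 hζ1
            _ = A := Real.rpow_one A
            _ ≤ 3 := hA3
        exact inv_anti₀ (Real.rpow_pos_of_pos hA0 ζ) hAz
      have hIM : ∫ s in Ioi (0:ℝ), f s ≤ M := by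
        rw [hMdef]
        exact setIntegral_mono_on hf_int (integrableOn_br hμ) measurableSet_Ioi
          fun s _ => hf_le s
      have hM3 : M ≤ 3 * M * A ^ (-ζ) := by
        nlinarith [mul_nonneg hM0 (sub_nonneg.mpr hb)]
      calc ∫ s in Ioi (0:ℝ), f s ≤ M := hIM
        _ ≤ 3 * M * A ^ (-ζ) := hM3
        _ ≤ (3 * M + (2 ^ μ + 1) / (1 - (ζ - ε)) + 4 / (ζ + μ - 1) + 1) * A ^ (-ζ) := by
            nlinarith [hAnegζ.le]
    · -- large t : four pieces
      have ht1 : (1:ℝ) ≤ t := by linarith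
      have hA2t : A ≤ 2 * t := by
        have h4 : (1:ℝ) + t ^ 2 ≤ (2 * t) ^ 2 := by nlinarith
        calc A ≤ Real.sqrt ((2 * t) ^ 2) := Real.sqrt_le_sqrt h4
          _ = 2 * t := Real.sqrt_sq (by linarith)
      have hs1 : Ioc (0:ℝ) (t/2) ⊆ Ioi 0 := Ioc_subset_Ioi_self
      have hs2 : Ioc (t/2) t ⊆ Ioi 0 :=
        Ioc_subset_Ioi_self.trans (Ioi_subset_Ioi (by linarith))
      have hs3 : Ioc t (2*t) ⊆ Ioi 0 :=
        Ioc_subset_Ioi_self.trans (Ioi_subset_Ioi (by linarith))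
      have hs4 : Ioi (2*t) ⊆ Ioi (0:ℝ) := Ioi_subset_Ioi (by linarith)
      have hsR2 : Ioi (t/2) ⊆ Ioi (0:ℝ) := Ioi_subset_Ioi (by linarith)
      have hsR3 : Ioi t ⊆ Ioi (0:ℝ) := Ioi_subset_Ioi (by linarith)
      have e1 : ∫ s in Ioi (0:ℝ), f s
          = (∫ s in Ioc 0 (t/2), f s) + ∫ s in Ioi (t/2), f s := by
        rw [← Ioc_union_Ioi_eq_Ioi (show (0:ℝ) ≤ t/2 by linarith),
          setIntegral_union (Ioc_disjoint_Ioi le_rfl) measurableSet_Ioi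
            (hf_int.mono_set hs1) (hf_int.mono_set hsR2)]
      have e2 : ∫ s in Ioi (t/2), f s
          = (∫ s in Ioc (t/2) t, f s) + ∫ s in Ioi t, f s := by
        rw [← Ioc_union_Ioi_eq_Ioi (show t/2 ≤ t by linarith),
          setIntegral_union (Ioc_disjoint_Ioi le_rfl) measurableSet_Ioi
            (hf_int.mono_set hs2) (hf_int.mono_set hsR3)]
      have e3 : ∫ s in Ioi t, f s
          = (∫ s in Ioc t (2*t), f s) + ∫ s in Ioi (2*t), f s := by
        rw [← Ioc_union_Ioi_eq_Ioi (show t ≤ 2*t by linarith),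
          setIntegral_union (Ioc_disjoint_Ioi le_rfl) measurableSet_Ioi
            (hf_int.mono_set hs3) (hf_int.mono_set hs4)]
      have hexp : A ^ (-μ) * A ^ (-(ζ - ε) + 1) ≤ A ^ (-ζ) := by
        rw [← Real.rpow_add hA0, show -μ + (-(ζ - ε) + 1) = -ζ + (1 + ε - μ) by ring,
          Real.rpow_add hA0]
        calc A ^ (-ζ) * A ^ (1 + ε - μ) ≤ A ^ (-ζ) * 1 :=
            mul_le_mul_of_nonneg_left
              (Real.rpow_le_one_of_one_le_of_nonpos hA1 hεμ) hAnegζ.le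
          _ = A ^ (-ζ) := mul_one _
      -- piece 1
      have hpt1 : ∀ s ∈ Ioc (0:ℝ) (t/2),
          f s ≤ 2 * A ^ (-ζ) * Real.sqrt (1 + s ^ 2) ^ (-μ) := by
        intro s hs
        simp only [hfdef]
        have hts : t / 2 ≤ t - s := by have := hs.2; linarith
        have hbr : A / 2 ≤ Real.sqrt (1 + (t - s) ^ 2) := half_le_br ht.le hts
        have h1 : Real.sqrt (1 + (t - s) ^ 2) ^ (-ζ) ≤ (A / 2) ^ (-ζ) :=
          rpow_neg_le (by positivity) hbr hζ0.le
        have h2 : (A / 2) ^ (-ζ) ≤ 2 * A ^ (-ζ) := by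
          rw [half_rpow hA0]
          exact mul_le_mul_of_nonneg_right (two_rpow_le hζ1) hAnegζ.le
        exact mul_le_mul_of_nonneg_right (h1.trans h2) (br_rpow_pos _ _).le
      have hB1 : ∫ s in Ioc (0:ℝ) (t/2), f s ≤ 2 * M * A ^ (-ζ) := by
        have hint := hf_int.mono_set hs1
        have hintg : IntegrableOn
            (fun s : ℝ => 2 * A ^ (-ζ) * Real.sqrt (1 + s ^ 2) ^ (-μ)) (Ioc 0 (t/2)) :=
          ((integrableOn_br hμ).mono_set hs1).const_mul _
        calc ∫ s in Ioc (0:ℝ) (t/2), f s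
            ≤ ∫ s in Ioc (0:ℝ) (t/2), 2 * A ^ (-ζ) * Real.sqrt (1 + s ^ 2) ^ (-μ) :=
              setIntegral_mono_on hint hintg measurableSet_Ioc hpt1
          _ = 2 * A ^ (-ζ) * ∫ s in Ioc (0:ℝ) (t/2), Real.sqrt (1 + s ^ 2) ^ (-μ) :=
              integral_const_mul _ _
          _ ≤ 2 * A ^ (-ζ) * M := by
              apply mul_le_mul_of_nonneg_left ?_ (by positivity)
              rw [hMdef]
              exact setIntegral_mono_set (integrableOn_br hμ)
                (Filter.Eventually.of_forall fun s => (br_rpow_pos s μ).le)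
                (HasSubset.Subset.eventuallyLE hs1)
          _ = 2 * M * A ^ (-ζ) := by ring
      -- piece 2
      have hB2 : ∫ s in Ioc (t/2) t, f s ≤ 2 ^ μ / (1 - (ζ - ε)) * A ^ (-ζ) := by
        rw [integral_Ioc_eq_integral_Ioo]
        have hpt : ∀ s ∈ Ioo (t/2) t, f s ≤ 2 ^ μ * A ^ (-μ) * (t - s) ^ (-(ζ - ε)) := by
          intro s hs
          simp only [hfdef]
          have hts : 0 < t - s := by have := hs.2; linarith
          have h1 : Real.sqrt (1 + s ^ 2) ^ (-μ) ≤ 2 ^ μ * A ^ (-μ) := by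
            have hbr : A / 2 ≤ Real.sqrt (1 + s ^ 2) := half_le_br ht.le hs.1.le
            calc Real.sqrt (1 + s ^ 2) ^ (-μ) ≤ (A / 2) ^ (-μ) :=
                rpow_neg_le (by positivity) hbr hμ0.le
              _ = 2 ^ μ * A ^ (-μ) := half_rpow hA0
          have h2 : Real.sqrt (1 + (t - s) ^ 2) ^ (-ζ) ≤ (t - s) ^ (-(ζ - ε)) := by
            calc Real.sqrt (1 + (t - s) ^ 2) ^ (-ζ)
                ≤ Real.sqrt (1 + (t - s) ^ 2) ^ (-(ζ - ε)) :=
                  Real.rpow_le_rpow_of_exponent_le (one_le_br _) (by linarith)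
              _ ≤ (t - s) ^ (-(ζ - ε)) := rpow_neg_le hts (le_br _) hζ'0.le
          calc Real.sqrt (1 + (t - s) ^ 2) ^ (-ζ) * Real.sqrt (1 + s ^ 2) ^ (-μ)
              ≤ (t - s) ^ (-(ζ - ε)) * (2 ^ μ * A ^ (-μ)) :=
                mul_le_mul h2 h1 (br_rpow_pos _ _).le (Real.rpow_pos_of_pos hts _).le
            _ = 2 ^ μ * A ^ (-μ) * (t - s) ^ (-(ζ - ε)) := by ring
        have hint := (hf_int.mono_set hs2).mono_set Ioo_subset_Ioc_self
        have hintg : IntegrableOn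
            (fun s : ℝ => 2 ^ μ * A ^ (-μ) * (t - s) ^ (-(ζ - ε))) (Ioo (t/2) t) :=
          (intOn_sub_left (by linarith)).const_mul _
        have hD : (0:ℝ) < -(ζ - ε) + 1 := by linarith
        have hpow : (t - t/2) ^ (-(ζ - ε) + 1) ≤ A ^ (-(ζ - ε) + 1) :=
          Real.rpow_le_rpow (by linarith) (by linarith) (by linarith)
        calc ∫ s in Ioo (t/2) t, f s
            ≤ ∫ s in Ioo (t/2) t, 2 ^ μ * A ^ (-μ) * (t - s) ^ (-(ζ - ε)) :=
              setIntegral_mono_on hint hintg measurableSet_Ioo hpt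
          _ = 2 ^ μ * A ^ (-μ) * ((t - t/2) ^ (-(ζ - ε) + 1) / (-(ζ - ε) + 1)) := by
              rw [integral_const_mul, int_Ioo_sub_left (by linarith) (by linarith)]
          _ ≤ 2 ^ μ * A ^ (-μ) * (A ^ (-(ζ - ε) + 1) / (-(ζ - ε) + 1)) :=
              mul_le_mul_of_nonneg_left ((div_le_div_iff_of_pos_right hD).mpr hpow) (by positivity)
          _ = 2 ^ μ / (-(ζ - ε) + 1) * (A ^ (-μ) * A ^ (-(ζ - ε) + 1)) := by ring
          _ ≤ 2 ^ μ / (-(ζ - ε) + 1) * A ^ (-ζ) :=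
              mul_le_mul_of_nonneg_left hexp (by positivity)
          _ = 2 ^ μ / (1 - (ζ - ε)) * A ^ (-ζ) := by ring_nf
      -- piece 3
      have hB3 : ∫ s in Ioc t (2*t), f s ≤ 1 / (1 - (ζ - ε)) * A ^ (-ζ) := by
        rw [integral_Ioc_eq_integral_Ioo]
        have hpt : ∀ s ∈ Ioo t (2*t), f s ≤ A ^ (-μ) * (s - t) ^ (-(ζ - ε)) := by
          intro s hs
          simp only [hfdef]
          have hst : 0 < s - t := by have := hs.1; linarith
          have h1 : Real.sqrt (1 + s ^ 2) ^ (-μ) ≤ A ^ (-μ) := by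
            have hbr : A ≤ Real.sqrt (1 + s ^ 2) := by
              apply Real.sqrt_le_sqrt
              nlinarith [hs.1.le]
            exact rpow_neg_le hA0 hbr hμ0.le
          have h2 : Real.sqrt (1 + (t - s) ^ 2) ^ (-ζ) ≤ (s - t) ^ (-(ζ - ε)) := by
            have hb : s - t ≤ Real.sqrt (1 + (t - s) ^ 2) := by
              rw [show 1 + (t - s) ^ 2 = 1 + (s - t) ^ 2 by ring]
              exact le_br _
            calc Real.sqrt (1 + (t - s) ^ 2) ^ (-ζ)
                ≤ Real.sqrt (1 + (t - s) ^ 2) ^ (-(ζ - ε)) :=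
                  Real.rpow_le_rpow_of_exponent_le (one_le_br _) (by linarith)
              _ ≤ (s - t) ^ (-(ζ - ε)) := rpow_neg_le hst hb hζ'0.le
          calc Real.sqrt (1 + (t - s) ^ 2) ^ (-ζ) * Real.sqrt (1 + s ^ 2) ^ (-μ)
              ≤ (s - t) ^ (-(ζ - ε)) * A ^ (-μ) :=
                mul_le_mul h2 h1 (br_rpow_pos _ _).le (Real.rpow_pos_of_pos hst _).le
            _ = A ^ (-μ) * (s - t) ^ (-(ζ - ε)) := by ring
        have hint := (hf_int.mono_set hs3).mono_set Ioo_subset_Ioc_self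
        have hintg : IntegrableOn
            (fun s : ℝ => A ^ (-μ) * (s - t) ^ (-(ζ - ε))) (Ioo t (2*t)) :=
          (intOn_sub_right (by linarith)).const_mul _
        have hD : (0:ℝ) < -(ζ - ε) + 1 := by linarith
        have hpow : (2*t - t) ^ (-(ζ - ε) + 1) ≤ A ^ (-(ζ - ε) + 1) :=
          Real.rpow_le_rpow (by linarith) (by linarith) (by linarith)
        calc ∫ s in Ioo t (2*t), f s
            ≤ ∫ s in Ioo t (2*t), A ^ (-μ) * (s - t) ^ (-(ζ - ε)) :=
              setIntegral_mono_on hint hintg measurableSet_Ioo hpt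
          _ = A ^ (-μ) * ((2*t - t) ^ (-(ζ - ε) + 1) / (-(ζ - ε) + 1)) := by
              rw [integral_const_mul, int_Ioo_sub_right (by linarith) (by linarith)]
          _ ≤ A ^ (-μ) * (A ^ (-(ζ - ε) + 1) / (-(ζ - ε) + 1)) :=
              mul_le_mul_of_nonneg_left ((div_le_div_iff_of_pos_right hD).mpr hpow) (by positivity)
          _ = 1 / (-(ζ - ε) + 1) * (A ^ (-μ) * A ^ (-(ζ - ε) + 1)) := by ring
          _ ≤ 1 / (-(ζ - ε) + 1) * A ^ (-ζ) :=
              mul_le_mul_of_nonneg_left hexp (by positivity)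
          _ = 1 / (1 - (ζ - ε)) * A ^ (-ζ) := by ring_nf
      -- piece 4
      have hB4 : ∫ s in Ioi (2*t), f s ≤ 2 / (ζ + μ - 1) * A ^ (-ζ) := by
        have h2t0 : (0:ℝ) < 2 * t := by linarith
        have hq : -(ζ + μ) < -1 := by linarith
        have hpt : ∀ s ∈ Ioi (2*t), f s ≤ 2 * s ^ (-(ζ + μ)) := by
          intro s hs
          simp only [hfdef]
          have hs0 : (0:ℝ) < s := lt_trans h2t0 hs
          have hst : s / 2 ≤ s - t := by
            have h2s : (2:ℝ) * t < s := hs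
            linarith
          have h1 : Real.sqrt (1 + (t - s) ^ 2) ^ (-ζ) ≤ 2 * s ^ (-ζ) := by
            have hb : s / 2 ≤ Real.sqrt (1 + (t - s) ^ 2) := by
              calc s / 2 ≤ s - t := hst
                _ ≤ Real.sqrt (1 + (s - t) ^ 2) := le_br _
                _ = Real.sqrt (1 + (t - s) ^ 2) := by
                    rw [show 1 + (s - t) ^ 2 = 1 + (t - s) ^ 2 by ring]
            calc Real.sqrt (1 + (t - s) ^ 2) ^ (-ζ) ≤ (s / 2) ^ (-ζ) :=
                rpow_neg_le (by linarith) hb hζ0.le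
              _ = 2 ^ ζ * s ^ (-ζ) := half_rpow hs0
              _ ≤ 2 * s ^ (-ζ) := mul_le_mul_of_nonneg_right (two_rpow_le hζ1)
                  (Real.rpow_pos_of_pos hs0 _).le
          have h2' : Real.sqrt (1 + s ^ 2) ^ (-μ) ≤ s ^ (-μ) :=
            rpow_neg_le hs0 (le_br s) hμ0.le
          calc Real.sqrt (1 + (t - s) ^ 2) ^ (-ζ) * Real.sqrt (1 + s ^ 2) ^ (-μ)
              ≤ (2 * s ^ (-ζ)) * s ^ (-μ) :=
                mul_le_mul h1 h2' (br_rpow_pos _ _).le (by positivity)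
            _ = 2 * (s ^ (-ζ) * s ^ (-μ)) := by ring
            _ = 2 * s ^ (-(ζ + μ)) := by
                rw [← Real.rpow_add hs0, show -ζ + -μ = -(ζ + μ) by ring]
        have hint := hf_int.mono_set hs4
        have hintg : IntegrableOn (fun s : ℝ => 2 * s ^ (-(ζ + μ))) (Ioi (2*t)) :=
          (integrableOn_Ioi_rpow_of_lt hq h2t0).const_mul 2
        have hAe : A ^ (-(ζ + μ) + 1) ≤ A ^ (-ζ) := by
          rw [show -(ζ + μ) + 1 = -ζ + (1 - μ) by ring, Real.rpow_add hA0]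
          calc A ^ (-ζ) * A ^ (1 - μ) ≤ A ^ (-ζ) * 1 :=
              mul_le_mul_of_nonneg_left
                (Real.rpow_le_one_of_one_le_of_nonpos hA1 (by linarith)) hAnegζ.le
            _ = A ^ (-ζ) := mul_one _
        have h2tA : (2*t) ^ (-(ζ + μ) + 1) ≤ A ^ (-(ζ + μ) + 1) :=
          Real.rpow_le_rpow_of_nonpos hA0 hA2t (by linarith)
        calc ∫ s in Ioi (2*t), f s ≤ ∫ s in Ioi (2*t), 2 * s ^ (-(ζ + μ)) :=
            setIntegral_mono_on hint hintg measurableSet_Ioi hpt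
          _ = 2 * ∫ s in Ioi (2*t), s ^ (-(ζ + μ)) := integral_const_mul _ _
          _ = 2 * (-(2*t) ^ (-(ζ + μ) + 1) / (-(ζ + μ) + 1)) := by
              rw [integral_Ioi_rpow_of_lt hq h2t0]
          _ = 2 * ((2*t) ^ (-(ζ + μ) + 1) / (ζ + μ - 1)) := by
              congr 1
              rw [div_eq_div_iff (show -(ζ + μ) + 1 < 0 by linarith).ne
                (show (0:ℝ) < ζ + μ - 1 by linarith).ne']
              ring
          _ ≤ 2 * (A ^ (-ζ) / (ζ + μ - 1)) := by
              apply mul_le_mul_of_nonneg_left ?_ (by norm_num)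
              exact (div_le_div_iff_of_pos_right (by linarith)).mpr (h2tA.trans hAe)
          _ = 2 / (ζ + μ - 1) * A ^ (-ζ) := by ring
      -- assemble
      have hcoef : 2 * M + 2 ^ μ / (1 - (ζ - ε)) + 1 / (1 - (ζ - ε)) + 2 / (ζ + μ - 1)
          ≤ 3 * M + (2 ^ μ + 1) / (1 - (ζ - ε)) + 4 / (ζ + μ - 1) + 1 := by
        have hdd : 2 ^ μ / (1 - (ζ - ε)) + 1 / (1 - (ζ - ε))
            = (2 ^ μ + 1) / (1 - (ζ - ε)) := by rw [← add_div]
        have h24 : 2 / (ζ + μ - 1) ≤ 4 / (ζ + μ - 1) :=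
          (div_le_div_iff_of_pos_right (by linarith)).mpr (by norm_num)
        linarith
      calc ∫ s in Ioi (0:ℝ), f s
          = (∫ s in Ioc 0 (t/2), f s) + (∫ s in Ioc (t/2) t, f s)
            + (∫ s in Ioc t (2*t), f s) + ∫ s in Ioi (2*t), f s := by
            rw [e1, e2, e3]; ring
        _ ≤ 2 * M * A ^ (-ζ) + 2 ^ μ / (1 - (ζ - ε)) * A ^ (-ζ)
            + 1 / (1 - (ζ - ε)) * A ^ (-ζ) + 2 / (ζ + μ - 1) * A ^ (-ζ) := by
            exact add_le_add (add_le_add (add_le_add hB1 hB2) hB3) hB4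
        _ = (2 * M + 2 ^ μ / (1 - (ζ - ε)) + 1 / (1 - (ζ - ε)) + 2 / (ζ + μ - 1))
            * A ^ (-ζ) := by ring
        _ ≤ (3 * M + (2 ^ μ + 1) / (1 - (ζ - ε)) + 4 / (ζ + μ - 1) + 1) * A ^ (-ζ) :=
            mul_le_mul_of_nonneg_right hcoef hAnegζ.le
end
end

section
/- Let H be a bounded self-adjoint operator on ℓ²(ℤ), let p > 5 and 1/(p−2) < ζ < 1/3, and suppose K₁ > 0 is such that ‖e^{−itH} φ‖_{ℓ^∞(ℤ)} ≤ K₁ ⟨t⟩^{−ζ} ‖φ‖_{ℓ¹(ℤ)} for all φ ∈ ℓ¹(ℤ) and all t ∈ ℝ. Let C₁ > 0 be a constant such that ∫₀^∞ ⟨t−s⟩^{−ζ} ⟨s⟩^{−ζ(p−2)} ds ≤ C₁ ⟨t⟩^{−ζ} for all t > 0. Define M := 4 K₁ and δ_* := (C₁ M^{p−2})^{−1/(p−1)}. Suppose q : [0, T] → ℓ²(ℤ) solves i q̇_n = (H q)_n ± |q_n|^{p−1} q_n with initial datum φ = q(0) satisfying δ₀ := ‖φ‖_{ℓ¹(ℤ)}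 < δ_* and ‖φ‖_{ℓ²(ℤ)} ≤ δ₀, the solution conserves the ℓ² norm, and sup_{0 ≤ t ≤ T} ⟨t⟩^{ζ} ‖q(t)‖_{ℓ^∞(ℤ)} ≤ M δ₀. Then in fact sup_{0 ≤ t ≤ T} ⟨t⟩^{ζ} ‖q(t)‖_{ℓ^∞(ℤ)} ≤ (M/2) δ₀. -/
open scoped BigOperators

noncomputable section

open MeasureTheory Set
open scoped ENNReal

noncomputable section

namespace NLSAux

lemma one_le_sqrt_one_add_sq (t : ℝ) : 1 ≤ Real.sqrt (1 + t ^ 2) := by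
  have h : (1 : ℝ) ≤ 1 + t ^ 2 := by nlinarith [sq_nonneg t]
  have := Real.sqrt_le_sqrt h
  simpa using this

lemma sqrt_one_add_sq_pos (t : ℝ) : 0 < Real.sqrt (1 + t ^ 2) :=
  lt_of_lt_of_le one_pos (one_le_sqrt_one_add_sq t)

/-- evaluation at a coordinate as a continuous linear map on ℓ². -/
def evalCLM (n : ℤ) : lp (fun _ : ℤ => ℂ) 2 →L[ℂ] ℂ :=
  LinearMap.mkContinuous
    { toFun := fun f => f n
      map_add' := fun f g => congrFun (lp.coeFn_add f g) n
      map_smul' := fun c f => congrFun (lp.coeFn_smul c f) n }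
    1 (fun f => by
      simpa using lp.norm_apply_le_norm (by norm_num : (2 : ℝ≥0∞) ≠ 0) f n)

@[simp] lemma evalCLM_apply (n : ℤ) (f : lp (fun _ : ℤ => ℂ) 2) :
    evalCLM n f = f n := rfl

lemma bddAbove_range_norm (f : lp (fun _ : ℤ => ℂ) 2) :
    BddAbove (Set.range fun n : ℤ => ‖f n‖) := by
  refine ⟨‖f‖, ?_⟩
  rintro x ⟨n, rfl⟩
  exact lp.norm_apply_le_norm (by norm_num) f n

lemma continuous_weight (c a : ℝ) :
    Continuous fun s : ℝ => Real.sqrt (1 + (c - s) ^ 2) ^ a := by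
  have h1 : Continuous fun s : ℝ => Real.sqrt (1 + (c - s) ^ 2) :=
    Real.continuous_sqrt.comp (by continuity)
  exact h1.rpow_const fun x => Or.inl (ne_of_gt (sqrt_one_add_sq_pos _))

lemma continuous_weight' (a : ℝ) :
    Continuous fun s : ℝ => Real.sqrt (1 + s ^ 2) ^ a := by
  have h1 : Continuous fun s : ℝ => Real.sqrt (1 + s ^ 2) :=
    Real.continuous_sqrt.comp (by continuity)
  exact h1.rpow_const fun x => Or.inl (ne_of_gt (sqrt_one_add_sq_pos _))

lemma integrableOn_weight {a : ℝ} (ha : 1 < a) :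
    IntegrableOn (fun s : ℝ => Real.sqrt (1 + s ^ 2) ^ (-a)) (Ioi (0 : ℝ)) := by
  have hcont : Continuous fun s : ℝ => Real.sqrt (1 + s ^ 2) ^ (-a) := continuous_weight' (-a)
  have h1 : IntegrableOn (fun s : ℝ => Real.sqrt (1 + s ^ 2) ^ (-a)) (Ioc (0 : ℝ) 1) :=
    (hcont.integrableOn_Icc (a := 0) (b := 1)).mono_set Ioc_subset_Icc_self
  have h2 : IntegrableOn (fun s : ℝ => Real.sqrt (1 + s ^ 2) ^ (-a)) (Ioi (1 : ℝ)) := by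
    have hbase : IntegrableOn (fun s : ℝ => s ^ (-a)) (Ioi (1 : ℝ)) :=
      integrableOn_Ioi_rpow_of_lt (by linarith) one_pos
    refine Integrable.mono' hbase hcont.aestronglyMeasurable.restrict ?_
    filter_upwards [ae_restrict_mem measurableSet_Ioi] with s hs
    have hs1 : (1 : ℝ) < s := hs
    have hle : s ≤ Real.sqrt (1 + s ^ 2) := by
      have h := (Real.sqrt_sq (by linarith : (0:ℝ) ≤ s)).symm
      rw [h]
      exact Real.sqrt_le_sqrt (by nlinarith)
    have := Real.rpow_le_rpow_of_nonpos (by linarith) hle (by linarith : -a ≤ 0)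
    rwa [Real.norm_of_nonneg (Real.rpow_nonneg (Real.sqrt_nonneg _) _)]
  have := h1.union h2
  rwa [Ioc_union_Ioi_eq_Ioi (by norm_num : (0:ℝ) ≤ 1)] at this

end NLSAux


set_option maxHeartbeats 2000000 in
/-- Bootstrap lemma (`non.est.ric`): let `H` be a bounded self-adjoint operator on `ℓ²(ℤ)`,
`p > 5`, `1/(p-2) < ζ < 1/3`, `K₁` a dispersive constant for `e^{-itH}`, and `C₁` a constant
for the convolution integral estimate. Set `M := 4K₁` and `δ_* := (C₁ M^{p-2})^{-1/(p-1)}`.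
If `q : [0,T] → ℓ²(ℤ)` solves the NLS (via the Duhamel formula), conserves the `ℓ²` norm,
has initial datum of `ℓ¹` norm `δ₀ < δ_*` with `‖φ‖_{ℓ²} ≤ δ₀`, and satisfies
`⟨t⟩^ζ ‖q(t)‖_{ℓ∞} ≤ M δ₀` on `[0,T]`, then in fact `⟨t⟩^ζ ‖q(t)‖_{ℓ∞} ≤ (M/2) δ₀` there. -/
theorem nls_bootstrap
    (H : lp (fun _ : ℤ => ℂ) 2 →L[ℂ] lp (fun _ : ℤ => ℂ) 2)
    (hH : IsSelfAdjoint H)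
    (p ζ : ℝ) (hp : 5 < p) (hζ₁ : 1 / (p - 2) < ζ) (hζ₂ : ζ < 1 / 3)
    (K₁ : ℝ) (hK₁ : 0 < K₁)
    -- dispersive estimate for the linear flow
    (hdisp : ∀ (t : ℝ) (φ : lp (fun _ : ℤ => ℂ) 2), Summable (fun n : ℤ => ‖φ n‖) →
      (⨆ n : ℤ, ‖(NormedSpace.exp ((-(Complex.I * (t : ℂ))) • H)) φ n‖)
        ≤ K₁ / Real.sqrt (1 + t ^ 2) ^ ζ * ∑' n : ℤ, ‖φ n‖)
    (C₁ : ℝ) (hC₁ : 0 < C₁)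
    -- convolution integral estimate
    (hconv : ∀ t : ℝ, 0 < t →
      (∫ s in Set.Ioi (0 : ℝ),
          Real.sqrt (1 + (t - s) ^ 2) ^ (-ζ) * Real.sqrt (1 + s ^ 2) ^ (-(ζ * (p - 2))))
        ≤ C₁ * Real.sqrt (1 + t ^ 2) ^ (-ζ))
    (M δstar : ℝ) (hM : M = 4 * K₁)
    (hδstar : δstar = (C₁ * M ^ (p - 2)) ^ (-(1 / (p - 1))))
    (T : ℝ) (hT : 0 ≤ T)
    (ε : ℂ) (hε : ε = 1 ∨ ε = -1)
    (q F : ℝ → lp (fun _ : ℤ => ℂ) 2)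
    -- `F s` is the nonlinearity `f(q(s))`, `f(u)_j = ∓ i |u_j|^{p-1} u_j`
    (hF : ∀ s ∈ Set.Icc (0 : ℝ) T, ∀ n : ℤ,
      F s n = -Complex.I * ε * ((‖q s n‖ ^ (p - 1) : ℝ) : ℂ) * q s n)
    -- `q` solves the NLS in Duhamel form on `[0,T]`
    (hduh : ∀ t ∈ Set.Icc (0 : ℝ) T,
      q t = (NormedSpace.exp ((-(Complex.I * (t : ℂ))) • H)) (q 0)
        + ∫ s in (0 : ℝ)..t,
            (NormedSpace.exp ((-(Complex.I * ((t - s : ℝ) : ℂ))) • H)) (F s))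
    -- conservation of the `ℓ²` norm
    (hcons : ∀ t ∈ Set.Icc (0 : ℝ) T, ‖q t‖ = ‖q 0‖)
    (δ₀ : ℝ)
    (hl1 : Summable (fun n : ℤ => ‖q 0 n‖))
    (hδ₀ : δ₀ = ∑' n : ℤ, ‖q 0 n‖)
    (hsmall : δ₀ < δstar)
    (hl2 : ‖q 0‖ ≤ δ₀)
    -- bootstrap assumption
    (hboot : ∀ t ∈ Set.Icc (0 : ℝ) T,
      Real.sqrt (1 + t ^ 2) ^ ζ * (⨆ n : ℤ, ‖q t n‖) ≤ M * δ₀) :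
    ∀ t ∈ Set.Icc (0 : ℝ) T,
      Real.sqrt (1 + t ^ 2) ^ ζ * (⨆ n : ℤ, ‖q t n‖) ≤ M / 2 * δ₀ := by
  have hδnn : 0 ≤ δ₀ := by
    rw [hδ₀]; exact tsum_nonneg fun n => norm_nonneg _
  have hMpos : 0 < M := by rw [hM]; linarith
  have hp2 : (0:ℝ) < p - 2 := by linarith
  have hζpos : 0 < ζ := lt_trans (by positivity) hζ₁
  have ha1 : 1 < ζ * (p - 2) := by
    rw [div_lt_iff₀ hp2] at hζ₁; linarith
  -- sup bound from bootstrap hypothesis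
  have hS : ∀ s ∈ Icc (0:ℝ) T,
      (⨆ n : ℤ, ‖q s n‖) ≤ M * δ₀ * Real.sqrt (1 + s ^ 2) ^ (-ζ) := by
    intro s hs
    have h := hboot s hs
    have hx : (0:ℝ) < Real.sqrt (1 + s ^ 2) ^ ζ :=
      Real.rpow_pos_of_pos (NLSAux.sqrt_one_add_sq_pos s) ζ
    rw [Real.rpow_neg (Real.sqrt_nonneg _)]
    rw [← le_div_iff₀' hx] at h
    simpa [div_eq_mul_inv] using h
  -- pointwise norm of the nonlinearity
  have hFn : ∀ s ∈ Icc (0:ℝ) T, ∀ n : ℤ, ‖F s n‖ = ‖q s n‖ ^ p := by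
    intro s hs n
    rw [hF s hs n]
    have h1 : ‖(-Complex.I * ε)‖ = 1 := by rcases hε with h | h <;> simp [h]
    have h0 : -Complex.I * ε * ((‖q s n‖ ^ (p - 1) : ℝ) : ℂ) * q s n
        = (-Complex.I * ε) * (((‖q s n‖ ^ (p - 1) : ℝ) : ℂ) * q s n) := by ring
    rw [h0, norm_mul, h1, one_mul, norm_mul, Complex.norm_real,
      Real.norm_of_nonneg (Real.rpow_nonneg (norm_nonneg _) _)]
    have h3 := Real.rpow_add' (x := ‖q s n‖) (norm_nonneg _)
      (show p - 1 + 1 ≠ 0 by intro hcon; nlinarith)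
    rw [show p - 1 + 1 = p by ring] at h3
    rw [Real.rpow_one] at h3
    exact h3.symm
  -- ℓ¹ bound on the nonlinearity
  have hF1 : ∀ s ∈ Icc (0:ℝ) T,
      Summable (fun n : ℤ => ‖F s n‖) ∧
      ∑' n : ℤ, ‖F s n‖ ≤ (M * δ₀) ^ (p - 2)
        * Real.sqrt (1 + s ^ 2) ^ (-(ζ * (p - 2))) * δ₀ ^ (2:ℝ) := by
    intro s hs
    have hq2 : Summable (fun n : ℤ => ‖q s n‖ ^ (2:ℝ)) := by
      have := (lp.memℓp (q s)).summable (p := 2) (by norm_num)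
      simpa using this
    have hbd : ∀ n : ℤ, ‖F s n‖
        ≤ (M * δ₀ * Real.sqrt (1 + s ^ 2) ^ (-ζ)) ^ (p - 2) * ‖q s n‖ ^ (2:ℝ) := by
      intro n
      rw [hFn s hs n]
      have hsplit : ‖q s n‖ ^ p = ‖q s n‖ ^ (p - 2) * ‖q s n‖ ^ (2:ℝ) := by
        have h3 := Real.rpow_add' (x := ‖q s n‖) (norm_nonneg _)
          (show p - 2 + 2 ≠ 0 by intro hcon; nlinarith)
        rw [show p - 2 + 2 = p by ring] at h3
        exact h3
      rw [hsplit]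
      have hn : ‖q s n‖ ≤ M * δ₀ * Real.sqrt (1 + s ^ 2) ^ (-ζ) :=
        le_trans (le_ciSup (NLSAux.bddAbove_range_norm (q s)) n) (hS s hs)
      exact mul_le_mul_of_nonneg_right
        (Real.rpow_le_rpow (norm_nonneg _) hn (le_of_lt hp2))
        (Real.rpow_nonneg (norm_nonneg _) _)
    have hsum : Summable (fun n : ℤ => ‖F s n‖) :=
      Summable.of_nonneg_of_le (fun n => norm_nonneg _) hbd (hq2.mul_left _)
    refine ⟨hsum, ?_⟩
    have h4 : ∑' n : ℤ, ‖F s n‖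
        ≤ ∑' n : ℤ, (M * δ₀ * Real.sqrt (1 + s ^ 2) ^ (-ζ)) ^ (p - 2) * ‖q s n‖ ^ (2:ℝ) :=
      Summable.tsum_le_tsum hbd hsum (hq2.mul_left _)
    rw [tsum_mul_left] at h4
    have h5 : ∑' n : ℤ, ‖q s n‖ ^ (2:ℝ) = ‖q s‖ ^ (2:ℝ) := by
      have := lp.norm_rpow_eq_tsum (p := 2) (by norm_num) (q s)
      simpa using this.symm
    rw [h5] at h4
    have h6 : ‖q s‖ ^ (2:ℝ) ≤ δ₀ ^ (2:ℝ) :=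
      Real.rpow_le_rpow (norm_nonneg _) (by rw [hcons s hs]; exact hl2) (by norm_num)
    have h7 : (M * δ₀ * Real.sqrt (1 + s ^ 2) ^ (-ζ)) ^ (p - 2)
        = (M * δ₀) ^ (p - 2) * Real.sqrt (1 + s ^ 2) ^ (-(ζ * (p - 2))) := by
      rw [Real.mul_rpow (mul_nonneg hMpos.le hδnn) (Real.rpow_nonneg (Real.sqrt_nonneg _) _)]
      rw [← Real.rpow_mul (Real.sqrt_nonneg _)]
      ring_nf
    calc ∑' n : ℤ, ‖F s n‖
        ≤ (M * δ₀ * Real.sqrt (1 + s ^ 2) ^ (-ζ)) ^ (p - 2) * ‖q s‖ ^ (2:ℝ) := h4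
      _ ≤ (M * δ₀ * Real.sqrt (1 + s ^ 2) ^ (-ζ)) ^ (p - 2) * δ₀ ^ (2:ℝ) :=
          mul_le_mul_of_nonneg_left h6 (Real.rpow_nonneg (by positivity) _)
      _ = _ := by rw [h7]
  -- the smallness constant
  have hkey : C₁ * (M * δ₀) ^ (p - 2) * δ₀ ^ (2:ℝ) ≤ δ₀ := by
    have hpos : (0:ℝ) < C₁ * M ^ (p - 2) := mul_pos hC₁ (Real.rpow_pos_of_pos hMpos _)
    have h1 : δ₀ ^ (p - 1) ≤ δstar ^ (p - 1) :=
      Real.rpow_le_rpow hδnn hsmall.le (by linarith)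
    have hp1 : p - 1 ≠ 0 := by intro hcon; nlinarith
    have h2 : δstar ^ (p - 1) = (C₁ * M ^ (p - 2))⁻¹ := by
      rw [hδstar, ← Real.rpow_mul hpos.le]
      rw [show -(1 / (p - 1)) * (p - 1) = -1 by field_simp]
      exact Real.rpow_neg_one _
    have h3 : C₁ * M ^ (p - 2) * δ₀ ^ (p - 1) ≤ 1 := by
      have := mul_le_mul_of_nonneg_left (h2 ▸ h1) hpos.le
      rwa [mul_inv_cancel₀ (ne_of_gt hpos)] at this
    have e1 : (M * δ₀) ^ (p - 2) = M ^ (p - 2) * δ₀ ^ (p - 2) := Real.mul_rpow hMpos.le hδnn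
    have e2 : δ₀ ^ (p - 2) * δ₀ ^ (2:ℝ) = δ₀ ^ (p - 1) * δ₀ := by
      have a1 := Real.rpow_add' (x := δ₀) hδnn (show p - 2 + 2 ≠ 0 by intro hcon; nlinarith)
      rw [show p - 2 + 2 = p by ring] at a1
      have a2 := Real.rpow_add' (x := δ₀) hδnn (show p - 1 + 1 ≠ 0 by intro hcon; nlinarith)
      rw [show p - 1 + 1 = p by ring, Real.rpow_one] at a2
      rw [← a1, ← a2]
    calc C₁ * (M * δ₀) ^ (p - 2) * δ₀ ^ (2:ℝ)
        = C₁ * M ^ (p - 2) * (δ₀ ^ (p - 2) * δ₀ ^ (2:ℝ)) := by rw [e1]; ring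
      _ = C₁ * M ^ (p - 2) * δ₀ ^ (p - 1) * δ₀ := by rw [e2]; ring
      _ ≤ 1 * δ₀ := mul_le_mul_of_nonneg_right h3 hδnn
      _ = δ₀ := one_mul _
  -- linear evolution bound
  intro t ht
  obtain ⟨ht0, htT⟩ := ht
  have hxpos : (0:ℝ) < Real.sqrt (1 + t ^ 2) ^ ζ :=
    Real.rpow_pos_of_pos (NLSAux.sqrt_one_add_sq_pos t) ζ
  have hlin : ∀ n : ℤ,
      ‖(NormedSpace.exp ((-(Complex.I * (t : ℂ))) • H)) (q 0) n‖
        ≤ K₁ / Real.sqrt (1 + t ^ 2) ^ ζ * δ₀ := by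
    intro n
    have h1 := hdisp t (q 0) hl1
    rw [← hδ₀] at h1
    exact le_trans (le_ciSup (NLSAux.bddAbove_range_norm _) n) h1
  by_cases hdeg : t = 0 ∨
      ¬ IntervalIntegrable
        (fun s => (NormedSpace.exp ((-(Complex.I * ((t - s : ℝ) : ℂ))) • H)) (F s))
        volume 0 t
  · -- degenerate case : the Duhamel integral vanishes
    have hqt : q t = (NormedSpace.exp ((-(Complex.I * (t : ℂ))) • H)) (q 0) := by
      have hzero : (∫ s in (0:ℝ)..t,
          (NormedSpace.exp ((-(Complex.I * ((t - s : ℝ) : ℂ))) • H)) (F s)) = 0 := by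
        rcases hdeg with h0 | hni
        · rw [h0]; exact intervalIntegral.integral_same
        · exact intervalIntegral.integral_undef hni
      rw [hduh t ⟨ht0, htT⟩, hzero, add_zero]
    have hsle : (⨆ n : ℤ, ‖q t n‖) ≤ K₁ / Real.sqrt (1 + t ^ 2) ^ ζ * δ₀ := by
      refine ciSup_le fun n => ?_
      rw [hqt]
      exact hlin n
    calc Real.sqrt (1 + t ^ 2) ^ ζ * (⨆ n : ℤ, ‖q t n‖)
        ≤ Real.sqrt (1 + t ^ 2) ^ ζ * (K₁ / Real.sqrt (1 + t ^ 2) ^ ζ * δ₀) :=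
          mul_le_mul_of_nonneg_left hsle hxpos.le
      _ = K₁ * δ₀ := by field_simp
      _ ≤ M / 2 * δ₀ := by
          rw [hM]
          nlinarith
  · push_neg at hdeg
    obtain ⟨htne, hint⟩ := hdeg
    have htpos : 0 < t := lt_of_le_of_ne ht0 (Ne.symm htne)
    -- pointwise dispersive bound on the integrand
    have hptw : ∀ s ∈ Icc (0:ℝ) t, ∀ n : ℤ,
        ‖(NormedSpace.exp ((-(Complex.I * ((t - s : ℝ) : ℂ))) • H)) (F s) n‖
          ≤ K₁ * (M * δ₀) ^ (p - 2) * δ₀ ^ (2:ℝ)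
            * (Real.sqrt (1 + (t - s) ^ 2) ^ (-ζ)
              * Real.sqrt (1 + s ^ 2) ^ (-(ζ * (p - 2)))) := by
      intro s hs n
      have hsT : s ∈ Icc (0:ℝ) T := ⟨hs.1, le_trans hs.2 htT⟩
      obtain ⟨hsum, htsum⟩ := hF1 s hsT
      have h1 := hdisp (t - s) (F s) hsum
      have h2 : ‖(NormedSpace.exp ((-(Complex.I * ((t - s : ℝ) : ℂ))) • H)) (F s) n‖
          ≤ ⨆ m : ℤ, ‖(NormedSpace.exp ((-(Complex.I * ((t - s : ℝ) : ℂ))) • H)) (F s) m‖ :=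
        le_ciSup (NLSAux.bddAbove_range_norm _) n
      have h3 : K₁ / Real.sqrt (1 + (t - s) ^ 2) ^ ζ
          = K₁ * Real.sqrt (1 + (t - s) ^ 2) ^ (-ζ) := by
        rw [Real.rpow_neg (Real.sqrt_nonneg _), div_eq_mul_inv]
      calc ‖(NormedSpace.exp ((-(Complex.I * ((t - s : ℝ) : ℂ))) • H)) (F s) n‖
          ≤ K₁ / Real.sqrt (1 + (t - s) ^ 2) ^ ζ * ∑' m : ℤ, ‖F s m‖ := le_trans h2 h1
        _ ≤ K₁ * Real.sqrt (1 + (t - s) ^ 2) ^ (-ζ)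
            * ((M * δ₀) ^ (p - 2) * Real.sqrt (1 + s ^ 2) ^ (-(ζ * (p - 2))) * δ₀ ^ (2:ℝ)) := by
            rw [h3]
            refine mul_le_mul_of_nonneg_left htsum ?_
            positivity
        _ = K₁ * (M * δ₀) ^ (p - 2) * δ₀ ^ (2:ℝ)
            * (Real.sqrt (1 + (t - s) ^ 2) ^ (-ζ)
              * Real.sqrt (1 + s ^ 2) ^ (-(ζ * (p - 2)))) := by ring
    -- integral of the weight
    have hwcont : Continuous fun s : ℝ =>
        Real.sqrt (1 + (t - s) ^ 2) ^ (-ζ) * Real.sqrt (1 + s ^ 2) ^ (-(ζ * (p - 2))) :=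
      (NLSAux.continuous_weight t (-ζ)).mul (NLSAux.continuous_weight' (-(ζ * (p - 2))))
    have hwnn : ∀ s : ℝ, 0 ≤ Real.sqrt (1 + (t - s) ^ 2) ^ (-ζ)
        * Real.sqrt (1 + s ^ 2) ^ (-(ζ * (p - 2))) := fun s =>
      mul_nonneg (Real.rpow_nonneg (Real.sqrt_nonneg _) _)
        (Real.rpow_nonneg (Real.sqrt_nonneg _) _)
    have hwint : IntegrableOn (fun s : ℝ =>
        Real.sqrt (1 + (t - s) ^ 2) ^ (-ζ) * Real.sqrt (1 + s ^ 2) ^ (-(ζ * (p - 2))))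
        (Ioi (0:ℝ)) := by
      refine Integrable.mono' (NLSAux.integrableOn_weight ha1)
        hwcont.aestronglyMeasurable.restrict ?_
      refine Filter.Eventually.of_forall fun s => ?_
      rw [Real.norm_of_nonneg (hwnn s)]
      have h1 : Real.sqrt (1 + (t - s) ^ 2) ^ (-ζ) ≤ 1 :=
        Real.rpow_le_one_of_one_le_of_nonpos (NLSAux.one_le_sqrt_one_add_sq _) (by linarith)
      calc Real.sqrt (1 + (t - s) ^ 2) ^ (-ζ) * Real.sqrt (1 + s ^ 2) ^ (-(ζ * (p - 2)))
          ≤ 1 * Real.sqrt (1 + s ^ 2) ^ (-(ζ * (p - 2))) :=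
            mul_le_mul_of_nonneg_right h1 (Real.rpow_nonneg (Real.sqrt_nonneg _) _)
        _ = _ := one_mul _
    have hIoc : (∫ s in (0:ℝ)..t,
        Real.sqrt (1 + (t - s) ^ 2) ^ (-ζ) * Real.sqrt (1 + s ^ 2) ^ (-(ζ * (p - 2))))
        ≤ C₁ * Real.sqrt (1 + t ^ 2) ^ (-ζ) := by
      rw [intervalIntegral.integral_of_le htpos.le]
      refine le_trans (setIntegral_mono_set hwint
        (Filter.Eventually.of_forall hwnn)
        (HasSubset.Subset.eventuallyLE Ioc_subset_Ioi_self)) ?_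
      exact hconv t htpos
    -- bound the Duhamel term coordinatewise
    have hB : ∀ n : ℤ,
        ‖(∫ s in (0:ℝ)..t,
            (NormedSpace.exp ((-(Complex.I * ((t - s : ℝ) : ℂ))) • H)) (F s)) n‖
          ≤ K₁ * (M * δ₀) ^ (p - 2) * δ₀ ^ (2:ℝ) * (C₁ * Real.sqrt (1 + t ^ 2) ^ (-ζ)) := by
      intro n
      have hcomp : IntervalIntegrable
          (fun s => (NLSAux.evalCLM n)
            ((NormedSpace.exp ((-(Complex.I * ((t - s : ℝ) : ℂ))) • H)) (F s)))
          volume 0 t :=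
        ⟨(NLSAux.evalCLM n).integrable_comp hint.1, (NLSAux.evalCLM n).integrable_comp hint.2⟩
      have hcc := (NLSAux.evalCLM n).intervalIntegral_comp_comm hint
      have heq : ((∫ s in (0:ℝ)..t,
          (NormedSpace.exp ((-(Complex.I * ((t - s : ℝ) : ℂ))) • H)) (F s)) n : ℂ)
          = ∫ s in (0:ℝ)..t,
              ((NormedSpace.exp ((-(Complex.I * ((t - s : ℝ) : ℂ))) • H)) (F s)) n :=
        hcc.symm
      rw [heq]
      have hK0 : (0:ℝ) ≤ K₁ * (M * δ₀) ^ (p - 2) * δ₀ ^ (2:ℝ) := by positivity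
      calc ‖∫ s in (0:ℝ)..t,
              ((NormedSpace.exp ((-(Complex.I * ((t - s : ℝ) : ℂ))) • H)) (F s)) n‖
          ≤ ∫ s in (0:ℝ)..t,
              ‖((NormedSpace.exp ((-(Complex.I * ((t - s : ℝ) : ℂ))) • H)) (F s)) n‖ :=
            intervalIntegral.norm_integral_le_integral_norm htpos.le
        _ ≤ ∫ s in (0:ℝ)..t, K₁ * (M * δ₀) ^ (p - 2) * δ₀ ^ (2:ℝ)
              * (Real.sqrt (1 + (t - s) ^ 2) ^ (-ζ)
                * Real.sqrt (1 + s ^ 2) ^ (-(ζ * (p - 2)))) := by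
            refine intervalIntegral.integral_mono_on htpos.le hcomp.norm ?_
              (fun s hs => hptw s hs n)
            exact ((continuous_const.mul hwcont)).intervalIntegrable _ _
        _ = K₁ * (M * δ₀) ^ (p - 2) * δ₀ ^ (2:ℝ)
              * ∫ s in (0:ℝ)..t,
                Real.sqrt (1 + (t - s) ^ 2) ^ (-ζ)
                  * Real.sqrt (1 + s ^ 2) ^ (-(ζ * (p - 2))) := by
            rw [← intervalIntegral.integral_const_mul]
        _ ≤ K₁ * (M * δ₀) ^ (p - 2) * δ₀ ^ (2:ℝ) * (C₁ * Real.sqrt (1 + t ^ 2) ^ (-ζ)) :=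
            mul_le_mul_of_nonneg_left hIoc hK0
    -- combine
    have hq_le : ∀ n : ℤ, ‖q t n‖
        ≤ K₁ * Real.sqrt (1 + t ^ 2) ^ (-ζ) * δ₀
          + K₁ * (M * δ₀) ^ (p - 2) * δ₀ ^ (2:ℝ) * (C₁ * Real.sqrt (1 + t ^ 2) ^ (-ζ)) := by
      intro n
      have hco : q t n
          = (NormedSpace.exp ((-(Complex.I * (t : ℂ))) • H)) (q 0) n
            + (∫ s in (0:ℝ)..t,
                (NormedSpace.exp ((-(Complex.I * ((t - s : ℝ) : ℂ))) • H)) (F s)) n := by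
        rw [hduh t ⟨ht0, htT⟩]
        exact congrFun (lp.coeFn_add _ _) n
      have hd : K₁ / Real.sqrt (1 + t ^ 2) ^ ζ = K₁ * Real.sqrt (1 + t ^ 2) ^ (-ζ) := by
        rw [Real.rpow_neg (Real.sqrt_nonneg _), div_eq_mul_inv]
      calc ‖q t n‖ ≤ ‖(NormedSpace.exp ((-(Complex.I * (t : ℂ))) • H)) (q 0) n‖
            + ‖(∫ s in (0:ℝ)..t,
                (NormedSpace.exp ((-(Complex.I * ((t - s : ℝ) : ℂ))) • H)) (F s)) n‖ := by
            rw [hco]; exact norm_add_le _ _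
        _ ≤ K₁ * Real.sqrt (1 + t ^ 2) ^ (-ζ) * δ₀
            + K₁ * (M * δ₀) ^ (p - 2) * δ₀ ^ (2:ℝ) * (C₁ * Real.sqrt (1 + t ^ 2) ^ (-ζ)) := by
            refine add_le_add ?_ (hB n)
            rw [← hd]
            exact hlin n
    have hSle : (⨆ n : ℤ, ‖q t n‖)
        ≤ K₁ * Real.sqrt (1 + t ^ 2) ^ (-ζ) * δ₀
          + K₁ * (M * δ₀) ^ (p - 2) * δ₀ ^ (2:ℝ) * (C₁ * Real.sqrt (1 + t ^ 2) ^ (-ζ)) :=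
      ciSup_le hq_le
    have hcancel : Real.sqrt (1 + t ^ 2) ^ ζ * Real.sqrt (1 + t ^ 2) ^ (-ζ) = 1 := by
      rw [← Real.rpow_add (NLSAux.sqrt_one_add_sq_pos t)]
      simp
    calc Real.sqrt (1 + t ^ 2) ^ ζ * (⨆ n : ℤ, ‖q t n‖)
        ≤ Real.sqrt (1 + t ^ 2) ^ ζ
            * (K₁ * Real.sqrt (1 + t ^ 2) ^ (-ζ) * δ₀
              + K₁ * (M * δ₀) ^ (p - 2) * δ₀ ^ (2:ℝ) * (C₁ * Real.sqrt (1 + t ^ 2) ^ (-ζ))) :=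
          mul_le_mul_of_nonneg_left hSle hxpos.le
      _ = (Real.sqrt (1 + t ^ 2) ^ ζ * Real.sqrt (1 + t ^ 2) ^ (-ζ))
            * (K₁ * δ₀ + K₁ * (C₁ * (M * δ₀) ^ (p - 2) * δ₀ ^ (2:ℝ))) := by ring
      _ = K₁ * δ₀ + K₁ * (C₁ * (M * δ₀) ^ (p - 2) * δ₀ ^ (2:ℝ)) := by
          rw [hcancel, one_mul]
      _ ≤ K₁ * δ₀ + K₁ * δ₀ := by
          refine add_le_add_right (mul_le_mul_of_nonneg_left hkey hK₁.le) _
      _ = M / 2 * δ₀ := by rw [hM]; ring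


end
end
end

section
/- Let k ≥ 2 be an integer and suppose ψ is real-valued and of class C^k on (a, b), with |ψ^{(k)}(x)| ≥ 1 for all x ∈ (a, b). Then for every λ > 0 one has |∫_a^b e^{i λ ψ(x)} dx| ≤ (5·2^{k−1} − 2) λ^{−1/k}. -/
open scoped BigOperators

noncomputable section

open Set MeasureTheory Complex

lemma norm_exp_eq_one (lam r : ℝ) : ‖Complex.exp (Complex.I * lam * r)‖ = 1 := by
  have h : Complex.I * lam * r = ((lam * r : ℝ) : ℂ) * Complex.I := by push_cast; ring
  rw [h, Complex.norm_exp_ofReal_mul_I]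

lemma hasDerivWithinAt_ofReal {f : ℝ → ℝ} {u x : ℝ} {s : Set ℝ}
    (hf : HasDerivWithinAt f u s x) :
    HasDerivWithinAt (fun y : ℝ => ((f y : ℂ))) (u : ℂ) s x := by
  simpa only [Function.comp_def, Complex.ofRealCLM_apply, Complex.real_smul, Complex.ofReal_one,
    mul_one] using
    Complex.ofRealCLM.hasDerivAt.scomp_hasDerivWithinAt x hf

lemma norm_integral_exp_neg (c d lam : ℝ) (ψ : ℝ → ℝ) :
    ‖∫ x in c..d, Complex.exp (Complex.I * lam * (-(ψ x) : ℝ))‖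
      = ‖∫ x in c..d, Complex.exp (Complex.I * lam * (ψ x : ℝ))‖ := by
  have h : ∀ x : ℝ, Complex.exp (Complex.I * lam * ((-(ψ x) : ℝ) : ℂ))
      = (starRingEnd ℂ) (Complex.exp (Complex.I * lam * (ψ x : ℝ))) := by
    intro x
    rw [← Complex.exp_conj]
    congr 1
    simp only [map_mul, Complex.conj_I, Complex.conj_ofReal, Complex.ofReal_neg]
    ring
  simp_rw [h]
  unfold intervalIntegral
  rw [integral_conj, integral_conj, ← map_sub, RCLike.norm_conj]

lemma sign_const {c d μ : ℝ} (hμ : 0 < μ) {f : ℝ → ℝ} (hcd : c ≤ d)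
    (hf : ContinuousOn f (Icc c d)) (h : ∀ x ∈ Icc c d, μ ≤ |f x|) :
    (∀ x ∈ Icc c d, μ ≤ f x) ∨ (∀ x ∈ Icc c d, f x ≤ -μ) := by
  have habs : ∀ x ∈ Icc c d, μ ≤ f x ∨ f x ≤ -μ := by
    intro x hx
    rcases (le_abs.1 (h x hx)) with h1 | h1
    · exact Or.inl h1
    · exact Or.inr (by linarith)
  have hivt : ∀ x ∈ Icc c d, ∀ y ∈ Icc c d, μ ≤ f x → f y ≤ -μ → False := by
    intro x hx y hy hfx hfy
    rcases le_total x y with hxy | hxy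
    · have hsub : Icc x y ⊆ Icc c d := Icc_subset_Icc hx.1 hy.2
      have := intermediate_value_Icc' hxy (hf.mono hsub) (by constructor <;> linarith : (0:ℝ) ∈ Icc (f y) (f x))
      obtain ⟨z, hz, hz0⟩ := this
      have := h z (hsub hz); rw [hz0] at this; simp at this; linarith
    · have hsub : Icc y x ⊆ Icc c d := Icc_subset_Icc hy.1 hx.2
      have := intermediate_value_Icc hxy (hf.mono hsub) (by constructor <;> linarith : (0:ℝ) ∈ Icc (f y) (f x))
      obtain ⟨z, hz, hz0⟩ := this
      have := h z (hsub hz); rw [hz0] at this; simp at this; linarith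
  rcases habs c ⟨le_refl c, hcd⟩ with hc | hc
  · left; intro x hx
    rcases habs x hx with h1 | h1
    · exact h1
    · exact absurd (hivt c ⟨le_refl c, hcd⟩ x hx hc h1) (by simp)
  · right; intro x hx
    rcases habs x hx with h1 | h1
    · exact absurd (hivt x hx c ⟨le_refl c, hcd⟩ h1 hc) (by simp)
    · exact h1

lemma grow_of_deriv_ge {c d μ : ℝ} {A A' : ℝ → ℝ} (hμ : 0 ≤ μ)
    (hA : ∀ x ∈ Icc c d, HasDerivWithinAt A (A' x) (Icc c d) x)
    (hA' : ∀ x ∈ Icc c d, μ ≤ A' x) :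
    ∀ p ∈ Icc c d, ∀ q ∈ Icc c d, p ≤ q → μ * (q - p) ≤ A q - A p := by
  have hmono : MonotoneOn (fun x => A x - μ * x) (Icc c d) := by
    apply monotoneOn_of_deriv_nonneg (convex_Icc c d)
    · exact (ContinuousOn.sub (fun x hx => (hA x hx).continuousWithinAt)
        ((continuous_const.mul continuous_id).continuousOn))
    · intro x hx
      rw [interior_Icc] at hx
      have hda : HasDerivAt A (A' x) x :=
        (hA x (Ioo_subset_Icc_self hx)).hasDerivAt (Icc_mem_nhds hx.1 hx.2)
      exact (hda.sub ((hasDerivAt_id x).const_mul μ)).differentiableAt.differentiableWithinAt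
    · intro x hx
      rw [interior_Icc] at hx
      have hda : HasDerivAt A (A' x) x :=
        (hA x (Ioo_subset_Icc_self hx)).hasDerivAt (Icc_mem_nhds hx.1 hx.2)
      have : HasDerivAt (fun x => A x - μ * x) (A' x - μ) x := by
        exact (hda.sub ((hasDerivAt_id x).const_mul μ)).congr_deriv (by simp)
      rw [this.deriv]
      have := hA' x (Ioo_subset_Icc_self hx)
      linarith
  intro p hp q hq hpq
  have := hmono hp hq hpq
  simp only at this
  linarith

lemma base_case {c d μ lam : ℝ} (f : ℕ → ℝ → ℝ) (hμ : 0 < μ) (hlam : 0 < lam) (hcd : c ≤ d)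
    (hd1 : ∀ x ∈ Icc c d, HasDerivWithinAt (f 0) (f 1 x) (Icc c d) x)
    (hd2 : ∀ x ∈ Icc c d, HasDerivWithinAt (f 1) (f 2 x) (Icc c d) x)
    (hc2 : ContinuousOn (f 2) (Icc c d))
    (hlow : ∀ x ∈ Icc c d, μ ≤ f 1 x)
    (hsign : (∀ x ∈ Icc c d, 0 ≤ f 2 x) ∨ (∀ x ∈ Icc c d, f 2 x ≤ 0)) :
    ‖∫ x in c..d, Complex.exp (Complex.I * lam * f 0 x)‖ ≤ 3 / (lam * μ) := by
  set F : ℝ → ℂ := fun x => Complex.exp (Complex.I * lam * f 0 x) with hF_def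
  have hc1 : ContinuousOn (f 1) (Icc c d) := fun x hx => (hd2 x hx).continuousWithinAt
  have hc0 : ContinuousOn (f 0) (Icc c d) := fun x hx => (hd1 x hx).continuousWithinAt
  have hf1pos : ∀ x ∈ Icc c d, 0 < f 1 x := fun x hx => lt_of_lt_of_le hμ (hlow x hx)
  have hzne : ∀ x ∈ Icc c d, (Complex.I * lam * f 1 x) ≠ 0 := by
    intro x hx
    apply mul_ne_zero (mul_ne_zero Complex.I_ne_zero _)
    · exact Complex.ofReal_ne_zero.2 (hf1pos x hx).ne'
    · exact Complex.ofReal_ne_zero.2 hlam.ne'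
  set g : ℝ → ℂ := fun x => (Complex.I * lam * f 1 x)⁻¹ with hg_def
  set g' : ℝ → ℂ := fun x => -(Complex.I * lam * f 2 x) / (Complex.I * lam * f 1 x) ^ 2
    with hg'_def
  have hgnorm : ∀ x ∈ Icc c d, ‖g x‖ ≤ 1 / (lam * μ) := by
    intro x hx
    rw [hg_def]
    simp only [norm_inv, norm_mul, Complex.norm_I, one_mul, Complex.norm_real, Real.norm_eq_abs,
      abs_of_pos hlam, abs_of_pos (hf1pos x hx)]
    rw [one_div]
    apply inv_anti₀ (by positivity)
    exact mul_le_mul_of_nonneg_left (hlow x hx) hlam.le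
  have hFd : ∀ x ∈ Icc c d, HasDerivWithinAt F ((Complex.I * lam * f 1 x) * F x) (Icc c d) x := by
    intro x hx
    have h1 : HasDerivWithinAt (fun y : ℝ => Complex.I * lam * f 0 y)
        (Complex.I * lam * f 1 x) (Icc c d) x :=
      (hasDerivWithinAt_ofReal (hd1 x hx)).const_mul (Complex.I * lam)
    simpa [hF_def, mul_comm] using h1.cexp
  have hgd : ∀ x ∈ Icc c d, HasDerivWithinAt g (g' x) (Icc c d) x := by
    intro x hx
    have h1 : HasDerivWithinAt (fun y : ℝ => Complex.I * lam * f 1 y)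
        (Complex.I * lam * f 2 x) (Icc c d) x :=
      (hasDerivWithinAt_ofReal (hd2 x hx)).const_mul (Complex.I * lam)
    have h2 := (hasDerivAt_inv (hzne x hx)).comp_hasDerivWithinAt x h1
    have h3 : HasDerivWithinAt (fun y : ℝ => (Complex.I * lam * f 1 y)⁻¹)
        (-((Complex.I * lam * f 1 x) ^ 2)⁻¹ * (Complex.I * lam * f 2 x)) (Icc c d) x := h2
    convert h3 using 1
    simp only [hg'_def]
    ring
  have hgFd : ∀ x ∈ Icc c d, HasDerivWithinAt (fun y => g y * F y)
      (g' x * F x + g x * ((Complex.I * lam * f 1 x) * F x)) (Icc c d) x :=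
    fun x hx => (hgd x hx).mul (hFd x hx)
  have hkey : ∀ x ∈ Icc c d, F x
      = (g' x * F x + g x * ((Complex.I * lam * f 1 x) * F x)) - g' x * F x := by
    intro x hx
    have : g x * (Complex.I * lam * f 1 x) = 1 := inv_mul_cancel₀ (hzne x hx)
    rw [← mul_assoc, this]
    ring
  have hFnorm : ∀ x : ℝ, ‖F x‖ = 1 := fun x => norm_exp_eq_one lam (f 0 x)
  -- continuity facts
  have hcF : ContinuousOn F (Icc c d) := fun x hx => (hFd x hx).continuousWithinAt
  have hcg : ContinuousOn g (Icc c d) := fun x hx => (hgd x hx).continuousWithinAt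
  have hcg' : ContinuousOn g' (Icc c d) := by
    apply ContinuousOn.div
    · exact (continuousOn_const.mul (Complex.continuous_ofReal.comp_continuousOn hc2)).neg
    · exact (continuousOn_const.mul (Complex.continuous_ofReal.comp_continuousOn hc1)).pow 2
    · intro x hx; exact pow_ne_zero 2 (hzne x hx)
  have hintF : IntervalIntegrable F volume c d :=
    (hcF.mono (by rw [uIcc_of_le hcd])).intervalIntegrable
  have hintg'F : IntervalIntegrable (fun x => g' x * F x) volume c d :=
    ((hcg'.mul hcF).mono (by rw [uIcc_of_le hcd])).intervalIntegrable
  have hintgF' : IntervalIntegrable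
      (fun x => g' x * F x + g x * ((Complex.I * lam * f 1 x) * F x)) volume c d := by
    apply IntervalIntegrable.add hintg'F
    apply ContinuousOn.intervalIntegrable
    apply ContinuousOn.mono _ (by rw [uIcc_of_le hcd] : uIcc c d ⊆ Icc c d)
    exact hcg.mul ((continuousOn_const.mul
      (Complex.continuous_ofReal.comp_continuousOn hc1)).mul hcF)
  -- split the integral
  have hsplit : ∫ x in c..d, F x
      = (∫ x in c..d, (g' x * F x + g x * ((Complex.I * lam * f 1 x) * F x)))
        - ∫ x in c..d, g' x * F x := by
    rw [← intervalIntegral.integral_sub hintgF' hintg'F]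
    apply intervalIntegral.integral_congr
    intro x hx
    rw [uIcc_of_le hcd] at hx
    exact hkey x hx
  have hftc : (∫ x in c..d, (g' x * F x + g x * ((Complex.I * lam * f 1 x) * F x)))
      = g d * F d - g c * F c := by
    apply intervalIntegral.integral_eq_sub_of_hasDerivAt_of_le hcd
      (hcg.mul hcF)
    · intro x hx
      exact (hgFd x (Ioo_subset_Icc_self hx)).hasDerivAt (Icc_mem_nhds hx.1 hx.2)
    · exact hintgF'
  -- bound the boundary terms
  have hbdy : ∀ x ∈ Icc c d, ‖g x * F x‖ ≤ 1 / (lam * μ) := by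
    intro x hx
    rw [norm_mul, hFnorm, mul_one]
    exact hgnorm x hx
  -- bound the integral of g' F
  have hg'norm : ∀ x ∈ Icc c d, ‖g' x * F x‖ = 1 / lam * (|f 2 x| / (f 1 x) ^ 2) := by
    intro x hx
    rw [norm_mul, hFnorm, mul_one, hg'_def]
    simp only [norm_div, norm_neg, norm_mul, norm_pow, Complex.norm_I, one_mul,
      Complex.norm_real, Real.norm_eq_abs, abs_of_pos hlam, abs_of_pos (hf1pos x hx)]
    have hlne : lam ≠ 0 := hlam.ne'
    have hf1ne : f 1 x ≠ 0 := (hf1pos x hx).ne'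
    rw [mul_pow]
    field_simp
  have hmain : (∫ x in c..d, |f 2 x| / (f 1 x) ^ 2) ≤ 1 / μ := by
    have hG : ∀ x ∈ Icc c d, HasDerivWithinAt (fun y => -(f 1 y)⁻¹) (f 2 x / (f 1 x) ^ 2)
        (Icc c d) x := by
      intro x hx
      have := ((hd2 x hx).inv (hf1pos x hx).ne').neg
      exact this.congr_deriv (by ring)
    have hintf2 : IntervalIntegrable (fun x => f 2 x / (f 1 x) ^ 2) volume c d := by
      apply ContinuousOn.intervalIntegrable
      apply ContinuousOn.mono _ (by rw [uIcc_of_le hcd] : uIcc c d ⊆ Icc c d)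
      exact hc2.div (hc1.pow 2) (fun x hx => pow_ne_zero 2 (hf1pos x hx).ne')
    have hftc2 : (∫ x in c..d, f 2 x / (f 1 x) ^ 2) = (f 1 c)⁻¹ - (f 1 d)⁻¹ := by
      have := intervalIntegral.integral_eq_sub_of_hasDerivAt_of_le hcd
        (ContinuousOn.neg (ContinuousOn.inv₀ hc1 (fun x hx => (hf1pos x hx).ne')))
        (fun x hx => (hG x (Ioo_subset_Icc_self hx)).hasDerivAt (Icc_mem_nhds hx.1 hx.2))
        hintf2
      rw [this]; simp only [Pi.neg_apply, Pi.inv_apply]; ring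
    have hinvc : (f 1 c)⁻¹ ≤ 1 / μ := by
      rw [one_div]
      exact inv_anti₀ hμ (hlow c ⟨le_refl c, hcd⟩)
    have hinvd : 0 < (f 1 d)⁻¹ := inv_pos.2 (hf1pos d ⟨hcd, le_refl d⟩)
    have hinvc' : (f 1 d)⁻¹ ≤ 1 / μ := by
      rw [one_div]
      exact inv_anti₀ hμ (hlow d ⟨hcd, le_refl d⟩)
    have hinvcpos : 0 < (f 1 c)⁻¹ := inv_pos.2 (hf1pos c ⟨le_refl c, hcd⟩)
    rcases hsign with hpos | hneg
    · have : (∫ x in c..d, |f 2 x| / (f 1 x) ^ 2) = ∫ x in c..d, f 2 x / (f 1 x) ^ 2 := by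
        apply intervalIntegral.integral_congr
        intro x hx
        rw [uIcc_of_le hcd] at hx
        dsimp only
        rw [_root_.abs_of_nonneg (hpos x hx)]
      rw [this, hftc2]; linarith
    · have : (∫ x in c..d, |f 2 x| / (f 1 x) ^ 2) = ∫ x in c..d, -(f 2 x / (f 1 x) ^ 2) := by
        apply intervalIntegral.integral_congr
        intro x hx
        rw [uIcc_of_le hcd] at hx
        dsimp only
        rw [_root_.abs_of_nonpos (hneg x hx)]
        ring
      rw [this, intervalIntegral.integral_neg, hftc2]; linarith
  have hg'int : ‖∫ x in c..d, g' x * F x‖ ≤ 1 / (lam * μ) := by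
    calc ‖∫ x in c..d, g' x * F x‖ ≤ ∫ x in c..d, ‖g' x * F x‖ :=
          intervalIntegral.norm_integral_le_integral_norm hcd
      _ = ∫ x in c..d, 1 / lam * (|f 2 x| / (f 1 x) ^ 2) := by
          apply intervalIntegral.integral_congr
          intro x hx
          rw [uIcc_of_le hcd] at hx
          exact hg'norm x hx
      _ = (1 / lam) * ∫ x in c..d, |f 2 x| / (f 1 x) ^ 2 :=
          intervalIntegral.integral_const_mul _ _
      _ ≤ (1 / lam) * (1 / μ) := by
          apply mul_le_mul_of_nonneg_left hmain (by positivity)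
      _ = 1 / (lam * μ) := by field_simp
  calc ‖∫ x in c..d, F x‖
      ≤ ‖g d * F d‖ + ‖g c * F c‖ + ‖∫ x in c..d, g' x * F x‖ := by
        rw [hsplit, hftc]
        have h1 := norm_sub_le (g d * F d - g c * F c) (∫ x in c..d, g' x * F x)
        have h2 := norm_sub_le (g d * F d) (g c * F c)
        linarith
    _ ≤ 1 / (lam * μ) + 1 / (lam * μ) + 1 / (lam * μ) := by
        have h1 := hbdy d ⟨hcd, le_refl d⟩
        have h2 := hbdy c ⟨le_refl c, hcd⟩
        linarith
    _ = 3 / (lam * μ) := by ring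

/-- The van der Corput statement at level `n`, with `μ ≤ f n` (positive version). -/
def VSpos (n : ℕ) : Prop :=
  ∀ (f : ℕ → ℝ → ℝ) (c d μ lam : ℝ), 0 < μ → 0 < lam → c ≤ d →
    (∀ j < n, ∀ x ∈ Icc c d, HasDerivWithinAt (f j) (f (j+1) x) (Icc c d) x) →
    (∀ j ≤ n, ContinuousOn (f j) (Icc c d)) →
    (n = 1 → (∀ x ∈ Icc c d, HasDerivWithinAt (f 1) (f 2 x) (Icc c d) x) ∧
      ContinuousOn (f 2) (Icc c d) ∧
      ((∀ x ∈ Icc c d, 0 ≤ f 2 x) ∨ (∀ x ∈ Icc c d, f 2 x ≤ 0))) →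
    (∀ x ∈ Icc c d, μ ≤ f n x) →
    ‖∫ x in c..d, Complex.exp (Complex.I * lam * f 0 x)‖
      ≤ (5 * 2 ^ (n - 1) - 2 : ℝ) * (lam * μ) ^ (-(1 / (n : ℝ)))

/-- The van der Corput statement at level `n`, with `μ ≤ |f n|`. -/
def VSabs (n : ℕ) : Prop :=
  ∀ (f : ℕ → ℝ → ℝ) (c d μ lam : ℝ), 0 < μ → 0 < lam → c ≤ d →
    (∀ j < n, ∀ x ∈ Icc c d, HasDerivWithinAt (f j) (f (j+1) x) (Icc c d) x) →
    (∀ j ≤ n, ContinuousOn (f j) (Icc c d)) →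
    (n = 1 → (∀ x ∈ Icc c d, HasDerivWithinAt (f 1) (f 2 x) (Icc c d) x) ∧
      ContinuousOn (f 2) (Icc c d) ∧
      ((∀ x ∈ Icc c d, 0 ≤ f 2 x) ∨ (∀ x ∈ Icc c d, f 2 x ≤ 0))) →
    (∀ x ∈ Icc c d, μ ≤ |f n x|) →
    ‖∫ x in c..d, Complex.exp (Complex.I * lam * f 0 x)‖
      ≤ (5 * 2 ^ (n - 1) - 2 : ℝ) * (lam * μ) ^ (-(1 / (n : ℝ)))

lemma VSabs_of_VSpos (n : ℕ) (h : VSpos n) : VSabs n := by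
  intro f c d μ lam hμ hlam hcd hderiv hcont hbase hlow
  rcases sign_const hμ hcd (hcont n le_rfl) hlow with hpos | hneg
  · exact h f c d μ lam hμ hlam hcd hderiv hcont hbase hpos
  · have hres := h (fun j x => -(f j x)) c d μ lam hμ hlam hcd
      (fun j hj x hx => (hderiv j hj x hx).neg)
      (fun j hj => (hcont j hj).neg)
      (fun h1 => by
        obtain ⟨hb1, hb2, hb3⟩ := hbase h1
        refine ⟨fun x hx => (hb1 x hx).neg, hb2.neg, ?_⟩
        rcases hb3 with h' | h'
        · exact Or.inr (fun x hx => by simpa using h' x hx)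
        · exact Or.inl (fun x hx => by simpa using h' x hx))
      (fun x hx => by have := hneg x hx; linarith)
    rwa [norm_integral_exp_neg c d lam (f 0)] at hres

lemma VSpos_one : VSpos 1 := by
  intro f c d μ lam hμ hlam hcd hderiv hcont hbase hlow
  obtain ⟨hb1, hb2, hb3⟩ := hbase rfl
  have h := base_case f hμ hlam hcd (hderiv 0 (by norm_num)) hb1 hb2 hlow hb3
  calc ‖∫ x in c..d, Complex.exp (Complex.I * lam * f 0 x)‖ ≤ 3 / (lam * μ) := h
    _ = (5 * 2 ^ (1 - 1) - 2 : ℝ) * (lam * μ) ^ (-(1 / ((1:ℕ) : ℝ))) := by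
        norm_num [Real.rpow_neg_one, div_eq_mul_inv]

lemma VSpos_step (n : ℕ) (hn : 1 ≤ n) (IH : VSpos n) : VSpos (n + 1) := by
  obtain ⟨m, rfl⟩ : ∃ m, n = m + 1 := ⟨n - 1, (Nat.succ_pred_eq_of_pos hn).symm⟩
  set n := m + 1 with hn_def
  intro f c d μ lam hμ hlam hcd hderiv hcont _ hlow
  have habs : VSabs n := VSabs_of_VSpos n IH
  -- basic positivity facts
  have hnR : (1:ℝ) ≤ (n:ℝ) := by exact_mod_cast hn
  have hnR0 : (0:ℝ) < (n:ℝ) := by linarith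
  have hn1R0 : (0:ℝ) < (n:ℝ) + 1 := by linarith
  have hlamμ : 0 < lam * μ := mul_pos hlam hμ
  obtain ⟨e, he_def⟩ : ∃ e : ℝ, e = 1 / ((n:ℝ) + 1) := ⟨_, rfl⟩
  obtain ⟨t, ht_def⟩ : ∃ t : ℝ, t = (lam * μ) ^ (-e) := ⟨_, rfl⟩
  have ht : 0 < t := ht_def ▸ Real.rpow_pos_of_pos hlamμ _
  obtain ⟨ρ, hρ_def⟩ : ∃ r : ℝ, r = μ * t := ⟨_, rfl⟩
  have hρ : 0 < ρ := hρ_def ▸ mul_pos hμ ht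
  have hlamρ : 0 < lam * ρ := mul_pos hlam hρ
  -- the constants
  obtain ⟨R, hR_def⟩ : ∃ R : ℝ, R = 5 * 2 ^ (n - 1) - 2 := ⟨_, rfl⟩
  have h2p : (1:ℝ) ≤ 2 ^ (n - 1) := one_le_pow₀ (by norm_num)
  have hR3 : (3:ℝ) ≤ R := by rw [hR_def]; linarith
  have hR0 : (0:ℝ) ≤ R := by linarith
  -- the key arithmetic identities
  have harith1 : (lam * ρ) ^ (-(1 / (n:ℝ))) = t := by
    have h1 : lam * ρ = (lam * μ) ^ ((1:ℝ) + -e) := by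
      rw [hρ_def, ht_def, Real.rpow_add hlamμ, Real.rpow_one]
      ring
    rw [h1, ← Real.rpow_mul hlamμ.le, ht_def]
    congr 1
    rw [he_def]
    have hne1 : (n:ℝ) ≠ 0 := hnR0.ne'
    have hne2 : (n:ℝ) + 1 ≠ 0 := hn1R0.ne'
    field_simp
    ring
  have harith2 : ρ / μ = t := by rw [hρ_def]; exact mul_div_cancel_left₀ t hμ.ne'
  -- goal exponent form
  have hgoal_exp : -(1 / ((n + 1 : ℕ) : ℝ)) = -e := by rw [he_def]; push_cast; ring
  have hgoal_const : (5 * 2 ^ ((n + 1) - 1) - 2 : ℝ) = 2 * R + 2 := by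
    rw [hR_def]
    have h1 : (n + 1) - 1 = n := by omega
    have h2 : n - 1 = m := by omega
    rw [h1, h2]
    have h3 : (2:ℝ) ^ n = 2 ^ m * 2 := by rw [hn_def, pow_succ]
    rw [h3]
    ring
  rw [hgoal_exp, hgoal_const, ← ht_def]
  -- the monotone function A = f n
  have hAderiv : ∀ x ∈ Icc c d, HasDerivWithinAt (f n) (f (n+1) x) (Icc c d) x :=
    hderiv n (lt_add_one n)
  have hgrow := grow_of_deriv_ge hμ.le hAderiv hlow
  have hAmono : ∀ p ∈ Icc c d, ∀ q ∈ Icc c d, p ≤ q → f n p ≤ f n q := by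
    intro p hp q hq hpq
    have := hgrow p hp q hq hpq
    nlinarith
  have hAcont : ContinuousOn (f n) (Icc c d) := hcont n (Nat.le_succ n)
  -- applying the inductive hypothesis on subintervals
  have apply_sub : ∀ u v : ℝ, c ≤ u → u ≤ v → v ≤ d →
      (∀ x ∈ Icc u v, ρ ≤ |f n x|) →
      ‖∫ x in u..v, Complex.exp (Complex.I * lam * f 0 x)‖ ≤ R * t := by
    intro u v hu huv hv habs'
    have hsub : Icc u v ⊆ Icc c d := Icc_subset_Icc hu hv
    have h := habs f u v ρ lam hρ hlam huv
      (fun j hj x hx => (hderiv j (Nat.lt_succ_of_lt hj) x (hsub hx)).mono hsub)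
      (fun j hj => (hcont j (Nat.le_succ_of_le hj)).mono hsub)
      (fun h1 => by
        have h2 : (2:ℕ) = n + 1 := by omega
        refine ⟨fun x hx => (hderiv 1 (by omega) x (hsub hx)).mono hsub,
          (hcont 2 (by omega)).mono hsub,
          Or.inl (fun x hx => ?_)⟩
        rw [h2]
        exact le_trans hμ.le (hlow x (hsub hx)))
      habs'
    rw [← hR_def] at h
    calc ‖∫ x in u..v, Complex.exp (Complex.I * lam * f 0 x)‖
        ≤ R * (lam * ρ) ^ (-(1 / (n:ℝ))) := h
      _ = R * t := by rw [harith1]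
  -- Case 1 : f n ≥ ρ on the whole interval
  by_cases hc1 : ρ ≤ f n c
  · have hall : ∀ x ∈ Icc c d, ρ ≤ |f n x| := fun x hx =>
      le_trans (le_trans hc1 (hAmono c ⟨le_rfl, hcd⟩ x hx hx.1)) (le_abs_self _)
    have h := apply_sub c d le_rfl hcd le_rfl hall
    have h2 : R * t ≤ (2 * R + 2) * t := by nlinarith
    linarith
  -- Case 2 : f n ≤ -ρ on the whole interval
  by_cases hc2 : f n d ≤ -ρ
  · have hall : ∀ x ∈ Icc c d, ρ ≤ |f n x| := by
      intro x hx
      have h1 : f n x ≤ -ρ := le_trans (hAmono x hx d ⟨hcd, le_rfl⟩ hx.2) hc2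
      calc ρ ≤ -(f n x) := by linarith
        _ ≤ |f n x| := neg_le_abs _
    have h := apply_sub c d le_rfl hcd le_rfl hall
    have h2 : R * t ≤ (2 * R + 2) * t := by nlinarith
    linarith
  push_neg at hc1 hc2
  -- construct the splitting points p and q
  have hpex : ∃ p, p ∈ Icc c d ∧ -ρ ≤ f n p ∧ (p = c ∨ ∀ x ∈ Icc c p, f n x ≤ -ρ)
      ∧ f n p < ρ := by
    by_cases hcneg : -ρ ≤ f n c
    · exact ⟨c, ⟨le_rfl, hcd⟩, hcneg, Or.inl rfl, hc1⟩
    · push_neg at hcneg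
      obtain ⟨p, hp, hfp⟩ := intermediate_value_Icc hcd hAcont
        (show -ρ ∈ Icc (f n c) (f n d) from ⟨hcneg.le, hc2.le⟩)
      refine ⟨p, hp, hfp.ge, Or.inr ?_, by rw [hfp]; linarith⟩
      intro x hx
      have hx' : x ∈ Icc c d := ⟨hx.1, le_trans hx.2 hp.2⟩
      calc f n x ≤ f n p := hAmono x hx' p hp hx.2
        _ = -ρ := hfp
  have hqex : ∃ q, q ∈ Icc c d ∧ f n q ≤ ρ ∧ (q = d ∨ ∀ x ∈ Icc q d, ρ ≤ f n x)
      ∧ -ρ < f n q := by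
    by_cases hdpos : f n d ≤ ρ
    · exact ⟨d, ⟨hcd, le_rfl⟩, hdpos, Or.inl rfl, hc2⟩
    · push_neg at hdpos
      obtain ⟨q, hq, hfq⟩ := intermediate_value_Icc hcd hAcont
        (show ρ ∈ Icc (f n c) (f n d) from ⟨hc1.le, hdpos.le⟩)
      refine ⟨q, hq, hfq.le, Or.inr ?_, by rw [hfq]; linarith⟩
      intro x hx
      have hx' : x ∈ Icc c d := ⟨le_trans hq.1 hx.1, hx.2⟩
      calc ρ = f n q := hfq.symm
        _ ≤ f n x := hAmono q hq x hx' hx.1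
  obtain ⟨p, hp, hp2, hp3, hp4⟩ := hpex
  obtain ⟨q, hq, hq2, hq3, hq4⟩ := hqex
  have hpq : p ≤ q := by
    rcases hq3 with rfl | hq3'
    · exact hp.2
    · by_contra hcon
      push_neg at hcon
      have := hq3' p ⟨hcon.le, hp.2⟩
      linarith
  have hlen : q - p ≤ 2 * ρ / μ := by
    rw [le_div_iff₀ hμ]
    have h1 := hgrow p hp q hq hpq
    nlinarith
  -- integrability
  have hFc : ContinuousOn (fun x : ℝ => Complex.exp (Complex.I * lam * f 0 x)) (Icc c d) :=
    Complex.continuous_exp.comp_continuousOn (continuousOn_const.mul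
      (Complex.continuous_ofReal.comp_continuousOn (hcont 0 (Nat.zero_le _))))
  have hint : ∀ u v : ℝ, c ≤ u → v ≤ d → u ≤ v →
      IntervalIntegrable (fun x : ℝ => Complex.exp (Complex.I * lam * f 0 x)) volume u v := by
    intro u v hu hv huv
    apply ContinuousOn.intervalIntegrable
    apply hFc.mono
    rw [uIcc_of_le huv]
    exact Icc_subset_Icc hu hv
  -- split the integral
  have hsplit : (∫ x in c..d, Complex.exp (Complex.I * lam * f 0 x))
      = (∫ x in c..p, Complex.exp (Complex.I * lam * f 0 x))
        + (∫ x in p..q, Complex.exp (Complex.I * lam * f 0 x))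
        + (∫ x in q..d, Complex.exp (Complex.I * lam * f 0 x)) := by
    rw [intervalIntegral.integral_add_adjacent_intervals (hint c p le_rfl hp.2 hp.1)
      (hint p q hp.1 hq.2 hpq)]
    rw [intervalIntegral.integral_add_adjacent_intervals (hint c q le_rfl hq.2 (le_trans hp.1 hpq))
      (hint q d hq.1 le_rfl hq.2)]
  -- bound the middle piece
  have hT2 : ‖∫ x in p..q, Complex.exp (Complex.I * lam * f 0 x)‖ ≤ 2 * t := by
    calc ‖∫ x in p..q, Complex.exp (Complex.I * lam * f 0 x)‖ ≤ 1 * |q - p| :=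
          intervalIntegral.norm_integral_le_of_norm_le_const
            (fun x _ => le_of_eq (norm_exp_eq_one lam (f 0 x)))
      _ = q - p := by rw [one_mul, _root_.abs_of_nonneg (by linarith : (0:ℝ) ≤ q - p)]
      _ ≤ 2 * ρ / μ := hlen
      _ = 2 * t := by rw [mul_div_assoc, harith2]
  -- bound the left piece
  have hT1 : ‖∫ x in c..p, Complex.exp (Complex.I * lam * f 0 x)‖ ≤ R * t := by
    rcases hp3 with rfl | hneg'
    · rw [intervalIntegral.integral_same, norm_zero]
      exact mul_nonneg hR0 ht.le
    · apply apply_sub c p le_rfl hp.1 hp.2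
      intro x hx
      have := hneg' x hx
      calc ρ ≤ -(f n x) := by linarith
        _ ≤ |f n x| := neg_le_abs _
  -- bound the right piece
  have hT3 : ‖∫ x in q..d, Complex.exp (Complex.I * lam * f 0 x)‖ ≤ R * t := by
    rcases hq3 with rfl | hpos'
    · rw [intervalIntegral.integral_same, norm_zero]
      exact mul_nonneg hR0 ht.le
    · apply apply_sub q d hq.1 hq.2 le_rfl
      intro x hx
      exact le_trans (hpos' x hx) (le_abs_self _)
  calc ‖∫ x in c..d, Complex.exp (Complex.I * lam * f 0 x)‖
      ≤ R * t + 2 * t + R * t := by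
        rw [hsplit]
        have h1 := norm_add_le ((∫ x in c..p, Complex.exp (Complex.I * lam * f 0 x))
          + (∫ x in p..q, Complex.exp (Complex.I * lam * f 0 x)))
          (∫ x in q..d, Complex.exp (Complex.I * lam * f 0 x))
        have h2 := norm_add_le (∫ x in c..p, Complex.exp (Complex.I * lam * f 0 x))
          (∫ x in p..q, Complex.exp (Complex.I * lam * f 0 x))
        linarith
    _ = (2 * R + 2) * t := by ring

lemma VSpos_all (n : ℕ) (hn : 1 ≤ n) : VSpos n :=
  Nat.le_induction VSpos_one VSpos_step n hn

lemma VSabs_all (n : ℕ) (hn : 1 ≤ n) : VSabs n := VSabs_of_VSpos n (VSpos_all n hn)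

/-- Van der Corput lemma: if `ψ` is real-valued, `C^k` on `(a,b)` with `k ≥ 2` and
`|ψ^{(k)}| ≥ 1` on `(a,b)`, then for every `λ > 0`,
`|∫_a^b e^{iλψ(x)} dx| ≤ (5·2^{k-1} - 2) λ^{-1/k}`. -/
theorem van_der_corput (k : ℕ) (hk : 2 ≤ k) (a b : ℝ) (hab : a < b) (ψ : ℝ → ℝ)
    (hψ : ContDiffOn ℝ k ψ (Set.Ioo a b))
    (hder : ∀ x ∈ Set.Ioo a b, 1 ≤ |iteratedDerivWithin k ψ (Set.Ioo a b) x|)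
    (lam : ℝ) (hlam : 0 < lam) :
    ‖∫ x in Set.Ioo a b, Complex.exp (Complex.I * lam * ψ x)‖
      ≤ (5 * 2 ^ (k - 1) - 2 : ℝ) * lam ^ (-(1 / (k : ℝ))) := by
  have hs : UniqueDiffOn ℝ (Set.Ioo a b) := isOpen_Ioo.uniqueDiffOn
  -- the bound on closed subintervals
  have hsub : ∀ c d : ℝ, a < c → c ≤ d → d < b →
      ‖∫ x in c..d, Complex.exp (Complex.I * lam * ψ x)‖
        ≤ (5 * 2 ^ (k - 1) - 2 : ℝ) * lam ^ (-(1 / (k : ℝ))) := by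
    intro c d hac hcd hdb
    have hIcc : Set.Icc c d ⊆ Set.Ioo a b := fun x hx =>
      ⟨lt_of_lt_of_le hac hx.1, lt_of_le_of_lt hx.2 hdb⟩
    have h := VSabs_all k (by omega) (fun j => iteratedDerivWithin j ψ (Set.Ioo a b))
      c d 1 lam one_pos hlam hcd
      (by
        intro j hj x hx
        have hdiff : DifferentiableOn ℝ (iteratedDerivWithin j ψ (Set.Ioo a b)) (Set.Ioo a b) :=
          hψ.differentiableOn_iteratedDerivWithin (by exact_mod_cast hj) hs
        have hx' := hIcc hx
        have heq : iteratedDerivWithin (j+1) ψ (Set.Ioo a b) x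
            = derivWithin (iteratedDerivWithin j ψ (Set.Ioo a b)) (Set.Ioo a b) x :=
          congrFun iteratedDerivWithin_succ x
        simp only [heq]
        exact ((hdiff x hx').hasDerivWithinAt).mono hIcc)
      (fun j hj => (hψ.continuousOn_iteratedDerivWithin (by exact_mod_cast hj) hs).mono hIcc)
      (fun h1 => absurd h1 (by omega))
      (fun x hx => hder x (hIcc hx))
    simp only [iteratedDerivWithin_zero, mul_one] at h
    exact h
  -- integrability on the open interval
  have hψc : ContinuousOn ψ (Set.Ioo a b) := hψ.continuousOn
  have hFc : ContinuousOn (fun x : ℝ => Complex.exp (Complex.I * lam * ψ x)) (Set.Ioo a b) :=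
    Complex.continuous_exp.comp_continuousOn (continuousOn_const.mul
      (Complex.continuous_ofReal.comp_continuousOn hψc))
  have hintF : IntegrableOn (fun x : ℝ => Complex.exp (Complex.I * lam * ψ x))
      (Set.Ioo a b) volume := by
    apply Integrable.mono' (g := fun _ : ℝ => (1:ℝ))
    · exact integrableOn_const measure_Ioo_lt_top.ne
    · exact hFc.aestronglyMeasurable measurableSet_Ioo
    · exact Filter.Eventually.of_forall (fun x => le_of_eq (norm_exp_eq_one lam (ψ x)))
  -- the exhausting sequence of intervals
  have hba : 0 < b - a := by linarith
  set cs : ℕ → ℝ := fun j => a + (b - a) / (2 * (j + 2)) with hcs_def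
  set ds : ℕ → ℝ := fun j => b - (b - a) / (2 * (j + 2)) with hds_def
  have heps : ∀ j : ℕ, 0 < (b - a) / (2 * ((j:ℝ) + 2)) := fun j => by positivity
  have hcs_lt : ∀ j, a < cs j := fun j => by
    simp only [hcs_def]; have := heps j; linarith
  have hds_lt : ∀ j, ds j < b := fun j => by
    simp only [hds_def]; have := heps j; linarith
  have hcsds : ∀ j, cs j ≤ ds j := by
    intro j
    simp only [hcs_def, hds_def]
    have h1 : (b - a) / (2 * ((j:ℝ) + 2)) ≤ (b - a) / 4 := by
      apply div_le_div_of_nonneg_left hba.le (by norm_num)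
      have : (0:ℝ) ≤ (j:ℝ) := Nat.cast_nonneg j
      linarith
    linarith
  have hmono : Monotone (fun j => Set.Ioo (cs j) (ds j)) := by
    intro i j hij
    have hij' : (i:ℝ) ≤ (j:ℝ) := Nat.cast_le.2 hij
    have h1 : (b - a) / (2 * ((j:ℝ) + 2)) ≤ (b - a) / (2 * ((i:ℝ) + 2)) := by
      apply div_le_div_of_nonneg_left hba.le (by positivity)
      linarith
    apply Set.Ioo_subset_Ioo
    · simp only [hcs_def]; linarith
    · simp only [hds_def]; linarith
  have hunion : (⋃ j, Set.Ioo (cs j) (ds j)) = Set.Ioo a b := by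
    apply Set.Subset.antisymm
    · exact Set.iUnion_subset (fun j => Set.Ioo_subset_Ioo (hcs_lt j).le (hds_lt j).le)
    · intro x hx
      have hδ : 0 < min (x - a) (b - x) := lt_min (by linarith [hx.1]) (by linarith [hx.2])
      obtain ⟨j, hj⟩ := exists_nat_gt ((b - a) / (2 * min (x - a) (b - x)))
      refine Set.mem_iUnion.2 ⟨j, ?_, ?_⟩
      · have h1 : (b - a) / (2 * ((j:ℝ) + 2)) < min (x - a) (b - x) := by
          rw [div_lt_iff₀ (by positivity)]
          rw [div_lt_iff₀ (by positivity)] at hj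
          nlinarith [min_le_left (x - a) (b - x), min_le_right (x - a) (b - x), hδ]
        simp only [hcs_def]
        have := min_le_left (x - a) (b - x)
        linarith
      · have h1 : (b - a) / (2 * ((j:ℝ) + 2)) < min (x - a) (b - x) := by
          rw [div_lt_iff₀ (by positivity)]
          rw [div_lt_iff₀ (by positivity)] at hj
          nlinarith [min_le_left (x - a) (b - x), min_le_right (x - a) (b - x), hδ]
        simp only [hds_def]
        have := min_le_right (x - a) (b - x)
        linarith
  -- pass to the limit
  have htend := MeasureTheory.tendsto_setIntegral_of_monotone
    (s := fun j => Set.Ioo (cs j) (ds j))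
    (f := fun x : ℝ => Complex.exp (Complex.I * lam * ψ x))
    (fun j => measurableSet_Ioo) hmono (by rwa [hunion])
  rw [hunion] at htend
  apply le_of_tendsto htend.norm
  apply Filter.Eventually.of_forall
  intro j
  have heq : (∫ x in Set.Ioo (cs j) (ds j), Complex.exp (Complex.I * lam * ψ x))
      = ∫ x in (cs j)..(ds j), Complex.exp (Complex.I * lam * ψ x) := by
    rw [intervalIntegral.integral_of_le (hcsds j), MeasureTheory.integral_Ioc_eq_integral_Ioo]
  rw [heq]
  exact hsub (cs j) (ds j) (hcs_lt j) (hcsds j) (hds_lt j)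
end
end

section
/- Let k ≥ 2 be an integer, c > 0, and suppose ψ is real-valued and of class C^k on (a, b), with |ψ^{(k)}(x)| ≥ c for all x ∈ (a, b). Then for every real λ ≠ 0 one has |∫_a^b e^{i λ ψ(x)} dx| ≤ (5·2^{k−1} − 2) c^{−1/k} |λ|^{−1/k}. -/
open scoped BigOperators

open MeasureTheory intervalIntegral Set Complex Metric

noncomputable section


lemma norm_exp_I_mul (l t : ℝ) : ‖Complex.exp (Complex.I * l * t)‖ = 1 := by
  rw [Complex.norm_exp]
  have : (Complex.I * l * t).re = 0 := by simp [Complex.mul_re]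
  simp [this]

lemma conj_exp_I_mul (l t : ℝ) :
    (starRingEnd ℂ) (Complex.exp (Complex.I * l * t)) = Complex.exp (Complex.I * l * (-t : ℝ)) := by
  rw [← Complex.exp_conj]
  congr 1
  simp [map_mul]

lemma interval_integral_conj {f : ℝ → ℂ} {A B : ℝ} :
    ∫ x in A..B, (starRingEnd ℂ) (f x) = (starRingEnd ℂ) (∫ x in A..B, f x) := by
  rw [intervalIntegral, intervalIntegral, integral_conj, integral_conj, map_sub]

lemma norm_integral_neg_phase (φ : ℝ → ℝ) (l A B : ℝ) :
    ‖∫ x in A..B, Complex.exp (Complex.I * l * (-(φ x) : ℝ))‖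
      = ‖∫ x in A..B, Complex.exp (Complex.I * l * (φ x : ℝ))‖ := by
  have : (fun x => Complex.exp (Complex.I * l * (-(φ x) : ℝ)))
      = fun x => (starRingEnd ℂ) (Complex.exp (Complex.I * l * (φ x : ℝ))) := by
    funext x; rw [conj_exp_I_mul]
  rw [this, interval_integral_conj, RCLike.norm_conj]

lemma exp_phase_continuous {φ : ℝ → ℝ} (hφ : Continuous φ) (l : ℝ) :
    Continuous fun x => Complex.exp (Complex.I * l * (φ x : ℝ)) := by
  fun_prop

lemma norm_integral_exp_le {φ : ℝ → ℝ} {A B : ℝ} (hAB : A ≤ B) (l : ℝ) :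
    ‖∫ x in A..B, Complex.exp (Complex.I * l * (φ x : ℝ))‖ ≤ B - A := by
  have := intervalIntegral.norm_integral_le_of_norm_le_const
    (C := 1) (a := A) (b := B) (f := fun x => Complex.exp (Complex.I * l * (φ x : ℝ)))
    (fun x _ => le_of_eq (norm_exp_I_mul l (φ x)))
  simpa [_root_.abs_of_nonneg (sub_nonneg.2 hAB)] using this

lemma vdc_base {φ : ℝ → ℝ} (hφ : ContDiff ℝ 2 φ) {A B c l : ℝ} (hAB : A ≤ B)
    (hc : 0 < c) (hl : 0 < l)
    (h1 : ∀ x ∈ Icc A B, c ≤ deriv φ x)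
    (hsign : (∀ x ∈ Icc A B, 0 ≤ deriv (deriv φ) x) ∨ (∀ x ∈ Icc A B, deriv (deriv φ) x ≤ 0)) :
    ‖∫ x in A..B, Complex.exp (Complex.I * l * (φ x : ℝ))‖ ≤ 3 / (c * l) := by
  have h2 : ContDiff ℝ (1 + 1) φ := by norm_num [hφ]
  have hd1 : Differentiable ℝ φ := hφ.differentiable (by norm_num)
  have hCd : ContDiff ℝ 1 (deriv φ) := (contDiff_succ_iff_deriv.mp h2).2.2
  have hd2 : Differentiable ℝ (deriv φ) := hCd.differentiable one_ne_zero
  have hc2 : Continuous (deriv (deriv φ)) := hCd.continuous_deriv le_rfl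
  have hc1 : Continuous (deriv φ) := hd2.continuous
  have hc0 : Continuous φ := hd1.continuous
  set d1 : ℝ → ℝ := deriv φ with hd1def
  set d2 : ℝ → ℝ := deriv (deriv φ) with hd2def
  set E : ℝ → ℂ := fun x => Complex.exp (Complex.I * l * (φ x : ℝ)) with hE
  set D : ℝ → ℂ := fun x => Complex.I * l * ((d1 x : ℝ) : ℂ) with hD
  set G : ℝ → ℂ := fun x => E x * ((d2 x : ℝ) : ℂ) / (Complex.I * l * ((d1 x : ℝ) : ℂ)^2)
    with hG
  have hlc : (l : ℂ) ≠ 0 := by exact_mod_cast hl.ne'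
  have hDne : ∀ x ∈ Icc A B, D x ≠ 0 := by
    intro x hx
    have : ((d1 x : ℝ) : ℂ) ≠ 0 := by exact_mod_cast (hc.trans_le (h1 x hx)).ne'
    simp [hD, Complex.I_ne_zero, hlc, this]
  have hEderiv : ∀ x, HasDerivAt E (D x * E x) x := by
    intro x
    have hre : HasDerivAt (fun y => ((φ y : ℝ) : ℂ)) ((d1 x : ℝ) : ℂ) x :=
      HasDerivAt.ofReal_comp (hd1 x).hasDerivAt
    have hphase : HasDerivAt (fun y => Complex.I * l * ((φ y : ℝ) : ℂ))
        (Complex.I * l * ((d1 x : ℝ) : ℂ)) x := hre.const_mul (Complex.I * l)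
    have := hphase.cexp
    simpa [hE, hD, mul_comm] using this
  have hDderiv : ∀ x, HasDerivAt D (Complex.I * l * ((d2 x : ℝ) : ℂ)) x := by
    intro x
    exact (HasDerivAt.ofReal_comp (hd2 x).hasDerivAt).const_mul (Complex.I * l)
  set F : ℝ → ℂ := fun x => E x / D x with hF
  have hFderiv : ∀ x ∈ Icc A B, HasDerivAt F (E x - G x) x := by
    intro x hx
    have h := (hEderiv x).div (hDderiv x) (hDne x hx)
    have hne : ((d1 x : ℝ) : ℂ) ≠ 0 := by exact_mod_cast (hc.trans_le (h1 x hx)).ne'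
    have heq : (D x * E x * D x - E x * (Complex.I * ↑l * ((d2 x : ℝ) : ℂ))) / D x ^ 2
        = E x - G x := by
      simp only [hD, hG]
      field_simp
    rwa [heq] at h
  have hEcont : Continuous E := by
    apply Complex.continuous_exp.comp
    fun_prop
  have hnormE : ∀ x, ‖E x‖ = 1 := by
    intro x
    rw [hE]
    simp only []
    rw [Complex.norm_exp]
    have : (Complex.I * l * (φ x : ℂ)).re = 0 := by simp [Complex.mul_re]
    simp [this]
  have hEint : IntervalIntegrable E volume A B := hEcont.intervalIntegrable A B
  have hd1ne : ∀ x ∈ Icc A B, d1 x ≠ 0 := fun x hx => (hc.trans_le (h1 x hx)).ne'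
  have hGcont : ContinuousOn G (uIcc A B) := by
    rw [uIcc_of_le hAB]
    apply ContinuousOn.div
    · exact hEcont.continuousOn.mul (Complex.continuous_ofReal.comp hc2).continuousOn
    · fun_prop
    · intro x hx
      have : ((d1 x : ℝ) : ℂ) ≠ 0 := by exact_mod_cast hd1ne x hx
      simp [Complex.I_ne_zero, hlc, this]
  have hGint : IntervalIntegrable G volume A B := hGcont.intervalIntegrable
  have hFTC : ∫ x in A..B, (E x - G x) = F B - F A := by
    apply intervalIntegral.integral_eq_sub_of_hasDerivAt
    · intro x hx
      rw [uIcc_of_le hAB] at hx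
      exact hFderiv x hx
    · exact hEint.sub hGint
  have key : ∫ x in A..B, E x = (F B - F A) + ∫ x in A..B, G x := by
    rw [← hFTC, intervalIntegral.integral_sub hEint hGint]
    ring
  have hFbound : ∀ x ∈ Icc A B, ‖F x‖ ≤ 1 / (c * l) := by
    intro x hx
    have hd1x : c ≤ d1 x := h1 x hx
    have hd1pos : 0 < d1 x := hc.trans_le hd1x
    have hnD : ‖D x‖ = l * d1 x := by
      rw [hD]
      simp only []
      rw [norm_mul, norm_mul, Complex.norm_I]
      rw [Complex.norm_real, Complex.norm_real]
      simp [abs_of_pos hl, abs_of_pos hd1pos]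
    have : ‖F x‖ = 1 / (l * d1 x) := by
      rw [hF]
      simp only []
      rw [norm_div, hnormE, hnD]
    rw [this]
    rw [div_le_div_iff₀ (by positivity) (by positivity)]
    have : c * l ≤ d1 x * l := by nlinarith
    nlinarith
  -- variation bound
  set r : ℝ → ℝ := fun x => d2 x / (d1 x) ^ 2 with hr
  have hrcont : ContinuousOn r (uIcc A B) := by
    rw [uIcc_of_le hAB]
    apply ContinuousOn.div hc2.continuousOn (by fun_prop)
    intro x hx
    exact pow_ne_zero _ (hd1ne x hx)
  have hrint : IntervalIntegrable r volume A B := hrcont.intervalIntegrable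
  have hrFTC : ∫ x in A..B, r x = (d1 A)⁻¹ - (d1 B)⁻¹ := by
    have hft : ∫ x in A..B, r x = (fun y => -(d1 y)⁻¹) B - (fun y => -(d1 y)⁻¹) A := by
      apply intervalIntegral.integral_eq_sub_of_hasDerivAt
      · intro x hx
        rw [uIcc_of_le hAB] at hx
        have h0 := ((hd2 x).hasDerivAt.inv (hd1ne x hx)).neg
        convert h0 using 1
        · rfl
        rw [hr]
        simp only [neg_div, neg_neg]
        rfl
      · exact hrint
    rw [hft]; ring
  have hIr : |∫ x in A..B, r x| ≤ 1 / c := by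
    rw [hrFTC]
    have hA : A ∈ Icc A B := ⟨le_rfl, hAB⟩
    have hB : B ∈ Icc A B := ⟨hAB, le_rfl⟩
    have h1A := h1 A hA
    have h1B := h1 B hB
    have hA0 : 0 < d1 A := hc.trans_le h1A
    have hB0 : 0 < d1 B := hc.trans_le h1B
    have hiA : (d1 A)⁻¹ ≤ 1 / c := by
      rw [one_div]
      exact inv_anti₀ hc h1A
    have hiB : (d1 B)⁻¹ ≤ 1 / c := by
      rw [one_div]
      exact inv_anti₀ hc h1B
    rw [abs_le]
    constructor <;> nlinarith [inv_nonneg.2 hA0.le, inv_nonneg.2 hB0.le]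
  have hnormG : ∀ x ∈ Icc A B, ‖G x‖ = |d2 x| / (d1 x) ^ 2 / l := by
    intro x hx
    have hd1pos : 0 < d1 x := hc.trans_le (h1 x hx)
    rw [hG]
    simp only []
    rw [norm_div, norm_mul, hnormE, one_mul]
    rw [norm_mul, norm_mul, Complex.norm_I, norm_pow]
    rw [Complex.norm_real, Complex.norm_real, Complex.norm_real]
    simp only [Real.norm_eq_abs]
    rw [abs_of_pos hl, abs_of_pos hd1pos]
    ring
  have hGnormint : ∫ x in A..B, ‖G x‖ ≤ 1 / (c * l) := by
    have hcases : ∫ x in A..B, ‖G x‖ ≤ |∫ x in A..B, r x| / l := by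
      rcases hsign with hs | hs
      · have heq : EqOn (fun x => ‖G x‖) (fun x => r x / l) (uIcc A B) := by
          intro x hx
          rw [uIcc_of_le hAB] at hx
          show ‖G x‖ = r x / l
          rw [hnormG x hx, _root_.abs_of_nonneg (hs x hx)]
        rw [intervalIntegral.integral_congr heq, intervalIntegral.integral_div]
        gcongr
        exact le_abs_self _
      · have heq : EqOn (fun x => ‖G x‖) (fun x => -r x / l) (uIcc A B) := by
          intro x hx
          rw [uIcc_of_le hAB] at hx
          show ‖G x‖ = -r x / l
          rw [hnormG x hx, _root_.abs_of_nonpos (hs x hx)]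
          rw [hr]
          simp only []
          ring
        rw [intervalIntegral.integral_congr heq]
        have hmv : ∫ x in A..B, -r x / l = -(∫ x in A..B, r x) / l := by
          simp only [neg_div]
          rw [intervalIntegral.integral_neg, intervalIntegral.integral_div]
        rw [hmv]
        gcongr
        exact neg_le_abs _
    calc ∫ x in A..B, ‖G x‖ ≤ |∫ x in A..B, r x| / l := hcases
      _ ≤ (1 / c) / l := by gcongr
      _ = 1 / (c * l) := by rw [div_div]
  have hGbound : ‖∫ x in A..B, G x‖ ≤ 1 / (c * l) := by
    calc ‖∫ x in A..B, G x‖ ≤ ∫ x in A..B, ‖G x‖ :=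
          intervalIntegral.norm_integral_le_integral_norm hAB
      _ ≤ 1 / (c * l) := hGnormint
  rw [key]
  have hA : A ∈ Icc A B := ⟨le_rfl, hAB⟩
  have hB : B ∈ Icc A B := ⟨hAB, le_rfl⟩
  calc ‖F B - F A + ∫ x in A..B, G x‖
      ≤ ‖F B - F A‖ + ‖∫ x in A..B, G x‖ := norm_add_le _ _
    _ ≤ (‖F B‖ + ‖F A‖) + ‖∫ x in A..B, G x‖ := by
        gcongr
        exacts [norm_sub_le _ _]
    _ ≤ (1 / (c * l) + 1 / (c * l)) + 1 / (c * l) :=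
        add_le_add (add_le_add (hFbound B hB) (hFbound A hA)) hGbound
    _ = 3 / (c * l) := by ring
lemma vdc_split {φ : ℝ → ℝ} {m : ℕ} {A B l K δ : ℝ} (hAB : A ≤ B)
    (hl : 0 < l) (hδ : 0 < δ) (hK : 0 ≤ K)
    (hφ : ContDiff ℝ (m + 1 : ℕ) φ)
    (hd : ∀ x ∈ Icc A B, 1 ≤ iteratedDeriv (m + 1) φ x)
    (HB : ∀ A' B', A ≤ A' → A' ≤ B' → B' ≤ B →
      ((∀ x ∈ Icc A' B', δ ≤ iteratedDeriv m φ x) ∨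
        (∀ x ∈ Icc A' B', iteratedDeriv m φ x ≤ -δ)) →
      ‖∫ x in A'..B', Complex.exp (Complex.I * l * (φ x : ℝ))‖ ≤ K) :
    ‖∫ x in A..B, Complex.exp (Complex.I * l * (φ x : ℝ))‖ ≤ 2 * K + 2 * δ := by
  set g : ℝ → ℝ := iteratedDeriv m φ with hg
  have hgdiff : Differentiable ℝ g := by
    apply hφ.differentiable_iteratedDeriv
    exact_mod_cast Nat.lt_succ_self m
  have hgcont : Continuous g := hgdiff.continuous
  have hφcont : Continuous φ := hφ.continuous
  have hEcont : Continuous fun x => Complex.exp (Complex.I * l * (φ x : ℝ)) := by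
    apply Complex.continuous_exp.comp
    fun_prop
  have hEint : ∀ u v : ℝ, IntervalIntegrable
      (fun x => Complex.exp (Complex.I * l * (φ x : ℝ))) volume u v :=
    fun u v => hEcont.intervalIntegrable u v
  have hmono : ∀ x ∈ Icc A B, ∀ y ∈ Icc A B, x ≤ y → 1 * (y - x) ≤ g y - g x := by
    apply Convex.mul_sub_le_image_sub_of_le_deriv (convex_Icc A B) hgcont.continuousOn
      (hgdiff.differentiableOn)
    intro z hz
    rw [interior_Icc] at hz
    have heq : deriv g z = iteratedDeriv (m + 1) φ z := (congrFun iteratedDeriv_succ z).symm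
    rw [heq]
    exact hd z (Ioo_subset_Icc_self hz)
  have hright : ∀ u v, A ≤ u → u ≤ v → v ≤ B → 0 ≤ g u →
      ‖∫ x in u..v, Complex.exp (Complex.I * l * (φ x : ℝ))‖ ≤ δ + K := by
    intro u v hAu huv hvB hgu
    by_cases hcase : v ≤ u + δ
    · have := norm_integral_exp_le (φ := φ) huv l
      linarith
    · push_neg at hcase
      have hsplit : (∫ x in u..(u+δ), Complex.exp (Complex.I * l * (φ x : ℝ)))
          + ∫ x in (u+δ)..v, Complex.exp (Complex.I * l * (φ x : ℝ))
          = ∫ x in u..v, Complex.exp (Complex.I * l * (φ x : ℝ)) :=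
        intervalIntegral.integral_add_adjacent_intervals (hEint _ _) (hEint _ _)
      rw [← hsplit]
      have h1 : ‖∫ x in u..(u+δ), Complex.exp (Complex.I * l * (φ x : ℝ))‖ ≤ δ := by
        have := norm_integral_exp_le (φ := φ) (A := u) (B := u + δ) (by linarith) l
        linarith
      have h2 : ‖∫ x in (u+δ)..v, Complex.exp (Complex.I * l * (φ x : ℝ))‖ ≤ K := by
        apply HB (u+δ) v (by linarith) (by linarith) (by linarith)
        left
        intro x hx
        have hxI : x ∈ Icc A B := ⟨by linarith [hx.1], by linarith [hx.2]⟩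
        have huI : u ∈ Icc A B := ⟨hAu, by linarith⟩
        have := hmono u huI x hxI (by linarith [hx.1])
        have : u + δ ≤ x := hx.1
        linarith [hmono u huI x hxI (by linarith [hx.1])]
      calc ‖_ + _‖ ≤ _ := norm_add_le _ _
        _ ≤ δ + K := add_le_add h1 h2
  have hleft : ∀ u v, A ≤ u → u ≤ v → v ≤ B → g v ≤ 0 →
      ‖∫ x in u..v, Complex.exp (Complex.I * l * (φ x : ℝ))‖ ≤ δ + K := by
    intro u v hAu huv hvB hgv
    by_cases hcase : v ≤ u + δ
    · have := norm_integral_exp_le (φ := φ) huv l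
      linarith
    · push_neg at hcase
      have hsplit : (∫ x in u..(v-δ), Complex.exp (Complex.I * l * (φ x : ℝ)))
          + ∫ x in (v-δ)..v, Complex.exp (Complex.I * l * (φ x : ℝ))
          = ∫ x in u..v, Complex.exp (Complex.I * l * (φ x : ℝ)) :=
        intervalIntegral.integral_add_adjacent_intervals (hEint _ _) (hEint _ _)
      rw [← hsplit]
      have h1 : ‖∫ x in (v-δ)..v, Complex.exp (Complex.I * l * (φ x : ℝ))‖ ≤ δ := by
        have := norm_integral_exp_le (φ := φ) (A := v - δ) (B := v) (by linarith) l
        linarith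
      have h2 : ‖∫ x in u..(v-δ), Complex.exp (Complex.I * l * (φ x : ℝ))‖ ≤ K := by
        apply HB u (v-δ) hAu (by linarith) (by linarith)
        right
        intro x hx
        have hxI : x ∈ Icc A B := ⟨by linarith [hx.1], by linarith [hx.2]⟩
        have hvI : v ∈ Icc A B := ⟨by linarith, hvB⟩
        have hle : x ≤ v := by linarith [hx.2]
        have := hmono x hxI v hvI hle
        have : x ≤ v - δ := hx.2
        linarith [hmono x hxI v hvI hle]
      calc ‖_ + _‖ ≤ _ := norm_add_le _ _
        _ ≤ δ + K := by linarith
  by_cases hA0 : 0 ≤ g A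
  · have := hright A B le_rfl hAB le_rfl hA0
    linarith
  · by_cases hB0 : g B ≤ 0
    · have := hleft A B le_rfl hAB le_rfl hB0
      linarith
    · push_neg at hA0 hB0
      obtain ⟨x₀, hx₀I, hx₀⟩ : ∃ x₀ ∈ Icc A B, g x₀ = 0 := by
        have h0mem : (0 : ℝ) ∈ Icc (g A) (g B) := ⟨hA0.le, hB0.le⟩
        exact intermediate_value_Icc hAB hgcont.continuousOn h0mem
      have hsplit : (∫ x in A..x₀, Complex.exp (Complex.I * l * (φ x : ℝ)))
          + ∫ x in x₀..B, Complex.exp (Complex.I * l * (φ x : ℝ))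
          = ∫ x in A..B, Complex.exp (Complex.I * l * (φ x : ℝ)) :=
        intervalIntegral.integral_add_adjacent_intervals (hEint _ _) (hEint _ _)
      rw [← hsplit]
      have h1 := hleft A x₀ le_rfl hx₀I.1 hx₀I.2 (le_of_eq hx₀)
      have h2 := hright x₀ B hx₀I.1 hx₀I.2 le_rfl (ge_of_eq hx₀)
      calc ‖_ + _‖ ≤ _ := norm_add_le _ _
        _ ≤ 2 * K + 2 * δ := by linarith
lemma iteratedDeriv_const_smul'' {n : ℕ} {f : ℝ → ℝ} (h : ContDiff ℝ (n : ℕ) f) (c x : ℝ) :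
    iteratedDeriv n (c • f) x = c * iteratedDeriv n f x := by
  rw [← iteratedDerivWithin_univ, ← iteratedDerivWithin_univ,
    iteratedDerivWithin_const_smul (Set.mem_univ x) uniqueDiffOn_univ c h.contDiffWithinAt]
  simp

lemma vdc_main : ∀ n : ℕ, 2 ≤ n → ∀ φ : ℝ → ℝ, ContDiff ℝ (n : ℕ) φ → ∀ A B : ℝ, A ≤ B →
    (∀ x ∈ Icc A B, 1 ≤ iteratedDeriv n φ x) → ∀ l : ℝ, 0 < l →
    ‖∫ x in A..B, Complex.exp (Complex.I * l * (φ x : ℝ))‖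
      ≤ (5 * 2 ^ (n - 1) - 2 : ℝ) * l ^ (-(1 / (n : ℝ))) := by
  intro n hn
  induction n, hn using Nat.le_induction with
  | base =>
    intro φ hφ A B hAB hd l hl
    set δ : ℝ := l ^ (-(1 / (2 : ℝ))) with hδdef
    have hδpos : 0 < δ := Real.rpow_pos_of_pos hl _
    have hK : (0 : ℝ) ≤ 3 / (δ * l) := by positivity
    have hφ2 : ContDiff ℝ 2 φ := by exact_mod_cast hφ
    have hsplit := vdc_split (m := 1) hAB hl hδpos hK (by exact_mod_cast hφ)
      (by exact_mod_cast hd) ?_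
    · -- numeric: 2 * (3/(δ*l)) + 2*δ = 8 * l^(-1/2)
      have hδl : δ * l = l ^ ((1 : ℝ) / 2) := by
        rw [hδdef]
        rw [show l ^ (-(1/2) : ℝ) * l = l ^ (-(1/2) : ℝ) * l ^ (1 : ℝ) by rw [Real.rpow_one]]
        rw [← Real.rpow_add hl]
        norm_num
      have h3 : 3 / (δ * l) = 3 * δ := by
        rw [hδl, hδdef, div_eq_iff (by positivity : l ^ ((1:ℝ)/2) ≠ 0), mul_assoc,
          ← Real.rpow_add hl]
        norm_num
      refine le_trans hsplit ?_
      rw [h3]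
      have h8 : (2:ℝ) * (3 * δ) + 2 * δ = 8 * δ := by ring
      rw [h8, hδdef]
      have hc2 : ((2:ℕ):ℝ) = 2 := by norm_num
      rw [hc2]
      norm_num
    · intro A' B' hA' hAB' hB' hor
      have hsub : Icc A' B' ⊆ Icc A B := Icc_subset_Icc hA' hB'
      have hsign : ∀ x ∈ Icc A' B', 0 ≤ deriv (deriv φ) x := by
        intro x hx
        have := hd x (hsub hx)
        have h2 : iteratedDeriv 2 φ x = deriv (deriv φ) x := by
          rw [show (2 : ℕ) = 1 + 1 from rfl, iteratedDeriv_succ, iteratedDeriv_one]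
        rw [h2] at this
        linarith
      rcases hor with hpos | hneg
      · apply vdc_base hφ2 hAB' hδpos hl
        · intro x hx
          have := hpos x hx
          rwa [iteratedDeriv_one] at this
        · left; exact hsign
      · rw [← norm_integral_neg_phase φ l A' B']
        have hφn : ContDiff ℝ 2 (fun x => -(φ x)) := hφ2.neg
        apply vdc_base hφn hAB' hδpos hl
        · intro x hx
          have h1 : deriv (fun y => -(φ y)) x = -(deriv φ x) := deriv.neg
          rw [h1]
          have := hneg x hx
          rw [iteratedDeriv_one] at this
          linarith
        · right
          intro x hx
          have hfun : deriv (fun y => -(φ y)) = fun y => -(deriv φ y) := by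
            funext y; exact deriv.neg
          rw [hfun]
          have h1 : deriv (fun y => -(deriv φ y)) x = -(deriv (deriv φ) x) := deriv.neg
          rw [h1]
          linarith [hsign x hx]
  | succ n hn IH =>
    intro φ hφ A B hAB hd l hl
    have hnpos : (0:ℝ) < n := by positivity
    set δ : ℝ := l ^ (-(1 / ((n : ℝ) + 1))) with hδdef
    have hδpos : 0 < δ := Real.rpow_pos_of_pos hl _
    set K : ℝ := (5 * 2 ^ (n - 1) - 2 : ℝ) * (l * δ) ^ (-(1 / (n : ℝ))) with hKdef
    have h2p : (1:ℝ) ≤ 2 ^ (n-1) := one_le_pow₀ (by norm_num)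
    have hCpos : (0:ℝ) ≤ 5 * 2 ^ (n - 1) - 2 := by nlinarith
    have hK : 0 ≤ K := mul_nonneg hCpos (Real.rpow_pos_of_pos (by positivity) _).le
    have hφ' : ContDiff ℝ (n : ℕ) φ := hφ.of_le (by exact_mod_cast Nat.le_succ n)
    have hδc : (δ : ℂ) ≠ 0 := by exact_mod_cast hδpos.ne'
    have hfun : ∀ x : ℝ, Complex.I * ((l * δ : ℝ) : ℂ) * (((δ⁻¹ * φ x : ℝ) : ℂ))
        = Complex.I * l * ((φ x : ℝ) : ℂ) := by
      intro x
      push_cast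
      field_simp
    have hsplit := vdc_split (m := n) hAB hl hδpos hK (by exact_mod_cast hφ)
      (by exact_mod_cast hd) ?_
    · -- numeric conclusion
      have h1 : l * δ = l ^ (1 - 1 / ((n : ℝ) + 1)) := by
        rw [hδdef, show (1 - 1 / ((n:ℝ)+1)) = 1 + (-(1 / ((n:ℝ)+1))) by ring,
          Real.rpow_add hl, Real.rpow_one]
      have h2 : (l * δ) ^ (-(1 / (n : ℝ))) = l ^ (-(1 / ((n : ℝ) + 1))) := by
        rw [h1, ← Real.rpow_mul hl.le]
        congr 1
        have hne : (n : ℝ) ≠ 0 := hnpos.ne'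
        have hne1 : (n : ℝ) + 1 ≠ 0 := by positivity
        field_simp
        ring
      have hpow : (2:ℝ) ^ ((n+1) - 1) = 2 * 2 ^ (n - 1) := by
        have h' : (n + 1) - 1 = (n - 1) + 1 := by omega
        rw [h', pow_succ]
        ring
      calc ‖∫ x in A..B, Complex.exp (Complex.I * l * (φ x : ℝ))‖
          ≤ 2 * K + 2 * δ := hsplit
        _ = (5 * 2 ^ ((n+1) - 1) - 2 : ℝ) * l ^ (-(1 / ((n:ℝ) + 1))) := by
            rw [hKdef, h2, hδdef, hpow]
            ring
        _ = (5 * 2 ^ ((n+1) - 1) - 2 : ℝ) * l ^ (-(1 / ((n+1 : ℕ) : ℝ))) := by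
            push_cast
            ring_nf
    · intro A' B' hA' hAB' hB' hor
      have hsub : Icc A' B' ⊆ Icc A B := Icc_subset_Icc hA' hB'
      rcases hor with hpos | hneg
      · set ψδ : ℝ → ℝ := δ⁻¹ • φ with hψδ
        have hψ : ContDiff ℝ (n : ℕ) ψδ := hφ'.const_smul δ⁻¹
        have hd' : ∀ x ∈ Icc A' B', 1 ≤ iteratedDeriv n ψδ x := by
          intro x hx
          rw [hψδ, iteratedDeriv_const_smul'' hφ']
          rw [show (1:ℝ) = δ⁻¹ * δ by field_simp]
          exact mul_le_mul_of_nonneg_left (hpos x hx) (by positivity)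
        have hIH := IH ψδ hψ A' B' hAB' hd' (l * δ) (by positivity)
        have hcast : ∀ x : ℝ, Complex.I * ((l * δ : ℝ) : ℂ) * ((ψδ x : ℝ) : ℂ)
            = Complex.I * l * ((φ x : ℝ) : ℂ) := by
          intro x
          show Complex.I * ((l * δ : ℝ) : ℂ) * (((δ⁻¹ * φ x : ℝ)) : ℂ)
              = Complex.I * l * ((φ x : ℝ) : ℂ)
          exact hfun x
        simp only [hcast] at hIH
        exact hIH
      · set ψδ : ℝ → ℝ := fun x => δ⁻¹ * (-(φ x)) with hψδ
        have hnegφ : ContDiff ℝ (n : ℕ) (fun x => -(φ x)) := hφ'.neg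
        have hψ : ContDiff ℝ (n : ℕ) ψδ := hnegφ.const_smul δ⁻¹
        have hd' : ∀ x ∈ Icc A' B', 1 ≤ iteratedDeriv n ψδ x := by
          intro x hx
          have : iteratedDeriv n ψδ x = δ⁻¹ * iteratedDeriv n (fun y => -(φ y)) x :=
            iteratedDeriv_const_smul'' hnegφ δ⁻¹ x
          rw [this, iteratedDeriv_fun_neg]
          rw [show (1:ℝ) = δ⁻¹ * δ by field_simp]
          apply mul_le_mul_of_nonneg_left _ (by positivity : (0:ℝ) ≤ δ⁻¹)
          linarith [hneg x hx]
        have hIH := IH ψδ hψ A' B' hAB' hd' (l * δ) (by positivity)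
        have hcast : ∀ x : ℝ, Complex.I * ((l * δ : ℝ) : ℂ) * ((ψδ x : ℝ) : ℂ)
            = Complex.I * ((l * δ : ℝ) : ℂ) * ((-(δ⁻¹ * φ x) : ℝ) : ℂ) := by
          intro x
          show Complex.I * ((l * δ : ℝ) : ℂ) * ((δ⁻¹ * (-(φ x)) : ℝ) : ℂ) = _
          push_cast
          ring
        simp only [hcast] at hIH
        rw [norm_integral_neg_phase (fun x => δ⁻¹ * φ x) (l*δ) A' B'] at hIH
        have hcast2 : ∀ x : ℝ, Complex.I * ((l * δ : ℝ) : ℂ) * ((δ⁻¹ * φ x : ℝ) : ℂ)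
            = Complex.I * l * ((φ x : ℝ) : ℂ) := fun x => hfun x
        simp only [hcast2] at hIH
        exact hIH
lemma iteratedDerivWithin_isOpen' {n : ℕ} {f : ℝ → ℝ} {s : Set ℝ} (hs : IsOpen s) {x : ℝ}
    (hx : x ∈ s) : iteratedDerivWithin n f s x = iteratedDeriv n f x := by
  simp only [iteratedDerivWithin, iteratedDeriv]
  congr 1
  rw [← Set.univ_inter s, iteratedFDerivWithin_inter_open hs hx, iteratedFDerivWithin_univ]

lemma vdc_closed_sub (k : ℕ) (hk : 2 ≤ k) (a b u v : ℝ) (hau : a < u) (huv : u ≤ v)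
    (hvb : v < b) (φ : ℝ → ℝ) (hφ : ContDiffOn ℝ k φ (Set.Ioo a b))
    (hder : ∀ x ∈ Set.Ioo a b, 1 ≤ iteratedDerivWithin k φ (Set.Ioo a b) x)
    (m : ℝ) (hm : 0 < m) :
    ‖∫ x in u..v, Complex.exp (Complex.I * m * (φ x : ℝ))‖
      ≤ (5 * 2 ^ (k - 1) - 2 : ℝ) * m ^ (-(1 / (k : ℝ))) := by
  set c₀ : ℝ := (u + v) / 2 with hc₀
  set R : ℝ := (v - u) / 2 with hR
  set e : ℝ := min (u - a) (b - v) with he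
  have hepos : 0 < e := lt_min (by linarith) (by linarith)
  have hRpos : 0 ≤ R := by rw [hR]; linarith
  set χ : ContDiffBump c₀ := ⟨R + e / 4, R + e / 2, by positivity, by linarith⟩ with hχ
  have hball_sub : closedBall c₀ (R + e / 2) ⊆ Set.Ioo a b := by
    intro x hx
    rw [Metric.mem_closedBall, Real.dist_eq, abs_le] at hx
    obtain ⟨h2, h3⟩ := hx
    have hRv : R = (v - u) / 2 := hR
    have hcv : c₀ = (u + v) / 2 := hc₀
    have h1 : e ≤ u - a := min_le_left _ _
    have h1' : e ≤ b - v := min_le_right _ _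
    constructor <;> linarith
  have hIcc_ball : Icc u v ⊆ ball c₀ (R + e / 4) := by
    intro x hx
    rw [Metric.mem_ball, Real.dist_eq, abs_lt]
    have hRv : R = (v - u) / 2 := hR
    have hcv : c₀ = (u + v) / 2 := hc₀
    constructor <;> [nlinarith [hx.1, hx.2, hepos]; nlinarith [hx.1, hx.2, hepos]]
  have hball_in : ball c₀ (R + e / 4) ⊆ Set.Ioo a b := by
    intro x hx
    apply hball_sub
    rw [Metric.mem_ball] at hx
    rw [Metric.mem_closedBall]
    linarith [hx.le, hepos]
  set g : ℝ → ℝ := fun x => χ x * φ x with hg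
  have hgφ : ∀ x ∈ ball c₀ (R + e / 4), g x = φ x := by
    intro x hx
    have h1 : χ x = 1 := χ.one_of_mem_closedBall
      (by rw [Metric.mem_ball] at hx; rw [Metric.mem_closedBall]; exact hx.le)
    rw [hg]; simp [h1]
  have hgsmooth : ContDiff ℝ (k : ℕ) g := by
    rw [contDiff_iff_contDiffAt]
    intro x
    by_cases hx : x ∈ Set.Ioo a b
    · have hχk : ContDiff ℝ (k : ℕ) (χ : ℝ → ℝ) := by
        exact_mod_cast χ.contDiff (n := (k : ℕ∞))
      exact hχk.contDiffAt.mul (hφ.contDiffAt (isOpen_Ioo.mem_nhds hx))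
    · have hxns : x ∉ tsupport (χ : ℝ → ℝ) := by
        intro hmem
        rw [χ.tsupport_eq] at hmem
        exact hx (hball_sub hmem)
      have hopen : IsOpen (tsupport (χ : ℝ → ℝ))ᶜ := (isClosed_tsupport _).isOpen_compl
      have hev : g =ᶠ[nhds x] (fun _ => (0 : ℝ)) := by
        filter_upwards [hopen.mem_nhds hxns] with y hy
        have : χ y = 0 := image_eq_zero_of_notMem_tsupport hy
        rw [hg]; simp [this]
      exact (contDiffAt_const (c := (0:ℝ))).congr_of_eventuallyEq hev
  have hgder : ∀ x ∈ Icc u v, 1 ≤ iteratedDeriv k g x := by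
    intro x hx
    have hxball : x ∈ ball c₀ (R + e / 4) := hIcc_ball hx
    have hxIoo : x ∈ Set.Ioo a b := hball_in hxball
    have h1 : iteratedDeriv k g x = iteratedDerivWithin k g (ball c₀ (R + e / 4)) x :=
      (iteratedDerivWithin_isOpen' isOpen_ball hxball).symm
    have h2 : iteratedDerivWithin k g (ball c₀ (R + e / 4)) x
        = iteratedDerivWithin k φ (ball c₀ (R + e / 4)) x :=
      iteratedDerivWithin_congr hgφ hxball
    have h3 : iteratedDerivWithin k φ (ball c₀ (R + e / 4)) x
        = iteratedDerivWithin k φ (Set.Ioo a b) x := by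
      simp only [iteratedDerivWithin]
      congr 1
      rw [← inter_eq_self_of_subset_right hball_in]
      exact iteratedFDerivWithin_inter_open isOpen_ball hxball
    rw [h1, h2, h3]
    exact hder x hxIoo
  have hint : (∫ x in u..v, Complex.exp (Complex.I * m * (φ x : ℝ)))
      = ∫ x in u..v, Complex.exp (Complex.I * m * (g x : ℝ)) := by
    apply intervalIntegral.integral_congr
    intro x hx
    rw [uIcc_of_le huv] at hx
    show Complex.exp (Complex.I * m * (φ x : ℝ)) = Complex.exp (Complex.I * m * (g x : ℝ))
    rw [hgφ x (hIcc_ball hx)]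
  rw [hint]
  exact vdc_main k hk g hgsmooth u v huv hgder m hm

lemma exp_integrableOn {φ : ℝ → ℝ} {a b : ℝ} (hφ : ContinuousOn φ (Set.Ioo a b)) (m : ℝ) :
    IntegrableOn (fun x => Complex.exp (Complex.I * m * (φ x : ℝ))) (Set.Ioo a b) := by
  have hmeas : AEStronglyMeasurable (fun x => Complex.exp (Complex.I * m * (φ x : ℝ)))
      (volume.restrict (Set.Ioo a b)) := by
    apply ContinuousOn.aestronglyMeasurable _ measurableSet_Ioo
    apply Complex.continuous_exp.comp_continuousOn
    exact (continuousOn_const.mul (Complex.continuous_ofReal.comp_continuousOn hφ))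
  apply Integrable.mono' (g := fun _ => (1 : ℝ)) _ hmeas
  · filter_upwards with x
    rw [Complex.norm_exp]
    have : (Complex.I * m * (φ x : ℂ)).re = 0 := by simp [Complex.mul_re]
    simp [this]
  · have : IntegrableOn (fun _ => (1:ℝ)) (Set.Ioo a b) volume :=
      integrableOn_const measure_Ioo_lt_top.ne
    exact this

lemma vdc_open (k : ℕ) (hk : 2 ≤ k) (a b : ℝ) (hab : a < b) (φ : ℝ → ℝ)
    (hφ : ContDiffOn ℝ k φ (Set.Ioo a b))
    (hder : ∀ x ∈ Set.Ioo a b, 1 ≤ iteratedDerivWithin k φ (Set.Ioo a b) x)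
    (m : ℝ) (hm : 0 < m) :
    ‖∫ x in Set.Ioo a b, Complex.exp (Complex.I * m * (φ x : ℝ))‖
      ≤ (5 * 2 ^ (k - 1) - 2 : ℝ) * m ^ (-(1 / (k : ℝ))) := by
  set f : ℝ → ℂ := fun x => Complex.exp (Complex.I * m * (φ x : ℝ)) with hf
  set d : ℝ := b - a with hd
  have hdpos : 0 < d := by rw [hd]; linarith
  set S : ℕ → Set ℝ := fun j => Icc (a + d / (j + 2)) (b - d / (j + 2)) with hS
  have hmono : Monotone S := by
    intro i j hij
    apply Icc_subset_Icc
    · have : d / ((j:ℝ) + 2) ≤ d / ((i:ℝ) + 2) := by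
        apply div_le_div_of_nonneg_left hdpos.le (by positivity)
        exact_mod_cast by omega
      linarith
    · have : d / ((j:ℝ) + 2) ≤ d / ((i:ℝ) + 2) := by
        apply div_le_div_of_nonneg_left hdpos.le (by positivity)
        exact_mod_cast by omega
      linarith
  have hunion : ⋃ j, S j = Set.Ioo a b := by
    apply Subset.antisymm
    · apply iUnion_subset
      intro j x hx
      have hpos : 0 < d / ((j:ℝ) + 2) := by positivity
      exact ⟨by linarith [hx.1], by linarith [hx.2]⟩
    · intro x hx
      set ε : ℝ := min (x - a) (b - x) with hε
      have hεpos : 0 < ε := lt_min (by linarith [hx.1]) (by linarith [hx.2])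
      obtain ⟨j, hj⟩ := exists_nat_ge (d / ε)
      have hle : d / ((j:ℝ) + 2) ≤ ε := by
        rw [div_le_iff₀ (by positivity)]
        have h1 : d / ε ≤ (j:ℝ) + 2 := by linarith
        have h2 : d ≤ ((j:ℝ) + 2) * ε := by
          rw [div_le_iff₀ hεpos] at h1
          linarith
        linarith [mul_comm ((j:ℝ)+2) ε]
      refine mem_iUnion.2 ⟨j, ?_, ?_⟩
      · have : ε ≤ x - a := min_le_left _ _
        linarith
      · have : ε ≤ b - x := min_le_right _ _
        linarith
  have hint : IntegrableOn f (Set.Ioo a b) volume := exp_integrableOn hφ.continuousOn m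
  have htend : Filter.Tendsto (fun j => ∫ x in S j, f x) Filter.atTop
      (nhds (∫ x in Set.Ioo a b, f x)) := by
    have h := MeasureTheory.tendsto_setIntegral_of_monotone (fun j => measurableSet_Icc) hmono
      (by rw [hunion]; exact hint)
    rwa [hunion] at h
  have hbound : ∀ j : ℕ, ‖∫ x in S j, f x‖
      ≤ (5 * 2 ^ (k - 1) - 2 : ℝ) * m ^ (-(1 / (k : ℝ))) := by
    intro j
    have hpos : 0 < d / ((j:ℝ) + 2) := by positivity
    have hhalf : d / ((j:ℝ) + 2) ≤ d / 2 := by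
      apply div_le_div_of_nonneg_left hdpos.le (by positivity)
      exact_mod_cast by omega
    have h1 : a < a + d / ((j:ℝ) + 2) := by linarith
    have h2 : b - d / ((j:ℝ) + 2) < b := by linarith
    have h3 : a + d / ((j:ℝ) + 2) ≤ b - d / ((j:ℝ) + 2) := by
      have : d = b - a := hd
      linarith
    have hvdc := vdc_closed_sub k hk a b _ _ h1 h3 h2 φ hφ hder m hm
    have heq : ∫ x in S j, f x = ∫ x in (a + d/((j:ℝ)+2))..(b - d/((j:ℝ)+2)), f x := by
      rw [intervalIntegral.integral_of_le h3]
      rw [hS]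
      simp only []
      rw [← MeasureTheory.integral_Icc_eq_integral_Ioc]
    rw [heq]
    exact hvdc
  exact le_of_tendsto htend.norm (Filter.Eventually.of_forall hbound)

lemma set_conj_lemma (φ : ℝ → ℝ) (l : ℝ) (s : Set ℝ) :
    ‖∫ x in s, Complex.exp (Complex.I * l * ((-(φ x) : ℝ) : ℂ))‖
      = ‖∫ x in s, Complex.exp (Complex.I * l * ((φ x : ℝ) : ℂ))‖ := by
  have h : ∀ x : ℝ, Complex.exp (Complex.I * l * ((-(φ x) : ℝ) : ℂ))
      = (starRingEnd ℂ) (Complex.exp (Complex.I * l * ((φ x : ℝ) : ℂ))) := by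
    intro x
    rw [← Complex.exp_conj]
    congr 1
    simp [map_mul]
  simp_rw [h]
  rw [integral_conj, RCLike.norm_conj]

lemma set_conj_lemma_lam (φ : ℝ → ℝ) (l : ℝ) (s : Set ℝ) :
    ‖∫ x in s, Complex.exp (Complex.I * ((-l : ℝ) : ℂ) * ((φ x : ℝ) : ℂ))‖
      = ‖∫ x in s, Complex.exp (Complex.I * (l : ℂ) * ((φ x : ℝ) : ℂ))‖ := by
  have h : ∀ x : ℝ, Complex.exp (Complex.I * ((-l : ℝ) : ℂ) * ((φ x : ℝ) : ℂ))
      = (starRingEnd ℂ) (Complex.exp (Complex.I * (l : ℂ) * ((φ x : ℝ) : ℂ))) := by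
    intro x
    rw [← Complex.exp_conj]
    congr 1
    push_cast
    simp [map_mul]
  simp_rw [h]
  rw [integral_conj, RCLike.norm_conj]

/-- Van der Corput lemma with lower bound `c`: if `ψ` is real-valued, `C^k` on `(a,b)` with
`k ≥ 2` and `|ψ^{(k)}| ≥ c > 0` on `(a,b)`, then for every real `λ ≠ 0`,
`|∫_a^b e^{iλψ(x)} dx| ≤ (5·2^{k-1} - 2) c^{-1/k} |λ|^{-1/k}`. -/
theorem van_der_corput_c (k : ℕ) (hk : 2 ≤ k) (c : ℝ) (hc : 0 < c)
    (a b : ℝ) (hab : a < b) (ψ : ℝ → ℝ)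
    (hψ : ContDiffOn ℝ k ψ (Set.Ioo a b))
    (hder : ∀ x ∈ Set.Ioo a b, c ≤ |iteratedDerivWithin k ψ (Set.Ioo a b) x|)
    (lam : ℝ) (hlam : lam ≠ 0) :
    ‖∫ x in Set.Ioo a b, Complex.exp (Complex.I * lam * ψ x)‖
      ≤ (5 * 2 ^ (k - 1) - 2 : ℝ) * c ^ (-(1 / (k : ℝ))) * |lam| ^ (-(1 / (k : ℝ))) := by
  have husd : UniqueDiffOn ℝ (Set.Ioo a b) := isOpen_Ioo.uniqueDiffOn
  have main : ∀ φ : ℝ → ℝ, ContDiffOn ℝ k φ (Set.Ioo a b) →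
      (∀ x ∈ Set.Ioo a b, c ≤ iteratedDerivWithin k φ (Set.Ioo a b) x) →
      ∀ m : ℝ, 0 < m → ‖∫ x in Set.Ioo a b, Complex.exp (Complex.I * m * (φ x : ℝ))‖
        ≤ (5 * 2 ^ (k - 1) - 2 : ℝ) * c ^ (-(1 / (k : ℝ))) * m ^ (-(1 / (k : ℝ))) := by
    intro φ hφ hd m hm
    set φ1 : ℝ → ℝ := c⁻¹ • φ with hφ1def
    have hφ1 : ContDiffOn ℝ k φ1 (Set.Ioo a b) := hφ.const_smul c⁻¹
    have hd1 : ∀ x ∈ Set.Ioo a b, 1 ≤ iteratedDerivWithin k φ1 (Set.Ioo a b) x := by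
      intro x hx
      rw [hφ1def, iteratedDerivWithin_const_smul hx husd c⁻¹ (hφ x hx), smul_eq_mul,
        show (1:ℝ) = c⁻¹ * c by field_simp]
      exact mul_le_mul_of_nonneg_left (hd x hx) (by positivity)
    have h := vdc_open k hk a b hab φ1 hφ1 hd1 (c * m) (by positivity)
    have heq : ∫ x in Set.Ioo a b, Complex.exp (Complex.I * ((c * m : ℝ) : ℂ) * ((φ1 x : ℝ) : ℂ))
        = ∫ x in Set.Ioo a b, Complex.exp (Complex.I * (m : ℂ) * ((φ x : ℝ) : ℂ)) := by
      congr 1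
      funext x
      congr 1
      show Complex.I * ((c * m : ℝ) : ℂ) * ((c⁻¹ * φ x : ℝ) : ℂ) = _
      push_cast
      have hcc : (c : ℂ) ≠ 0 := by exact_mod_cast hc.ne'
      field_simp
    rw [heq] at h
    refine h.trans ?_
    rw [Real.mul_rpow hc.le hm.le, mul_assoc]
  set D := iteratedDerivWithin k ψ (Set.Ioo a b) with hD
  have hcontD : ContinuousOn D (Set.Ioo a b) :=
    hψ.continuousOn_iteratedDerivWithin le_rfl husd
  have habs : ∀ x ∈ Set.Ioo a b, c ≤ D x ∨ D x ≤ -c := by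
    intro x hx
    rcases le_abs.mp (hder x hx) with h | h
    · exact Or.inl h
    · exact Or.inr (by linarith)
  have hsign : (∀ x ∈ Set.Ioo a b, c ≤ D x) ∨ (∀ x ∈ Set.Ioo a b, D x ≤ -c) := by
    have key : ∀ x ∈ Set.Ioo a b, ∀ y ∈ Set.Ioo a b, c ≤ D x → D y ≤ -c → False := by
      intro x hx y hy hcx hcy
      have hsub : uIcc x y ⊆ Set.Ioo a b := (Set.ordConnected_Ioo).uIcc_subset hx hy
      have hcont' : ContinuousOn D (uIcc x y) := hcontD.mono hsub
      have h0 : (0 : ℝ) ∈ uIcc (D x) (D y) :=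
        Set.mem_uIcc.2 (Or.inr ⟨by linarith, by linarith⟩)
      obtain ⟨z, hz, hz0⟩ := intermediate_value_uIcc hcont' h0
      rcases habs z (hsub hz) with h | h <;> rw [hz0] at h <;> linarith
    set x₀ : ℝ := (a + b) / 2 with hx₀def
    have hx₀ : x₀ ∈ Set.Ioo a b := ⟨by rw [hx₀def]; linarith, by rw [hx₀def]; linarith⟩
    rcases habs x₀ hx₀ with h | h
    · left
      intro x hx
      rcases habs x hx with h' | h'
      · exact h'
      · exact (key x₀ hx₀ x hx h h').elim
    · right
      intro x hx
      rcases habs x hx with h' | h'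
      · exact (key x hx x₀ hx₀ h' h).elim
      · exact h'
  have final : ∀ m : ℝ, 0 < m → ‖∫ x in Set.Ioo a b, Complex.exp (Complex.I * m * (ψ x : ℝ))‖
      ≤ (5 * 2 ^ (k - 1) - 2 : ℝ) * c ^ (-(1 / (k : ℝ))) * m ^ (-(1 / (k : ℝ))) := by
    intro m hm
    rcases hsign with hpos | hneg
    · exact main ψ hψ hpos m hm
    · rw [← set_conj_lemma ψ m _]
      refine main (fun x => -(ψ x)) hψ.neg ?_ m hm
      intro x hx
      rw [iteratedDerivWithin_fun_neg]
      have := hneg x hx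
      rw [← hD]
      linarith
  rcases hlam.lt_or_gt with hneg | hpos
  · rw [abs_of_neg hneg]
    have h1 : ‖∫ x in Set.Ioo a b, Complex.exp (Complex.I * (lam : ℂ) * ((ψ x : ℝ) : ℂ))‖
        = ‖∫ x in Set.Ioo a b, Complex.exp (Complex.I * ((-lam : ℝ) : ℂ) * ((ψ x : ℝ) : ℂ))‖ := by
      have h2 := set_conj_lemma_lam ψ (-lam) (Set.Ioo a b)
      simp only [neg_neg] at h2
      rw [h2]
    rw [h1]
    exact final (-lam) (by linarith)
  · rw [abs_of_pos hpos]
    exact final lam hpos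
end
end

section
/- Let k ≥ 2 be an integer, c > 0, and suppose ψ is real-valued and of class C^k on (a, b), with |ψ^{(k)}(x)| ≥ c for all x ∈ (a, b). Let h be of class C¹ on (a, b), continuous on (a, b] with derivative h' integrable on (a, b). Then for every real λ ≠ 0 one has |∫_a^b e^{i λ ψ(x)} h(x) dx| ≤ (5·2^{k−1} − 2) c^{−1/k} [ |h(b)| + ∫_a^b |h'(x)| dx ] |λ|^{−1/k}. -/
open scoped BigOperators

noncomputable section

open Set MeasureTheory intervalIntegral Filter

lemma vdc_norm_exp (r s : ℝ) : ‖Complex.exp (Complex.I * r * s)‖ = 1 := by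
  rw [Complex.norm_exp]
  have : (Complex.I * r * s).re = 0 := by simp
  rw [this, Real.exp_zero]

lemma vdc_sign {f : ℝ → ℝ} {u v : ℝ} (hf : ContinuousOn f (Set.Icc u v))
    (hne : ∀ x ∈ Set.Icc u v, f x ≠ 0) :
    (∀ x ∈ Set.Icc u v, 0 < f x) ∨ (∀ x ∈ Set.Icc u v, f x < 0) := by
  by_contra hcon
  push_neg at hcon
  obtain ⟨⟨x, hx, hfx⟩, ⟨y, hy, hfy⟩⟩ := hcon
  have hfx' : f x < 0 := lt_of_le_of_ne hfx (hne x hx)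
  have hfy' : 0 < f y := lt_of_le_of_ne hfy (Ne.symm (hne y hy))
  have hsub : Set.uIcc x y ⊆ Set.Icc u v := Set.uIcc_subset_Icc hx hy
  have : (0 : ℝ) ∈ Set.uIcc (f x) (f y) := by
    rw [Set.mem_uIcc]; left; exact ⟨hfx'.le, hfy'.le⟩
  have := intermediate_value_uIcc (hf.mono hsub) this
  obtain ⟨z, hz, hz0⟩ := this
  exact hne z (hsub hz) hz0

lemma vdc_gap {f f' : ℝ → ℝ} {u v c : ℝ}
    (hd : ∀ x ∈ Set.Icc u v, HasDerivAt f (f' x) x)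
    (hsign : (∀ x ∈ Set.Icc u v, c ≤ f' x) ∨ (∀ x ∈ Set.Icc u v, f' x ≤ -c)) :
    ∀ x ∈ Set.Icc u v, ∀ y ∈ Set.Icc u v, x ≤ y → c * (y - x) ≤ |f y - f x| := by
  have hmain : ∀ (g g' : ℝ → ℝ), (∀ x ∈ Set.Icc u v, HasDerivAt g (g' x) x) →
      (∀ x ∈ Set.Icc u v, c ≤ g' x) →
      ∀ x ∈ Set.Icc u v, ∀ y ∈ Set.Icc u v, x ≤ y → c * (y - x) ≤ g y - g x := by
    intro g g' hg hge x hx y hy hxy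
    have hconv : Convex ℝ (Set.Icc u v) := convex_Icc u v
    have hcont : ContinuousOn g (Set.Icc u v) := fun z hz => (hg z hz).continuousAt.continuousWithinAt
    have hdiff : DifferentiableOn ℝ g (interior (Set.Icc u v)) := fun z hz =>
      ((hg z (interior_subset hz)).differentiableAt).differentiableWithinAt
    have hge' : ∀ z ∈ interior (Set.Icc u v), c ≤ deriv g z := by
      intro z hz
      rw [(hg z (interior_subset hz)).deriv]
      exact hge z (interior_subset hz)
    exact hconv.mul_sub_le_image_sub_of_le_deriv hcont hdiff hge' x hx y hy hxy
  intro x hx y hy hxy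
  rcases hsign with hpos | hneg
  · have := hmain f f' hd hpos x hx y hy hxy
    exact this.trans (le_abs_self _)
  · have hd' : ∀ z ∈ Set.Icc u v, HasDerivAt (fun w => -f w) (-f' z) z := fun z hz => (hd z hz).neg
    have hge : ∀ z ∈ Set.Icc u v, c ≤ -f' z := fun z hz => by linarith [hneg z hz]
    have := hmain (fun w => -f w) (fun w => -f' w) hd' hge x hx y hy hxy
    have h2 : c * (y - x) ≤ -(f y - f x) := by linarith
    exact h2.trans (neg_le_abs _)

lemma vdc_rpow_key {t : ℝ} (ht : 0 < t) {m : ℕ} (hm : 1 ≤ m) :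
    (t * t ^ (-(1 / ((m : ℝ) + 1)))) ^ (-(1 / (m : ℝ))) = t ^ (-(1 / ((m : ℝ) + 1))) := by
  have hm0 : (m : ℝ) ≠ 0 := Nat.cast_ne_zero.mpr (by omega)
  have hm1 : (m : ℝ) + 1 ≠ 0 := by positivity
  have h1 : t * t ^ (-(1 / ((m : ℝ) + 1))) = t ^ (1 + -(1 / ((m : ℝ) + 1))) := by
    rw [Real.rpow_add ht, Real.rpow_one]
  rw [h1, ← Real.rpow_mul ht.le]
  congr 1
  field_simp
  ring

lemma vdc_base_s7 {lam : ℝ} (hlam : lam ≠ 0) (ψ φ1 φ2 : ℝ → ℝ) {u v : ℝ} (huv : u ≤ v)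
    {c' : ℝ} (hc' : 0 < c')
    (hd0 : ∀ x ∈ Set.Icc u v, HasDerivAt ψ (φ1 x) x)
    (hd1 : ∀ x ∈ Set.Icc u v, HasDerivAt φ1 (φ2 x) x)
    (hc2 : ContinuousOn φ2 (Set.Icc u v))
    (hlow : ∀ x ∈ Set.Icc u v, c' ≤ |φ1 x|)
    (hsign : (∀ x ∈ Set.Icc u v, 0 ≤ φ2 x) ∨ (∀ x ∈ Set.Icc u v, φ2 x ≤ 0)) :
    ‖∫ x in u..v, Complex.exp (Complex.I * lam * ψ x)‖ ≤ 3 * (c' * |lam|)⁻¹ := by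
  set E : ℝ → ℂ := fun x => Complex.exp (Complex.I * lam * ψ x) with hE_def
  have hIcc : Set.uIcc u v = Set.Icc u v := Set.uIcc_of_le huv
  -- basic nonvanishing
  have hφ1ne : ∀ x ∈ Set.Icc u v, φ1 x ≠ 0 := fun x hx => by
    intro h0
    have := hlow x hx
    rw [h0, abs_zero] at this
    linarith
  have hne : ∀ x ∈ Set.Icc u v, (Complex.I * lam * φ1 x) ≠ 0 := by
    intro x hx
    simp only [mul_ne_zero_iff]
    exact ⟨⟨Complex.I_ne_zero, Complex.ofReal_ne_zero.mpr hlam⟩,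
      Complex.ofReal_ne_zero.mpr (hφ1ne x hx)⟩
  set g : ℝ → ℂ := fun x => (Complex.I * lam * φ1 x)⁻¹ with hg_def
  set g' : ℝ → ℂ := fun x => -(Complex.I * lam * φ2 x) / (Complex.I * lam * φ1 x) ^ 2 with hg'_def
  set E' : ℝ → ℂ := fun x => Complex.I * lam * φ1 x * E x with hE'_def
  -- derivatives
  have hinner : ∀ x ∈ Set.Icc u v,
      HasDerivAt (fun y => Complex.I * lam * (ψ y : ℂ)) (Complex.I * lam * φ1 x) x := by
    intro x hx
    exact ((hd0 x hx).ofReal_comp).const_mul (Complex.I * lam)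
  have hE : ∀ x ∈ Set.Icc u v, HasDerivAt E (E' x) x := by
    intro x hx
    have := (hinner x hx).cexp
    simpa [hE_def, hE'_def, mul_comm] using this
  have hinner1 : ∀ x ∈ Set.Icc u v,
      HasDerivAt (fun y => Complex.I * lam * (φ1 y : ℂ)) (Complex.I * lam * φ2 x) x := by
    intro x hx
    exact ((hd1 x hx).ofReal_comp).const_mul (Complex.I * lam)
  have hg : ∀ x ∈ Set.Icc u v, HasDerivAt g (g' x) x := by
    intro x hx
    have hder := (hasDerivAt_inv (hne x hx)).scomp x (hinner1 x hx)
    have heq : (Complex.I * lam * (φ2 x : ℂ)) • (-(((Complex.I * lam * (φ1 x : ℂ)) ^ 2)⁻¹))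
        = g' x := by
      rw [hg'_def]; dsimp only; rw [smul_eq_mul, div_eq_mul_inv]; ring
    rw [← heq]
    exact hder
  -- continuity facts
  have hψcont : ContinuousOn ψ (Set.Icc u v) := fun x hx => (hd0 x hx).continuousAt.continuousWithinAt
  have hφ1cont : ContinuousOn φ1 (Set.Icc u v) := fun x hx => (hd1 x hx).continuousAt.continuousWithinAt
  have hEcont : ContinuousOn E (Set.Icc u v) := by
    apply Complex.continuous_exp.comp_continuousOn
    exact (continuous_const.continuousOn.mul (Complex.continuous_ofReal.comp_continuousOn hψcont))
  have hdenomcont : ContinuousOn (fun x => Complex.I * lam * (φ1 x : ℂ)) (Set.Icc u v) :=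
    continuous_const.continuousOn.mul (Complex.continuous_ofReal.comp_continuousOn hφ1cont)
  have hg'cont : ContinuousOn g' (Set.Icc u v) := by
    apply ContinuousOn.div
    · exact (continuous_const.continuousOn.mul
        (Complex.continuous_ofReal.comp_continuousOn hc2)).neg
    · exact hdenomcont.pow 2
    · intro x hx; exact pow_ne_zero 2 (hne x hx)
  have hE'cont : ContinuousOn E' (Set.Icc u v) := hdenomcont.mul hEcont
  have hg'int : IntervalIntegrable g' MeasureTheory.volume u v := by
    apply ContinuousOn.intervalIntegrable; rwa [hIcc]
  have hE'int : IntervalIntegrable E' MeasureTheory.volume u v := by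
    apply ContinuousOn.intervalIntegrable; rwa [hIcc]
  -- key rewriting
  have hkey : ∀ x ∈ Set.Icc u v, g x * E' x = E x := by
    intro x hx
    simp only [hg_def, hE'_def]
    rw [← mul_assoc, inv_mul_cancel₀ (hne x hx), one_mul]
  have hstep : ∫ x in u..v, E x = ∫ x in u..v, g x * E' x := by
    apply intervalIntegral.integral_congr
    intro x hx; rw [hIcc] at hx; exact (hkey x hx).symm
  -- integration by parts
  have hibp := intervalIntegral.integral_mul_deriv_eq_deriv_mul
    (u := g) (v := E) (u' := g') (v' := E')
    (fun x hx => hg x (hIcc ▸ hx)) (fun x hx => hE x (hIcc ▸ hx)) hg'int hE'int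
  rw [hstep, hibp]
  -- norm bounds
  have hnormg : ∀ x ∈ Set.Icc u v, ‖g x‖ ≤ (c' * |lam|)⁻¹ := by
    intro x hx
    rw [hg_def]
    simp only [norm_inv, norm_mul, Complex.norm_I, Complex.norm_real, Real.norm_eq_abs, one_mul]
    apply inv_anti₀ (by positivity)
    nlinarith [abs_nonneg lam, abs_pos.mpr hlam, hlow x hx, hc']
  have hnormE : ∀ x : ℝ, ‖E x‖ = 1 := fun x => vdc_norm_exp lam (ψ x)
  -- the integral term
  have hgnorm' : ∀ x ∈ Set.Icc u v, ‖g' x * E x‖ = |φ2 x| / ((φ1 x) ^ 2) * |lam|⁻¹ := by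
    intro x hx
    rw [norm_mul, hnormE, mul_one, hg'_def]
    simp only [norm_div, norm_neg, norm_mul, norm_pow, Complex.norm_I,
      Complex.norm_real, Real.norm_eq_abs, one_mul]
    rw [mul_pow, ← sq_abs (φ1 x)]
    have h1 : |lam| ≠ 0 := abs_ne_zero.mpr hlam
    have hp : φ1 x ≠ 0 := hφ1ne x hx
    field_simp
  -- FTC for |φ2| / φ1^2
  have hGder : ∀ x ∈ Set.Icc u v, HasDerivAt (fun y => -(φ1 y)⁻¹) (φ2 x / (φ1 x) ^ 2) x := by
    intro x hx
    have := ((hd1 x hx).fun_inv (hφ1ne x hx)).fun_neg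
    simpa [neg_div] using this
  have hratio_cont : ContinuousOn (fun x => φ2 x / (φ1 x) ^ 2) (Set.Icc u v) := by
    apply ContinuousOn.div hc2 (hφ1cont.pow 2)
    intro x hx; exact pow_ne_zero 2 (hφ1ne x hx)
  have hratio_int : IntervalIntegrable (fun x => φ2 x / (φ1 x) ^ 2) MeasureTheory.volume u v := by
    apply ContinuousOn.intervalIntegrable; rwa [hIcc]
  have hFTC : ∫ x in u..v, φ2 x / (φ1 x) ^ 2 = -(φ1 v)⁻¹ - -(φ1 u)⁻¹ :=
    intervalIntegral.integral_eq_sub_of_hasDerivAt (fun x hx => hGder x (hIcc ▸ hx)) hratio_int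
  -- bound |1/φ1 u - 1/φ1 v| ≤ 1/c'
  have hbound_diff : |(φ1 u)⁻¹ - (φ1 v)⁻¹| ≤ c'⁻¹ := by
    have hu' : u ∈ Set.Icc u v := Set.left_mem_Icc.mpr huv
    have hv' : v ∈ Set.Icc u v := Set.right_mem_Icc.mpr huv
    rcases vdc_sign hφ1cont hφ1ne with hpos | hneg
    · have h1 : 0 < φ1 u := hpos u hu'
      have h2 : 0 < φ1 v := hpos v hv'
      have h3 : c' ≤ φ1 u := by have := hlow u hu'; rwa [abs_of_pos h1] at this
      have h4 : c' ≤ φ1 v := by have := hlow v hv'; rwa [abs_of_pos h2] at this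
      rw [abs_sub_le_iff]
      constructor
      · have : (φ1 u)⁻¹ ≤ c'⁻¹ := by
          apply inv_anti₀ hc' h3
        have h5 : 0 < (φ1 v)⁻¹ := by positivity
        linarith
      · have : (φ1 v)⁻¹ ≤ c'⁻¹ := by
          apply inv_anti₀ hc' h4
        have h5 : 0 < (φ1 u)⁻¹ := by positivity
        linarith
    · have h1 : φ1 u < 0 := hneg u hu'
      have h2 : φ1 v < 0 := hneg v hv'
      have h3 : c' ≤ -φ1 u := by have := hlow u hu'; rwa [abs_of_neg h1] at this
      have h4 : c' ≤ -φ1 v := by have := hlow v hv'; rwa [abs_of_neg h2] at this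
      have h5 : -c'⁻¹ ≤ (φ1 u)⁻¹ := by
        rw [neg_le, ← inv_neg]
        apply inv_anti₀ hc' h3
      have h6 : -c'⁻¹ ≤ (φ1 v)⁻¹ := by
        rw [neg_le, ← inv_neg]
        apply inv_anti₀ hc' h4
      have h7 : (φ1 u)⁻¹ < 0 := inv_lt_zero.mpr h1
      have h8 : (φ1 v)⁻¹ < 0 := inv_lt_zero.mpr h2
      rw [abs_sub_le_iff]
      constructor <;> linarith
  -- integral of |φ2|/φ1^2
  have habs_int : ∫ x in u..v, |φ2 x| / (φ1 x) ^ 2 ≤ c'⁻¹ := by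
    rcases hsign with hpos | hneg
    · have : ∫ x in u..v, |φ2 x| / (φ1 x) ^ 2 = ∫ x in u..v, φ2 x / (φ1 x) ^ 2 := by
        apply intervalIntegral.integral_congr
        intro x hx; rw [hIcc] at hx
        dsimp only
        rw [abs_of_nonneg (hpos x hx)]
      rw [this, hFTC]
      have : -(φ1 v)⁻¹ - -(φ1 u)⁻¹ = (φ1 u)⁻¹ - (φ1 v)⁻¹ := by ring
      rw [this]
      exact (le_abs_self _).trans hbound_diff
    · have : ∫ x in u..v, |φ2 x| / (φ1 x) ^ 2 = ∫ x in u..v, -(φ2 x / (φ1 x) ^ 2) := by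
        apply intervalIntegral.integral_congr
        intro x hx; rw [hIcc] at hx
        dsimp only
        rw [abs_of_nonpos (hneg x hx)]; ring
      rw [this, intervalIntegral.integral_neg, hFTC]
      have heq : -(-(φ1 v)⁻¹ - -(φ1 u)⁻¹) = (φ1 v)⁻¹ - (φ1 u)⁻¹ := by ring
      rw [heq]
      calc (φ1 v)⁻¹ - (φ1 u)⁻¹ ≤ |(φ1 v)⁻¹ - (φ1 u)⁻¹| := le_abs_self _
        _ = |(φ1 u)⁻¹ - (φ1 v)⁻¹| := abs_sub_comm _ _
        _ ≤ c'⁻¹ := hbound_diff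
  -- final assembly
  have hIntBound : ‖∫ x in u..v, g' x * E x‖ ≤ (c' * |lam|)⁻¹ := by
    calc ‖∫ x in u..v, g' x * E x‖ ≤ ∫ x in u..v, ‖g' x * E x‖ :=
          intervalIntegral.norm_integral_le_integral_norm huv
      _ = ∫ x in u..v, |φ2 x| / (φ1 x) ^ 2 * |lam|⁻¹ := by
          apply intervalIntegral.integral_congr
          intro x hx; rw [hIcc] at hx; exact hgnorm' x hx
      _ = (∫ x in u..v, |φ2 x| / (φ1 x) ^ 2) * |lam|⁻¹ := by
          rw [intervalIntegral.integral_mul_const]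
      _ ≤ c'⁻¹ * |lam|⁻¹ := by
          apply mul_le_mul_of_nonneg_right habs_int (by positivity)
      _ = (c' * |lam|)⁻¹ := (mul_inv _ _).symm
  have hu' : u ∈ Set.Icc u v := Set.left_mem_Icc.mpr huv
  have hv' : v ∈ Set.Icc u v := Set.right_mem_Icc.mpr huv
  have A1 : ‖g v * E v‖ ≤ (c' * |lam|)⁻¹ := by
    rw [norm_mul, hnormE, mul_one]; exact hnormg v hv'
  have A2 : ‖g u * E u‖ ≤ (c' * |lam|)⁻¹ := by
    rw [norm_mul, hnormE, mul_one]; exact hnormg u hu'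
  have T1 := norm_sub_le (g v * E v - g u * E u) (∫ x in u..v, g' x * E x)
  have T2 := norm_sub_le (g v * E v) (g u * E u)
  linarith

lemma vdc_no_amp {lam : ℝ} (hlam : lam ≠ 0) (φ : ℕ → ℝ → ℝ) :
    ∀ m : ℕ, 1 ≤ m → ∀ c' : ℝ, 0 < c' → ∀ u v : ℝ, u ≤ v →
    (∀ j < m, ∀ x ∈ Set.Icc u v, HasDerivAt (φ j) (φ (j+1) x) x) →
    ContinuousOn (φ m) (Set.Icc u v) →
    (∀ x ∈ Set.Icc u v, c' ≤ |φ m x|) →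
    (m = 1 → (∀ x ∈ Set.Icc u v, HasDerivAt (φ 1) (φ 2 x) x) ∧ ContinuousOn (φ 2) (Set.Icc u v) ∧
      ((∀ x ∈ Set.Icc u v, 0 ≤ φ 2 x) ∨ (∀ x ∈ Set.Icc u v, φ 2 x ≤ 0))) →
    ‖∫ x in u..v, Complex.exp (Complex.I * lam * φ 0 x)‖ ≤
      (5 * 2 ^ (m - 1) - 2 : ℝ) * (c' * |lam|) ^ (-(1 / (m : ℝ))) := by
  intro m hm
  induction m, hm using Nat.le_induction with
  | base =>
    intro c' hc' u v huv hd hcont hlow hbase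
    obtain ⟨hd1', hc2, hsg⟩ := hbase rfl
    have h3 := vdc_base_s7 hlam (φ 0) (φ 1) (φ 2) huv hc'
      (hd 0 (by norm_num)) hd1' hc2 hlow hsg
    have he : (-(1 / ((1 : ℕ) : ℝ))) = (-1 : ℝ) := by norm_num
    rw [he, Real.rpow_neg_one]
    have hc : (5 * 2 ^ (1 - 1) - 2 : ℝ) = 3 := by norm_num
    rw [hc]
    exact h3
  | succ m hm1 ih =>
    intro c' hc' u v huv hd hcont hlow _hbase
    set E : ℝ → ℂ := fun x => Complex.exp (Complex.I * lam * φ 0 x) with hE_def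
    set t := c' * |lam| with ht_def
    have ht : 0 < t := mul_pos hc' (abs_pos.mpr hlam)
    set δ := t ^ (-(1 / ((m : ℝ) + 1))) with hδ_def
    have hδ : 0 < δ := Real.rpow_pos_of_pos ht _
    have h2p : (1 : ℝ) ≤ 2 ^ (m - 1) := one_le_pow₀ (by norm_num)
    have hCpos : (0 : ℝ) ≤ 5 * 2 ^ (m - 1) - 2 := by linarith
    have hdm : ∀ x ∈ Set.Icc u v, HasDerivAt (φ m) (φ (m+1) x) x :=
      hd m (Nat.lt_succ_self m)
    have hφmcont : ContinuousOn (φ m) (Set.Icc u v) :=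
      fun x hx => (hdm x hx).continuousAt.continuousWithinAt
    have hne : ∀ x ∈ Set.Icc u v, φ (m+1) x ≠ 0 := by
      intro x hx h0
      have := hlow x hx
      rw [h0, abs_zero] at this
      linarith
    have hsg := vdc_sign hcont hne
    have hsg' : (∀ x ∈ Set.Icc u v, c' ≤ φ (m+1) x) ∨ (∀ x ∈ Set.Icc u v, φ (m+1) x ≤ -c') := by
      rcases hsg with hp | hn
      · left; intro x hx; have := hlow x hx; rwa [abs_of_pos (hp x hx)] at this
      · right; intro x hx; have := hlow x hx; rw [abs_of_neg (hn x hx)] at this; linarith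
    have hgap := vdc_gap hdm hsg'
    obtain ⟨x₀, hx₀, hmin'⟩ :=
      isCompact_Icc.exists_isMinOn (Set.nonempty_Icc.mpr huv)
        (continuous_abs.comp_continuousOn hφmcont)
    have hmin : ∀ x ∈ Set.Icc u v, |φ m x₀| ≤ |φ m x| := fun x hx => hmin' hx
    -- key pointwise bound
    have hkey : ∀ x ∈ Set.Icc u v, c' * |x - x₀| ≤ |φ m x| := by
      intro x hx
      have hgap' : c' * |x - x₀| ≤ |φ m x - φ m x₀| := by
        rcases le_total x x₀ with hxx | hxx
        · rw [abs_of_nonpos (by linarith : x - x₀ ≤ 0), neg_sub, abs_sub_comm]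
          exact hgap x hx x₀ hx₀ hxx
        · rw [abs_of_nonneg (by linarith : (0:ℝ) ≤ x - x₀)]
          exact hgap x₀ hx₀ x hx hxx
      by_cases hz : ∃ z ∈ Set.Icc u v, φ m z = 0
      · obtain ⟨z, hzm, hz0⟩ := hz
        have h0 : φ m x₀ = 0 := by
          have h1 := hmin z hzm
          simp only [Function.comp_apply, hz0, abs_zero] at h1
          exact abs_eq_zero.mp (le_antisymm h1 (abs_nonneg _))
        rw [h0, sub_zero] at hgap'
        exact hgap'
      · push_neg at hz
        have h3 := hmin x hx
        rcases vdc_sign hφmcont hz with hp | hn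
        · have h1 : 0 < φ m x := hp x hx
          have h2 : 0 < φ m x₀ := hp x₀ hx₀
          rw [abs_of_pos h1, abs_of_pos h2] at h3
          calc c' * |x - x₀| ≤ |φ m x - φ m x₀| := hgap'
            _ ≤ |φ m x| := by rw [abs_of_pos h1, abs_le]; constructor <;> linarith
        · have h1 : φ m x < 0 := hn x hx
          have h2 : φ m x₀ < 0 := hn x₀ hx₀
          rw [abs_of_neg h1, abs_of_neg h2] at h3
          calc c' * |x - x₀| ≤ |φ m x - φ m x₀| := hgap'
            _ ≤ |φ m x| := by rw [abs_of_neg h1, abs_le]; constructor <;> linarith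
    -- split points
    set p := max u (x₀ - δ) with hp_def
    set q := min v (x₀ + δ) with hq_def
    have hup : u ≤ p := le_max_left _ _
    have hpv : p ≤ v := max_le huv (by linarith [hx₀.2])
    have huq : u ≤ q := le_min (le_trans huv (le_refl v)) (by linarith [hx₀.1])
    have hqv : q ≤ v := min_le_left _ _
    have hpq : p ≤ q := by
      apply max_le
      · exact huq
      · apply le_min (by linarith [hx₀.2]) (by linarith)
    -- integrability
    have hφ0cont : ContinuousOn (φ 0) (Set.Icc u v) :=
      fun x hx => (hd 0 (by omega) x hx).continuousAt.continuousWithinAt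
    have hEcont : ContinuousOn E (Set.Icc u v) := by
      apply Complex.continuous_exp.comp_continuousOn
      exact continuous_const.continuousOn.mul
        (Complex.continuous_ofReal.comp_continuousOn hφ0cont)
    have hint1 : IntervalIntegrable E MeasureTheory.volume u p :=
      (hEcont.mono (Set.Icc_subset_Icc le_rfl hpv)).intervalIntegrable_of_Icc hup
    have hint2 : IntervalIntegrable E MeasureTheory.volume p q :=
      (hEcont.mono (Set.Icc_subset_Icc hup hqv)).intervalIntegrable_of_Icc hpq
    have hint3 : IntervalIntegrable E MeasureTheory.volume q v :=
      (hEcont.mono (Set.Icc_subset_Icc huq le_rfl)).intervalIntegrable_of_Icc hqv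
    have hsplit : ∫ x in u..v, E x =
        (∫ x in u..p, E x) + (∫ x in p..q, E x) + (∫ x in q..v, E x) := by
      rw [intervalIntegral.integral_add_adjacent_intervals hint1 hint2,
        intervalIntegral.integral_add_adjacent_intervals (hint1.trans hint2) hint3]
    -- generic side bound
    have hside : ∀ w z : ℝ, u ≤ w → w ≤ z → z ≤ v →
        (∀ x ∈ Set.Icc w z, c' * δ ≤ |φ m x|) →
        ‖∫ x in w..z, E x‖ ≤ (5 * 2 ^ (m - 1) - 2 : ℝ) * δ := by
      intro w z hw hz hzv hlow'
      have hsub : Set.Icc w z ⊆ Set.Icc u v := Set.Icc_subset_Icc hw hzv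
      have hb : m = 1 → (∀ x ∈ Set.Icc w z, HasDerivAt (φ 1) (φ 2 x) x) ∧
          ContinuousOn (φ 2) (Set.Icc w z) ∧
          ((∀ x ∈ Set.Icc w z, 0 ≤ φ 2 x) ∨ (∀ x ∈ Set.Icc w z, φ 2 x ≤ 0)) := by
        intro h1
        subst h1
        refine ⟨fun x hx => hd 1 (by omega) x (hsub hx), hcont.mono hsub, ?_⟩
        rcases hsg with hp' | hn'
        · left; exact fun x hx => (hp' x (hsub hx)).le
        · right; exact fun x hx => (hn' x (hsub hx)).le
      have hres := ih (c' * δ) (by positivity) w z hz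
        (fun j hj x hx => hd j (by omega) x (hsub hx))
        (hφmcont.mono hsub) hlow' hb
      have heq : c' * δ * |lam| = t * δ := by rw [ht_def]; ring
      rw [heq, hδ_def, vdc_rpow_key ht hm1, ← hδ_def] at hres
      exact hres
    -- bound on first piece
    have hS1 : ‖∫ x in u..p, E x‖ ≤ (5 * 2 ^ (m - 1) - 2 : ℝ) * δ := by
      rcases le_or_gt (x₀ - δ) u with hcase | hcase
      · have hpu : p = u := max_eq_left hcase
        rw [hpu, intervalIntegral.integral_same, norm_zero]
        exact mul_nonneg hCpos hδ.le
      · apply hside u p le_rfl hup hpv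
        intro x hx
        have hpx : p = x₀ - δ := max_eq_right hcase.le
        have hx' : x ∈ Set.Icc u v := ⟨hx.1, le_trans hx.2 hpv⟩
        have h1 : x ≤ x₀ - δ := hpx ▸ hx.2
        have h2 : δ ≤ |x - x₀| := by
          rw [abs_of_nonpos (by linarith), neg_sub]; linarith
        calc c' * δ ≤ c' * |x - x₀| := mul_le_mul_of_nonneg_left h2 hc'.le
          _ ≤ |φ m x| := hkey x hx'
    -- bound on last piece
    have hS3 : ‖∫ x in q..v, E x‖ ≤ (5 * 2 ^ (m - 1) - 2 : ℝ) * δ := by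
      rcases le_or_gt v (x₀ + δ) with hcase | hcase
      · have hqv' : q = v := min_eq_left hcase
        rw [hqv', intervalIntegral.integral_same, norm_zero]
        exact mul_nonneg hCpos hδ.le
      · apply hside q v huq hqv le_rfl
        intro x hx
        have hqx : q = x₀ + δ := min_eq_right hcase.le
        have hx' : x ∈ Set.Icc u v := ⟨le_trans huq hx.1, hx.2⟩
        have h1 : x₀ + δ ≤ x := hqx ▸ hx.1
        have h2 : δ ≤ |x - x₀| := by
          rw [abs_of_nonneg (by linarith)]; linarith
        calc c' * δ ≤ c' * |x - x₀| := mul_le_mul_of_nonneg_left h2 hc'.le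
          _ ≤ |φ m x| := hkey x hx'
    -- middle piece
    have hS2 : ‖∫ x in p..q, E x‖ ≤ 2 * δ := by
      have hb := intervalIntegral.norm_integral_le_of_norm_le_const
        (C := 1) (f := E) (a := p) (b := q)
        (fun x _ => le_of_eq (vdc_norm_exp lam (φ 0 x)))
      have habs : |q - p| = q - p := abs_of_nonneg (by linarith)
      have hq2 : q ≤ x₀ + δ := min_le_right _ _
      have hp2 : x₀ - δ ≤ p := le_max_right _ _
      rw [habs] at hb
      calc ‖∫ x in p..q, E x‖ ≤ 1 * (q - p) := hb
        _ ≤ 2 * δ := by linarith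
    -- combine
    have htotal : ‖∫ x in u..v, E x‖ ≤ (5 * 2 ^ m - 2 : ℝ) * δ := by
      rw [hsplit]
      have h2m : (2:ℝ) ^ m = 2 * 2 ^ (m - 1) := by
        rw [← pow_succ']
        congr 1
        omega
      calc ‖(∫ x in u..p, E x) + (∫ x in p..q, E x) + (∫ x in q..v, E x)‖
          ≤ ‖(∫ x in u..p, E x) + (∫ x in p..q, E x)‖ + ‖∫ x in q..v, E x‖ := norm_add_le _ _
        _ ≤ (‖∫ x in u..p, E x‖ + ‖∫ x in p..q, E x‖) + ‖∫ x in q..v, E x‖ := by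
            gcongr; exact norm_add_le _ _
        _ ≤ ((5 * 2 ^ (m - 1) - 2 : ℝ) * δ + 2 * δ) + (5 * 2 ^ (m - 1) - 2 : ℝ) * δ := by
            gcongr
        _ = (5 * 2 ^ m - 2 : ℝ) * δ := by rw [h2m]; ring
    -- final conversion
    have hfin : (5 * 2 ^ (m + 1 - 1) - 2 : ℝ) * (c' * |lam|) ^ (-(1 / ((m + 1 : ℕ) : ℝ)))
        = (5 * 2 ^ m - 2 : ℝ) * δ := by
      have h1 : (m + 1 - 1 : ℕ) = m := by omega
      have h2 : ((m + 1 : ℕ) : ℝ) = (m : ℝ) + 1 := by push_cast; ring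
      rw [h1, h2, ← ht_def, ← hδ_def]
    rw [hfin]
    exact htotal

/-- Van der Corput lemma with an amplitude: if `ψ` is real-valued, `C^k` on `(a,b)` with
`k ≥ 2` and `|ψ^{(k)}| ≥ c > 0` on `(a,b)`, and `h` is `C¹` on `(a,b)`, continuous on `(a,b]`,
with `h'` integrable on `(a,b)`, then for every real `λ ≠ 0`,
`|∫_a^b e^{iλψ(x)} h(x) dx| ≤ (5·2^{k-1} - 2) c^{-1/k} (|h(b)| + ∫_a^b |h'|) |λ|^{-1/k}`. -/
theorem van_der_corput_amplitude (k : ℕ) (hk : 2 ≤ k) (c : ℝ) (hc : 0 < c)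
    (a b : ℝ) (hab : a < b) (ψ : ℝ → ℝ)
    (hψ : ContDiffOn ℝ k ψ (Set.Ioo a b))
    (hder : ∀ x ∈ Set.Ioo a b, c ≤ |iteratedDerivWithin k ψ (Set.Ioo a b) x|)
    (h h' : ℝ → ℝ)
    (hh : ∀ x ∈ Set.Ioo a b, HasDerivAt h (h' x) x)
    (hh' : ContinuousOn h' (Set.Ioo a b))
    (hcont : ContinuousOn h (Set.Ioc a b))
    (hint : MeasureTheory.IntegrableOn h' (Set.Ioo a b))
    (lam : ℝ) (hlam : lam ≠ 0) :
    ‖∫ x in Set.Ioo a b, Complex.exp (Complex.I * lam * ψ x) * h x‖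
      ≤ (5 * 2 ^ (k - 1) - 2 : ℝ) * c ^ (-(1 / (k : ℝ)))
          * (|h b| + ∫ x in Set.Ioo a b, |h' x|) * |lam| ^ (-(1 / (k : ℝ))) := by
  have hso : IsOpen (Set.Ioo a b) := isOpen_Ioo
  have hsu : UniqueDiffOn ℝ (Set.Ioo a b) := hso.uniqueDiffOn
  set φ : ℕ → ℝ → ℝ := fun j => iteratedDerivWithin j ψ (Set.Ioo a b) with hφ_def
  have hk1 : 1 ≤ k := by omega
  -- derivative chain
  have hφd : ∀ j < k, ∀ x ∈ Set.Ioo a b, HasDerivAt (φ j) (φ (j+1) x) x := by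
    intro j hj x hx
    have hdiff : DifferentiableOn ℝ (φ j) (Set.Ioo a b) :=
      hψ.differentiableOn_iteratedDerivWithin (by exact_mod_cast hj) hsu
    have hDA : DifferentiableAt ℝ (φ j) x := (hdiff x hx).differentiableAt (hso.mem_nhds hx)
    have h1 : φ (j+1) x = derivWithin (φ j) (Set.Ioo a b) x :=
      congrFun iteratedDerivWithin_succ x
    rw [h1, derivWithin_of_isOpen hso hx]
    exact hDA.hasDerivAt
  have hφkcont : ContinuousOn (φ k) (Set.Ioo a b) :=
    hψ.continuousOn_iteratedDerivWithin (by exact_mod_cast le_rfl) hsu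
  -- abbreviations
  set E : ℝ → ℂ := fun x => Complex.exp (Complex.I * lam * ψ x) with hE_def
  set M : ℝ := |h b| + ∫ x in Set.Ioo a b, |h' x| with hM_def
  set B : ℝ := (5 * 2 ^ (k - 1) - 2 : ℝ) * (c * |lam|) ^ (-(1 / (k : ℝ))) with hB_def
  have h2p : (1 : ℝ) ≤ 2 ^ (k - 1) := one_le_pow₀ (by norm_num)
  have hBpos : 0 ≤ B := by
    rw [hB_def]
    apply mul_nonneg (by linarith) (Real.rpow_nonneg (by positivity) _)
  -- Step A: van der Corput without amplitude on compact subintervals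
  have hStepA : ∀ u v : ℝ, u ∈ Set.Ioo a b → v ∈ Set.Ioo a b → u ≤ v →
      ‖∫ x in u..v, E x‖ ≤ B := by
    intro u v hu hv huv
    have hsub : Set.Icc u v ⊆ Set.Ioo a b := fun x hx =>
      ⟨lt_of_lt_of_le hu.1 hx.1, lt_of_le_of_lt hx.2 hv.2⟩
    have hres := vdc_no_amp hlam φ k hk1 c hc u v huv
      (fun j hj x hx => hφd j hj x (hsub hx))
      (hφkcont.mono hsub)
      (fun x hx => hder x (hsub hx))
      (fun hk1' => absurd hk1' (by omega))
    have hφ0 : φ 0 = ψ := iteratedDerivWithin_zero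
    rw [hφ0] at hres
    exact hres
  -- integrability of |h'|
  have habs_int : IntegrableOn (fun x => |h' x|) (Set.Ioo a b) MeasureTheory.volume := hint.abs
  -- FTC for h
  have hH' : ∀ v ∈ Set.Ioo a b, (∫ x in v..b, h' x) = h b - h v := by
    intro v hv
    apply intervalIntegral.integral_eq_sub_of_hasDerivAt_of_le hv.2.le
    · exact hcont.mono (fun x hx => ⟨lt_of_lt_of_le hv.1 hx.1, hx.2⟩)
    · exact fun x hx => hh x ⟨lt_trans hv.1 hx.1, hx.2⟩
    · rw [intervalIntegrable_iff_integrableOn_Ioo_of_le hv.2.le]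
      exact hint.mono_set (fun x hx => ⟨lt_trans hv.1 hx.1, hx.2⟩)
  -- combined amplitude mass bound
  have hcomb : ∀ u v : ℝ, u ∈ Set.Ioo a b → v ∈ Set.Ioo a b → u ≤ v →
      |h v| + (∫ x in u..v, |h' x|) ≤ M := by
    intro u v hu hv huv
    have hint1 : IntervalIntegrable (fun x => |h' x|) MeasureTheory.volume u v := by
      rw [intervalIntegrable_iff_integrableOn_Ioo_of_le huv]
      exact habs_int.mono_set (fun x hx => ⟨lt_trans hu.1 hx.1, lt_trans hx.2 hv.2⟩)
    have hint2 : IntervalIntegrable (fun x => |h' x|) MeasureTheory.volume v b := by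
      rw [intervalIntegrable_iff_integrableOn_Ioo_of_le hv.2.le]
      exact habs_int.mono_set (fun x hx => ⟨lt_trans hv.1 hx.1, hx.2⟩)
    have hadd : (∫ x in u..v, |h' x|) + (∫ x in v..b, |h' x|) = ∫ x in u..b, |h' x| :=
      intervalIntegral.integral_add_adjacent_intervals hint1 hint2
    have hub : (∫ x in u..b, |h' x|) ≤ ∫ x in Set.Ioo a b, |h' x| := by
      rw [intervalIntegral.integral_of_le (le_trans huv hv.2.le),
        MeasureTheory.integral_Ioc_eq_integral_Ioo]
      apply MeasureTheory.setIntegral_mono_set habs_int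
      · exact Filter.Eventually.of_forall (fun x => abs_nonneg _)
      · exact (Set.Ioo_subset_Ioo hu.1.le le_rfl).eventuallyLE
    -- |h v| ≤ |h b| + ∫ v..b |h'|
    have h3 : |∫ x in v..b, h' x| ≤ ∫ x in v..b, |h' x| := by
      simpa [Real.norm_eq_abs] using
        intervalIntegral.norm_integral_le_integral_norm (f := h') (a := v) (b := b)
          (μ := MeasureTheory.volume) hv.2.le
    have h4 := hH' v hv
    have h5 : |h v| - |h b| ≤ |h v - h b| := abs_sub_abs_le_abs_sub _ _
    have h6 : |h v - h b| = |∫ x in v..b, h' x| := by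
      rw [h4, abs_sub_comm]
    rw [hM_def]
    have h7 : (0:ℝ) ≤ ∫ x in v..b, |h' x| :=
      intervalIntegral.integral_nonneg hv.2.le (fun x _ => abs_nonneg _)
    linarith
  have hbound_h : ∀ x ∈ Set.Ioo a b, |h x| ≤ M := by
    intro x hx
    have := hcomb x x hx hx le_rfl
    simpa using this
  -- continuity of E
  have hψconts : ContinuousOn ψ (Set.Ioo a b) := hψ.continuousOn
  have hEconts : ContinuousOn E (Set.Ioo a b) := by
    apply Complex.continuous_exp.comp_continuousOn
    exact continuous_const.continuousOn.mul
      (Complex.continuous_ofReal.comp_continuousOn hψconts)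
  have hEint : ∀ x y : ℝ, x ∈ Set.Ioo a b → y ∈ Set.Ioo a b →
      IntervalIntegrable E MeasureTheory.volume x y := by
    intro x y hx hy
    apply ContinuousOn.intervalIntegrable
    exact hEconts.mono ((Set.ordConnected_Ioo).uIcc_subset hx hy)
  -- Step B: amplitude bound on compact subintervals
  have hStepB : ∀ u v : ℝ, u ∈ Set.Ioo a b → v ∈ Set.Ioo a b → u ≤ v →
      ‖∫ x in u..v, E x * h x‖ ≤ B * M := by
    intro u v hu hv huv
    have hsub : Set.Icc u v ⊆ Set.Ioo a b := fun x hx =>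
      ⟨lt_of_lt_of_le hu.1 hx.1, lt_of_le_of_lt hx.2 hv.2⟩
    set F : ℝ → ℂ := fun x => ∫ t in u..x, E t with hF_def
    have hFder : ∀ x ∈ Set.Icc u v, HasDerivAt F (E x) x := by
      intro x hx
      have hxs : x ∈ Set.Ioo a b := hsub hx
      exact intervalIntegral.integral_hasDerivAt_right (hEint u x hu hxs)
        (ContinuousOn.stronglyMeasurableAtFilter hso hEconts x hxs)
        (hEconts.continuousAt (hso.mem_nhds hxs))
    have hHder : ∀ x ∈ Set.Icc u v, HasDerivAt (fun y => ((h y : ℝ) : ℂ)) ((h' x : ℂ)) x :=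
      fun x hx => (hh x (hsub hx)).ofReal_comp
    have hH'int : IntervalIntegrable (fun x => ((h' x : ℝ) : ℂ)) MeasureTheory.volume u v := by
      apply ContinuousOn.intervalIntegrable_of_Icc huv
      exact Complex.continuous_ofReal.comp_continuousOn (hh'.mono hsub)
    have hEint2 : IntervalIntegrable E MeasureTheory.volume u v := hEint u v hu hv
    have hibp := intervalIntegral.integral_mul_deriv_eq_deriv_mul
      (u := fun y => ((h y : ℝ) : ℂ)) (u' := fun y => ((h' y : ℝ) : ℂ)) (v := F) (v' := E)
      (fun x hx => hHder x (by rwa [Set.uIcc_of_le huv] at hx))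
      (fun x hx => hFder x (by rwa [Set.uIcc_of_le huv] at hx))
      hH'int hEint2
    have hFu : F u = 0 := intervalIntegral.integral_same
    have hcongr : (∫ x in u..v, E x * (h x : ℂ)) = ∫ x in u..v, (h x : ℂ) * E x := by
      simp_rw [mul_comm]
    rw [hcongr, hibp, hFu, mul_zero, sub_zero]
    have hFb : ∀ x ∈ Set.Icc u v, ‖F x‖ ≤ B := fun x hx => hStepA u x hu (hsub hx) hx.1
    have hFcont : ContinuousOn F (Set.Icc u v) :=
      fun x hx => (hFder x hx).continuousAt.continuousWithinAt
    have hT1 : ‖(h v : ℂ) * F v‖ ≤ |h v| * B := by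
      rw [norm_mul, Complex.norm_real, Real.norm_eq_abs]
      exact mul_le_mul_of_nonneg_left (hFb v (Set.right_mem_Icc.mpr huv)) (abs_nonneg _)
    have hT2 : ‖∫ x in u..v, (h' x : ℂ) * F x‖ ≤ (∫ x in u..v, |h' x|) * B := by
      have hi1 : IntervalIntegrable (fun x => ‖(h' x : ℂ) * F x‖) MeasureTheory.volume u v := by
        apply ContinuousOn.intervalIntegrable_of_Icc huv
        exact ((Complex.continuous_ofReal.comp_continuousOn (hh'.mono hsub)).mul hFcont).norm
      have hi2 : IntervalIntegrable (fun x => |h' x| * B) MeasureTheory.volume u v := by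
        apply ContinuousOn.intervalIntegrable_of_Icc huv
        exact ((hh'.mono hsub).abs).mul continuousOn_const
      calc ‖∫ x in u..v, (h' x : ℂ) * F x‖ ≤ ∫ x in u..v, ‖(h' x : ℂ) * F x‖ :=
            intervalIntegral.norm_integral_le_integral_norm huv
        _ ≤ ∫ x in u..v, |h' x| * B := by
            apply intervalIntegral.integral_mono_on huv hi1 hi2
            intro x hx
            rw [norm_mul, Complex.norm_real, Real.norm_eq_abs]
            exact mul_le_mul_of_nonneg_left (hFb x hx) (abs_nonneg _)
        _ = (∫ x in u..v, |h' x|) * B := intervalIntegral.integral_mul_const _ _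
    calc ‖(h v : ℂ) * F v - ∫ x in u..v, (h' x : ℂ) * F x‖
        ≤ ‖(h v : ℂ) * F v‖ + ‖∫ x in u..v, (h' x : ℂ) * F x‖ := norm_sub_le _ _
      _ ≤ |h v| * B + (∫ x in u..v, |h' x|) * B := add_le_add hT1 hT2
      _ = (|h v| + ∫ x in u..v, |h' x|) * B := by ring
      _ ≤ M * B := mul_le_mul_of_nonneg_right (hcomb u v hu hv huv) hBpos
      _ = B * M := mul_comm _ _
  -- integrability of E * h on Ioo a b
  have hIntOn : IntegrableOn (fun x => E x * (h x : ℂ)) (Set.Ioo a b) MeasureTheory.volume := by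
    constructor
    · apply ContinuousOn.aestronglyMeasurable _ hso.measurableSet
      exact hEconts.mul
        (Complex.continuous_ofReal.comp_continuousOn (hcont.mono Set.Ioo_subset_Ioc_self))
    · apply MeasureTheory.HasFiniteIntegral.restrict_of_bounded (C := M)
        (measure_Ioo_lt_top)
      rw [MeasureTheory.ae_restrict_iff' hso.measurableSet]
      apply Filter.Eventually.of_forall
      intro x hx
      rw [norm_mul, hE_def]
      simp only []
      rw [vdc_norm_exp, one_mul, Complex.norm_real, Real.norm_eq_abs]
      exact hbound_h x hx
  -- exhaustion
  set un : ℕ → ℝ := fun n => a + (b - a) / ((n : ℝ) + 3) with hun_def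
  set vn : ℕ → ℝ := fun n => b - (b - a) / ((n : ℝ) + 3) with hvn_def
  have hε : ∀ n : ℕ, 0 < (b - a) / ((n : ℝ) + 3) := fun n => div_pos (by linarith) (by positivity)
  have hε1 : ∀ n : ℕ, (b - a) / ((n : ℝ) + 3) ≤ (b - a) / 3 := fun n =>
    div_le_div_of_nonneg_left (by linarith) (by norm_num)
      (by linarith [Nat.cast_nonneg (α := ℝ) n])
  have hmemu : ∀ n : ℕ, un n ∈ Set.Ioo a b := by
    intro n
    constructor
    · have := hε n; simp only [hun_def]; linarith
    · have := hε1 n; simp only [hun_def]; linarith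
  have hmemv : ∀ n : ℕ, vn n ∈ Set.Ioo a b := by
    intro n
    constructor
    · have := hε1 n; simp only [hvn_def]; linarith
    · have := hε n; simp only [hvn_def]; linarith
  have huvn : ∀ n : ℕ, un n ≤ vn n := by
    intro n
    have := hε1 n
    simp only [hun_def, hvn_def]
    linarith
  have hmono : Monotone (fun n => Set.Ioo (un n) (vn n)) := by
    intro n m hnm
    have hle : (b - a) / ((m : ℝ) + 3) ≤ (b - a) / ((n : ℝ) + 3) := by
      apply div_le_div_of_nonneg_left (by linarith) (by positivity)
      have : (n : ℝ) ≤ (m : ℝ) := Nat.cast_le.mpr hnm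
      linarith
    apply Set.Ioo_subset_Ioo
    · simp only [hun_def]; linarith
    · simp only [hvn_def]; linarith
  have hunion : (⋃ n, Set.Ioo (un n) (vn n)) = Set.Ioo a b := by
    apply Set.Subset.antisymm
    · apply Set.iUnion_subset
      intro n
      exact Set.Ioo_subset_Ioo (hmemu n).1.le (hmemv n).2.le
    · intro x hx
      have hτpos : 0 < min (x - a) (b - x) := lt_min (by linarith [hx.1]) (by linarith [hx.2])
      obtain ⟨n, hn⟩ := exists_nat_gt ((b - a) / min (x - a) (b - x))
      refine Set.mem_iUnion.mpr ⟨n, ?_, ?_⟩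
      · show a + (b - a) / ((n : ℝ) + 3) < x
        have h2 : b - a < (n : ℝ) * min (x - a) (b - x) := by
          rw [div_lt_iff₀ hτpos] at hn; linarith
        have h3 : (b - a) / ((n : ℝ) + 3) < min (x - a) (b - x) := by
          rw [div_lt_iff₀ (by positivity)]
          nlinarith [hτpos, Nat.cast_nonneg (α := ℝ) n]
        have h4 : min (x - a) (b - x) ≤ x - a := min_le_left _ _
        linarith
      · show x < b - (b - a) / ((n : ℝ) + 3)
        have h2 : b - a < (n : ℝ) * min (x - a) (b - x) := by
          rw [div_lt_iff₀ hτpos] at hn; linarith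
        have h3 : (b - a) / ((n : ℝ) + 3) < min (x - a) (b - x) := by
          rw [div_lt_iff₀ (by positivity)]
          nlinarith [hτpos, Nat.cast_nonneg (α := ℝ) n]
        have h4 : min (x - a) (b - x) ≤ b - x := min_le_right _ _
        linarith
  have htendsto := MeasureTheory.tendsto_setIntegral_of_monotone
    (f := fun x => E x * (h x : ℂ)) (μ := MeasureTheory.volume)
    (fun n : ℕ => measurableSet_Ioo) hmono (by rwa [hunion])
  rw [hunion] at htendsto
  have hnorm_lim := htendsto.norm
  apply le_of_tendsto hnorm_lim
  apply Filter.Eventually.of_forall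
  intro n
  have heq : (∫ x in Set.Ioo (un n) (vn n), E x * (h x : ℂ)) =
      ∫ x in (un n)..(vn n), E x * (h x : ℂ) := by
    rw [intervalIntegral.integral_of_le (huvn n), ← MeasureTheory.integral_Ioc_eq_integral_Ioo]
  rw [heq]
  have hBM : B * M = (5 * 2 ^ (k - 1) - 2 : ℝ) * c ^ (-(1 / (k : ℝ)))
      * M * |lam| ^ (-(1 / (k : ℝ))) := by
    rw [hB_def, Real.mul_rpow hc.le (abs_nonneg lam)]
    ring
  rw [← hBM]
  exact hStepB (un n) (vn n) (hmemu n) (hmemv n) (huvn n)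
end
end
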